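/- arXiv:0907.1116 — 7 statements merged into one kernel-verified Lean document; each statement's English description precedes it below -/
import Mathlib

section
/- Let Z be a standard normal random variable and let c > 0. Then (1/(−log(cε))) · Σ_{n≥1} (1/n) · P(|Z| > c ε √n) converges to 2 as ε → 0⁺. -/
open MeasureTheory ProbabilityTheory Filter Real Topology
open scoped ENNReal NNReal

-- pointwise sum lemma
lemma aux_sum_eq (t x : ℝ) (ht : 0 < t) :
    ∑' n : ℕ, (((n : ℝ≥0∞) + 1)⁻¹ *
        Set.indicator {y : ℝ | t * Real.sqrt ((n : ℝ) + 1) < |y|} 1 x)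
      = ENNReal.ofReal ((harmonic (⌈(|x| / t) ^ 2 - 1⌉₊) : ℝ)) := by
  set M := ⌈(|x| / t) ^ 2 - 1⌉₊ with hM
  have hcond : ∀ n : ℕ, (t * Real.sqrt ((n : ℝ) + 1) < |x|) ↔ n < M := by
    intro n
    rw [hM, Nat.lt_ceil, lt_sub_iff_add_lt]
    rw [← lt_div_iff₀' ht, show (n : ℝ) + 1 = ((n:ℝ) + 1) from rfl]
    constructor
    · intro h
      have h0 : 0 < |x| / t := lt_of_le_of_lt (Real.sqrt_nonneg _) h
      have := (Real.sqrt_lt' h0).mp h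
      linarith
    · intro h
      have h0 : (0:ℝ) < ((n:ℝ)+1) := by positivity
      have hx0 : 0 < (|x|/t)^2 := by linarith
      have h0' : 0 < |x| / t := by
        rcases lt_trichotomy (|x|/t) 0 with h'|h'|h'
        · exact absurd (abs_nonneg x) (by
            intro _
            have : 0 ≤ |x|/t := div_nonneg (abs_nonneg x) ht.le
            linarith)
        · simp [h'] at hx0
        · exact h'
      exact (Real.sqrt_lt' h0').mpr (by linarith)
  have hterm : ∀ n : ℕ, (((n : ℝ≥0∞) + 1)⁻¹ *
        Set.indicator {y : ℝ | t * Real.sqrt ((n : ℝ) + 1) < |y|} 1 x)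
      = if n < M then ((n : ℝ≥0∞) + 1)⁻¹ else 0 := by
    intro n
    by_cases h : n < M
    · rw [if_pos h, Set.indicator_of_mem, Pi.one_apply, mul_one]
      exact (hcond n).mpr h
    · rw [if_neg h, Set.indicator_of_notMem, mul_zero]
      exact fun hx => h ((hcond n).mp hx)
  rw [tsum_congr hterm]
  rw [tsum_eq_sum (s := Finset.range M) (by intro n hn; rw [if_neg (by simpa using hn)])]
  rw [harmonic, Rat.cast_sum, ENNReal.ofReal_sum_of_nonneg (fun i _ => by positivity)]
  refine Finset.sum_congr rfl fun i hi => ?_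
  rw [if_pos (Finset.mem_range.mp hi)]
  rw [Rat.cast_inv, Rat.cast_natCast, ENNReal.ofReal_inv_of_pos (by positivity)]
  congr 1
  rw [ENNReal.ofReal_natCast]
  push_cast
  ring


lemma aux_harm_lower {B : ℝ} (hB : 1 < B) : Real.log B ≤ (harmonic ⌈B - 1⌉₊ : ℝ) := by
  set M := ⌈B - 1⌉₊ with hM
  have h1 : B - 1 ≤ (M : ℝ) := Nat.le_ceil _
  calc Real.log B ≤ Real.log ((M : ℝ) + 1) := by
        apply Real.log_le_log (by linarith) (by linarith)
    _ ≤ (harmonic M : ℝ) := by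
        have := log_add_one_le_harmonic M
        push_cast at this ⊢
        linarith
lemma aux_harm_upper {B : ℝ} (hB : 1 < B) : (harmonic ⌈B - 1⌉₊ : ℝ) ≤ 1 + Real.log B := by
  set M := ⌈B - 1⌉₊ with hM
  rcases Nat.eq_zero_or_pos M with h0 | h1
  · rw [h0]
    simp only [harmonic_zero, Rat.cast_zero]
    have := Real.log_nonneg hB.le
    linarith
  · have hub : (M : ℝ) < B := by
      have := Nat.ceil_lt_add_one (by linarith : (0:ℝ) ≤ B - 1)
      rw [← hM] at this
      linarith
    calc (harmonic M : ℝ) ≤ 1 + Real.log M := harmonic_le_one_add_log M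
      _ ≤ 1 + Real.log B := by
          have : Real.log (M:ℝ) ≤ Real.log B :=
            Real.log_le_log (by exact_mod_cast h1) hub.le
          linarith


lemma aux_integrable_abs : Integrable (fun x : ℝ => |x|) (gaussianReal 0 1) := by
  rw [gaussianReal_of_var_ne_zero 0 one_ne_zero]
  rw [integrable_withDensity_iff (measurable_gaussianPDF 0 1)
      (ae_of_all _ fun x => ENNReal.ofReal_lt_top)]
  have hrepr : ∀ x : ℝ, |x| * (gaussianPDF 0 1 x).toReal
      = (Real.sqrt (2 * π))⁻¹ * |x * Real.exp (-(1/2) * x ^ 2)| := by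
    intro x
    rw [gaussianPDF, ENNReal.toReal_ofReal (gaussianPDFReal_nonneg 0 1 x), gaussianPDFReal]
    rw [abs_mul, abs_of_nonneg (Real.exp_pos _).le]
    have h1 : ((1 : ℝ≥0) : ℝ) = 1 := rfl
    rw [h1]
    ring_nf
  have hint : Integrable (fun x : ℝ => (Real.sqrt (2 * π))⁻¹ * |x * Real.exp (-(1/2) * x ^ 2)|)
      (volume : Measure ℝ) := by
    have h := (integrable_rpow_mul_exp_neg_mul_sq (b := 1/2) (by norm_num) (s := 1)
      (by norm_num)).abs
    simp only [Real.rpow_one] at h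
    exact h.const_mul _
  exact (Integrable.congr hint (ae_of_all _ fun x => (hrepr x).symm))

lemma aux_integrable_maxlog : Integrable (fun x : ℝ => max (Real.log |x|) 0) (gaussianReal 0 1) := by
  refine aux_integrable_abs.mono' ?_ (ae_of_all _ fun x => ?_)
  · exact ((Real.measurable_log.comp measurable_abs).max measurable_const).aestronglyMeasurable
  · rw [Real.norm_eq_abs, abs_of_nonneg (le_max_right _ _)]
    rcases eq_or_ne x 0 with rfl | hx
    · simp
    · have h1 : Real.log |x| ≤ |x| := by
        have := Real.log_le_sub_one_of_pos (abs_pos.mpr hx)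
        linarith
      exact max_le h1 (abs_nonneg x)

lemma aux_K_lt_top : ∫⁻ x, ENNReal.ofReal (max (Real.log |x|) 0) ∂(gaussianReal 0 1) < ∞ :=
  aux_integrable_maxlog.lintegral_lt_top


lemma aux_pdf_le (x : ℝ) : gaussianPDF 0 1 x ≤ ENNReal.ofReal (1/2) := by
  rw [gaussianPDF]
  apply ENNReal.ofReal_le_ofReal
  rw [gaussianPDFReal]
  have h2 : (2 : ℝ) ≤ Real.sqrt (2 * π * (1:ℝ≥0)) := by
    have : ((1:ℝ≥0) : ℝ) = 1 := rfl
    rw [this, mul_one]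
    exact (Real.le_sqrt (by norm_num) (by positivity)).mpr (by nlinarith [Real.pi_gt_three])
  have hexp : Real.exp (-(x - 0)^2 / (2 * (1:ℝ≥0))) ≤ 1 := by
    rw [Real.exp_le_one_iff]
    have : ((1:ℝ≥0) : ℝ) = 1 := rfl
    rw [this]
    nlinarith [sq_nonneg (x - 0)]
  calc (Real.sqrt (2 * π * (1:ℝ≥0)))⁻¹ * Real.exp (-(x-0)^2 / (2 * (1:ℝ≥0)))
      ≤ (Real.sqrt (2 * π * (1:ℝ≥0)))⁻¹ * 1 := by
        apply mul_le_mul_of_nonneg_left hexp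
        positivity
    _ ≤ 1/2 := by
        rw [mul_one]
        rw [inv_le_comm₀ (by linarith) (by norm_num)]
        linarith

lemma aux_smallball {s : ℝ} (hs : 0 ≤ s) :
    (gaussianReal 0 1) {y : ℝ | |y| ≤ s} ≤ ENNReal.ofReal s := by
  rw [gaussianReal_of_var_ne_zero 0 one_ne_zero]
  have hset : {y : ℝ | |y| ≤ s} = Set.Icc (-s) s := by
    ext y; simp [abs_le]
  rw [hset, withDensity_apply _ measurableSet_Icc]
  calc ∫⁻ y in Set.Icc (-s) s, gaussianPDF 0 1 y
      ≤ ∫⁻ _ in Set.Icc (-s) s, ENNReal.ofReal (1/2) :=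
        setLIntegral_mono measurable_const (fun y _ => aux_pdf_le y)
    _ = ENNReal.ofReal (1/2) * volume (Set.Icc (-s) s) := by
        rw [setLIntegral_const]
    _ = ENNReal.ofReal s := by
        rw [Real.volume_Icc, ← ENNReal.ofReal_mul (by norm_num)]
        congr 1
        ring

lemma aux_tail_ge {s : ℝ} (hs : 0 ≤ s) :
    1 - s ≤ ((gaussianReal 0 1) {y : ℝ | s < |y|}).toReal := by
  have hmeas : MeasurableSet {y : ℝ | |y| ≤ s} := by
    have : {y : ℝ | |y| ≤ s} = Set.Icc (-s) s := by ext y; simp [abs_le]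
    rw [this]; exact measurableSet_Icc
  have hcompl : {y : ℝ | s < |y|} = {y : ℝ | |y| ≤ s}ᶜ := by
    ext y; simp [not_le]
  rw [hcompl, measure_compl hmeas (measure_ne_top _ _), measure_univ]
  have hle : (gaussianReal 0 1) {y : ℝ | |y| ≤ s} ≤ 1 := prob_le_one
  rw [ENNReal.toReal_sub_of_le hle ENNReal.one_ne_top, ENNReal.toReal_one]
  have := aux_smallball hs
  have h2 : ((gaussianReal 0 1) {y : ℝ | |y| ≤ s}).toReal ≤ s := by
    calc ((gaussianReal 0 1) {y : ℝ | |y| ≤ s}).toReal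
        ≤ (ENNReal.ofReal s).toReal := ENNReal.toReal_mono ENNReal.ofReal_ne_top this
      _ = s := ENNReal.toReal_ofReal hs
  linarith


lemma aux_measset (a : ℝ) : MeasurableSet {y : ℝ | a < |y|} :=
  measurableSet_lt measurable_const measurable_abs


lemma aux_repr (t : ℝ) (ht : 0 < t) :
    ∑' n : ℕ, (((n : ℝ≥0∞) + 1)⁻¹ *
        (gaussianReal 0 1) {y : ℝ | t * Real.sqrt ((n : ℝ) + 1) < |y|})
      = ∫⁻ x, ENNReal.ofReal ((harmonic (⌈(|x| / t) ^ 2 - 1⌉₊) : ℝ)) ∂(gaussianReal 0 1) := by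
  have h1 : ∀ n : ℕ, ((n : ℝ≥0∞) + 1)⁻¹ *
        (gaussianReal 0 1) {y : ℝ | t * Real.sqrt ((n : ℝ) + 1) < |y|}
      = ∫⁻ x, (((n : ℝ≥0∞) + 1)⁻¹ *
          Set.indicator {y : ℝ | t * Real.sqrt ((n : ℝ) + 1) < |y|} 1 x) ∂(gaussianReal 0 1) := by
    intro n
    rw [lintegral_const_mul _ (measurable_one.indicator (aux_measset _))]
    rw [lintegral_indicator_one (aux_measset _)]
  rw [tsum_congr h1]
  rw [← lintegral_tsum (fun n => ((measurable_one.indicator (aux_measset _)).const_mul _).aemeasurable)]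
  exact lintegral_congr fun x => aux_sum_eq t x ht


lemma aux_logB {t x : ℝ} (ht : 0 < t) (hx : t < |x|) :
    Real.log ((|x| / t) ^ 2) = 2 * (Real.log |x| - Real.log t) := by
  have hx0 : (0:ℝ) < |x| := lt_trans ht hx
  rw [Real.log_pow, Real.log_div (ne_of_gt hx0) (ne_of_gt ht)]
  push_cast; ring

lemma aux_B_gt {t x : ℝ} (ht : 0 < t) (hx : t < |x|) : 1 < (|x| / t) ^ 2 := by
  have h1 : 1 < |x| / t := (one_lt_div ht).mpr hx
  nlinarith

lemma aux_upper (t : ℝ) (ht : 0 < t) (ht1 : t < 1) :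
    ∫⁻ x, ENNReal.ofReal ((harmonic ⌈(|x| / t) ^ 2 - 1⌉₊ : ℝ)) ∂(gaussianReal 0 1)
      ≤ ENNReal.ofReal (1 + 2 * (-Real.log t))
        + 2 * ∫⁻ x, ENNReal.ofReal (max (Real.log |x|) 0) ∂(gaussianReal 0 1) := by
  have hL : 0 < -Real.log t := by
    have := Real.log_neg ht ht1
    linarith
  have hpt : ∀ x : ℝ, ENNReal.ofReal ((harmonic ⌈(|x| / t) ^ 2 - 1⌉₊ : ℝ))
      ≤ ENNReal.ofReal (1 + 2 * (-Real.log t)) + 2 * ENNReal.ofReal (max (Real.log |x|) 0) := by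
    intro x
    rcases le_or_gt |x| t with h | h
    · have hB : (|x| / t) ^ 2 - 1 ≤ 0 := by
        have h1 : |x| / t ≤ 1 := (div_le_one ht).mpr h
        have h0 : 0 ≤ |x| / t := div_nonneg (abs_nonneg x) ht.le
        nlinarith
      rw [Nat.ceil_eq_zero.mpr hB]
      simp
    · have hB := aux_B_gt ht h
      calc ENNReal.ofReal ((harmonic ⌈(|x| / t) ^ 2 - 1⌉₊ : ℝ))
          ≤ ENNReal.ofReal ((1 + 2 * (-Real.log t)) + 2 * max (Real.log |x|) 0) := by
            apply ENNReal.ofReal_le_ofReal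
            have h1 := aux_harm_upper hB
            rw [aux_logB ht h] at h1
            have h2 : Real.log |x| ≤ max (Real.log |x|) 0 := le_max_left _ _
            linarith
        _ = ENNReal.ofReal (1 + 2 * (-Real.log t)) + ENNReal.ofReal (2 * max (Real.log |x|) 0) := by
            rw [ENNReal.ofReal_add (by linarith) (by positivity)]
        _ = ENNReal.ofReal (1 + 2 * (-Real.log t)) + 2 * ENNReal.ofReal (max (Real.log |x|) 0) := by
            rw [ENNReal.ofReal_mul (by norm_num)]
            norm_num
  calc ∫⁻ x, ENNReal.ofReal ((harmonic ⌈(|x| / t) ^ 2 - 1⌉₊ : ℝ)) ∂(gaussianReal 0 1)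
      ≤ ∫⁻ x, (ENNReal.ofReal (1 + 2 * (-Real.log t))
          + 2 * ENNReal.ofReal (max (Real.log |x|) 0)) ∂(gaussianReal 0 1) :=
        lintegral_mono hpt
    _ = ENNReal.ofReal (1 + 2 * (-Real.log t))
        + 2 * ∫⁻ x, ENNReal.ofReal (max (Real.log |x|) 0) ∂(gaussianReal 0 1) := by
        rw [lintegral_add_left measurable_const]
        rw [lintegral_const, measure_univ, mul_one]
        congr 1
        exact lintegral_const_mul 2 (ENNReal.measurable_ofReal.comp
          ((Real.measurable_log.comp measurable_abs).max measurable_const))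

lemma aux_lower (t s : ℝ) (ht : 0 < t) (hts : t ≤ s) :
    ENNReal.ofReal (2 * (Real.log s - Real.log t)) * (gaussianReal 0 1) {y : ℝ | s < |y|}
      ≤ ∫⁻ x, ENNReal.ofReal ((harmonic ⌈(|x| / t) ^ 2 - 1⌉₊ : ℝ)) ∂(gaussianReal 0 1) := by
  have hs : 0 < s := lt_of_lt_of_le ht hts
  have hpt : ∀ x : ℝ, Set.indicator {y : ℝ | s < |y|}
        (fun _ => ENNReal.ofReal (2 * (Real.log s - Real.log t))) x
      ≤ ENNReal.ofReal ((harmonic ⌈(|x| / t) ^ 2 - 1⌉₊ : ℝ)) := by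
    intro x
    rcases le_or_gt |x| s with h | h
    · rw [Set.indicator_of_notMem (by simp [Set.mem_setOf_eq, not_lt.mpr h])]
      exact zero_le
    · rw [Set.indicator_of_mem (show x ∈ {y : ℝ | s < |y|} from h)]
      have hxt : t < |x| := lt_of_le_of_lt hts h
      have hB := aux_B_gt ht hxt
      apply ENNReal.ofReal_le_ofReal
      calc 2 * (Real.log s - Real.log t)
          ≤ 2 * (Real.log |x| - Real.log t) := by
            have := Real.log_le_log hs h.le
            linarith
        _ = Real.log ((|x| / t) ^ 2) := (aux_logB ht hxt).symm
        _ ≤ _ := aux_harm_lower hB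
  calc ENNReal.ofReal (2 * (Real.log s - Real.log t)) * (gaussianReal 0 1) {y : ℝ | s < |y|}
      = ∫⁻ x, Set.indicator {y : ℝ | s < |y|}
          (fun _ => ENNReal.ofReal (2 * (Real.log s - Real.log t))) x ∂(gaussianReal 0 1) := by
        rw [lintegral_indicator_const (aux_measset s)]
    _ ≤ _ := lintegral_mono hpt


lemma aux_tsum_toReal (t : ℝ) :
    ∑' n : ℕ, (1 / ((n : ℝ) + 1)) *
        ((gaussianReal 0 1) {y : ℝ | t * Real.sqrt ((n : ℝ) + 1) < |y|}).toReal
      = (∑' n : ℕ, (((n : ℝ≥0∞) + 1)⁻¹ *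
          (gaussianReal 0 1) {y : ℝ | t * Real.sqrt ((n : ℝ) + 1) < |y|})).toReal := by
  rw [ENNReal.tsum_toReal_eq (fun n => ENNReal.mul_ne_top
    (ENNReal.inv_ne_top.mpr (by simp)) (measure_ne_top _ _))]
  refine tsum_congr fun n => ?_
  rw [ENNReal.toReal_mul, ENNReal.toReal_inv, one_div]
  congr 2

theorem stmt_2 {Ω : Type*} [MeasureSpace Ω] [IsProbabilityMeasure (ℙ : Measure Ω)]
    (Z : Ω → ℝ) (hZ : Measure.map Z (ℙ : Measure Ω) = gaussianReal 0 1)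
    (c : ℝ) (hc : 0 < c) :
    Tendsto
      (fun ε : ℝ =>
        (1 / (-Real.log (c * ε))) *
          ∑' n : ℕ, (1 / ((n : ℝ) + 1)) *
            (ℙ {ω | c * ε * Real.sqrt ((n : ℝ) + 1) < |Z ω|}).toReal)
      (𝓝[>] 0) (𝓝 2) := by
  -- Z is a.e. measurable
  have hmeasZ : AEMeasurable Z (ℙ : Measure Ω) := by
    by_contra h
    rw [Measure.map_of_not_aemeasurable h] at hZ
    have h1 : (gaussianReal 0 1) Set.univ = 1 := measure_univ
    rw [← hZ] at h1
    simp at h1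
  have htrans : ∀ a : ℝ, (ℙ : Measure Ω) {ω | a < |Z ω|}
      = (gaussianReal 0 1) {y : ℝ | a < |y|} := by
    intro a
    rw [← hZ, Measure.map_apply_of_aemeasurable hmeasZ (aux_measset a)]
    rfl
  set K : ℝ≥0∞ := ∫⁻ x, ENNReal.ofReal (max (Real.log |x|) 0) ∂(gaussianReal 0 1) with hK
  set K' : ℝ := K.toReal with hK'
  set L : ℝ → ℝ := fun ε => -Real.log (c * ε) with hLdef
  -- L tends to atTop
  have hL : Tendsto L (𝓝[>] (0:ℝ)) atTop := by
    have h1 : Tendsto (fun ε : ℝ => c * ε) (𝓝[>] (0:ℝ)) (𝓝[>] (0:ℝ)) := by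
      apply tendsto_nhdsWithin_of_tendsto_nhds_of_eventually_within
      · have hcont : Continuous (fun ε : ℝ => c * ε) := continuous_const.mul continuous_id
        have h0 := (hcont.tendsto (0:ℝ)).mono_left (nhdsWithin_le_nhds (s := Set.Ioi (0:ℝ)))
        simpa using h0
      · filter_upwards [self_mem_nhdsWithin] with x hx
        exact mul_pos hc hx
    have h2 := Real.tendsto_log_nhdsGT_zero.comp h1
    rw [hLdef]
    exact tendsto_neg_atBot_atTop.comp h2
  -- the two bounding functions
  have hup : Tendsto (fun ε : ℝ => 2 + (1 + 2 * K') / L ε) (𝓝[>] (0:ℝ)) (𝓝 2) := by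
    have h1 : Tendsto (fun y : ℝ => 2 + (1 + 2 * K') / y) atTop (𝓝 2) := by
      have h2 : Tendsto (fun y : ℝ => (1 + 2 * K') / y) atTop (𝓝 0) := by
        simpa [div_eq_mul_inv] using tendsto_inv_atTop_zero.const_mul (1 + 2 * K')
      have := (tendsto_const_nhds (x := (2:ℝ)) (f := atTop)).add h2
      simpa using this
    exact h1.comp hL
  have hlow : Tendsto (fun ε : ℝ => 2 * (1 - Real.log (L ε) / L ε) * (1 - 1 / L ε))
      (𝓝[>] (0:ℝ)) (𝓝 2) := by
    have h1 : Tendsto (fun y : ℝ => 2 * (1 - Real.log y / y) * (1 - 1 / y)) atTop (𝓝 2) := by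
      have hlog : Tendsto (fun y : ℝ => Real.log y / y) atTop (𝓝 0) :=
        Real.isLittleO_log_id_atTop.tendsto_div_nhds_zero
      have hinv : Tendsto (fun y : ℝ => 1 / y) atTop (𝓝 0) := by
        simpa [one_div] using tendsto_inv_atTop_zero
      have := (((tendsto_const_nhds (x := (1:ℝ)) (f := atTop)).sub hlog).const_mul
        (2:ℝ)).mul ((tendsto_const_nhds (x := (1:ℝ)) (f := atTop)).sub hinv)
      simpa using this
    exact h1.comp hL
  -- eventual bounds
  have hev : ∀ᶠ ε in 𝓝[>] (0:ℝ), ε ∈ Set.Ioo (0:ℝ) (Real.exp (-2) / c) :=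
    Ioo_mem_nhdsGT_of_mem ⟨le_refl 0, by positivity⟩
  have key : ∀ ε ∈ Set.Ioo (0:ℝ) (Real.exp (-2) / c),
      (2 * (1 - Real.log (L ε) / L ε) * (1 - 1 / L ε)
        ≤ (1 / (-Real.log (c * ε))) * ∑' n : ℕ, (1 / ((n : ℝ) + 1)) *
            ((ℙ : Measure Ω) {ω | c * ε * Real.sqrt ((n : ℝ) + 1) < |Z ω|}).toReal)
      ∧ ((1 / (-Real.log (c * ε))) * ∑' n : ℕ, (1 / ((n : ℝ) + 1)) *
            ((ℙ : Measure Ω) {ω | c * ε * Real.sqrt ((n : ℝ) + 1) < |Z ω|}).toReal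
        ≤ 2 + (1 + 2 * K') / L ε) := by
    intro ε hε
    obtain ⟨hε0, hεδ⟩ := hε
    set t : ℝ := c * ε with htdef
    have ht0 : 0 < t := mul_pos hc hε0
    have htsmall : t < Real.exp (-2) := by
      rw [htdef]
      calc c * ε < c * (Real.exp (-2) / c) := by
            exact mul_lt_mul_of_pos_left hεδ hc
        _ = Real.exp (-2) := by field_simp
    have ht1 : t < 1 := lt_trans htsmall (by
      rw [Real.exp_lt_one_iff]; norm_num)
    have hLε : L ε = -Real.log t := rfl
    have hL2 : 2 < L ε := by
      rw [hLε]
      have : Real.log t < Real.log (Real.exp (-2)) := Real.log_lt_log ht0 htsmall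
      rw [Real.log_exp] at this
      linarith
    have hL0 : 0 < L ε := by linarith
    set s : ℝ := 1 / L ε with hsdef
    have hs0 : 0 < s := by positivity
    have hshalf : s < 1/2 := by
      rw [hsdef]
      rw [div_lt_div_iff₀ hL0 (by norm_num)]
      linarith
    have hts : t < s := by
      -- t * L ε < 1
      have h1 : -Real.log t < 1 / t := by
        have h2 : Real.log (1/t) < 1/t := by
          have := Real.log_le_sub_one_of_pos (show (0:ℝ) < 1/t by positivity)
          linarith
        rw [one_div, Real.log_inv] at h2
        rw [one_div]
        linarith
      rw [hsdef, hLε]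
      rw [lt_div_iff₀ hL0]
      rw [hLε] at hL0 ⊢
      calc t * -Real.log t < t * (1/t) := by
            exact mul_lt_mul_of_pos_left h1 ht0
        _ = 1 := by field_simp
    -- rewrite the sum
    have hsum : ∑' n : ℕ, (1 / ((n : ℝ) + 1)) *
          ((ℙ : Measure Ω) {ω | c * ε * Real.sqrt ((n : ℝ) + 1) < |Z ω|}).toReal
        = (∫⁻ x, ENNReal.ofReal ((harmonic ⌈(|x| / t) ^ 2 - 1⌉₊ : ℝ))
            ∂(gaussianReal 0 1)).toReal := by
      rw [← aux_repr t ht0, ← aux_tsum_toReal t]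
      refine tsum_congr fun n => ?_
      congr 2
      exact htrans _
    set G : ℝ≥0∞ := ∫⁻ x, ENNReal.ofReal ((harmonic ⌈(|x| / t) ^ 2 - 1⌉₊ : ℝ))
        ∂(gaussianReal 0 1) with hG
    have hKtop : K ≠ ⊤ := ne_of_lt aux_K_lt_top
    have hUBne : ENNReal.ofReal (1 + 2 * (-Real.log t)) + 2 * K ≠ ⊤ := by
      apply ENNReal.add_ne_top.mpr
      exact ⟨ENNReal.ofReal_ne_top, ENNReal.mul_ne_top (by norm_num) hKtop⟩
    have hGub := aux_upper t ht0 ht1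
    rw [← hG, ← hK] at hGub
    have hGne : G ≠ ⊤ := ne_of_lt (lt_of_le_of_lt hGub (lt_top_iff_ne_top.mpr hUBne))
    have hGtoReal_ub : G.toReal ≤ 1 + 2 * (-Real.log t) + 2 * K' := by
      calc G.toReal ≤ (ENNReal.ofReal (1 + 2 * (-Real.log t)) + 2 * K).toReal :=
            ENNReal.toReal_mono hUBne hGub
        _ = 1 + 2 * (-Real.log t) + 2 * K' := by
            rw [ENNReal.toReal_add ENNReal.ofReal_ne_top (ENNReal.mul_ne_top (by norm_num) hKtop)]
            rw [ENNReal.toReal_ofReal (by rw [← hLε]; linarith), ENNReal.toReal_mul]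
            norm_num
            exact hK'.symm
    have hGlb := aux_lower t s ht0 hts.le
    have hGtoReal_lb : 2 * (Real.log s - Real.log t) * (1 - s) ≤ G.toReal := by
      have h1 := ENNReal.toReal_mono hGne hGlb
      rw [ENNReal.toReal_mul, ENNReal.toReal_ofReal] at h1
      · refine le_trans ?_ h1
        have h2 : 0 ≤ 2 * (Real.log s - Real.log t) := by
          have := Real.log_le_log ht0 hts.le
          linarith
        have h3 := aux_tail_ge hs0.le
        exact mul_le_mul_of_nonneg_left h3 h2
      · have := Real.log_le_log ht0 hts.le
        linarith
    have hlogs : Real.log s = -Real.log (L ε) := by rw [hsdef, one_div, Real.log_inv]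
    have hlogt : Real.log t = -(L ε) := by rw [hLε]; ring
    have hLne : L ε ≠ 0 := ne_of_gt hL0
    constructor
    · -- lower bound
      rw [hsum]
      calc 2 * (1 - Real.log (L ε) / L ε) * (1 - s)
          = s * (2 * (Real.log s - Real.log t) * (1 - s)) := by
            rw [hlogs, hlogt, hsdef]
            field_simp
            ring_nf
        _ ≤ s * G.toReal := mul_le_mul_of_nonneg_left hGtoReal_lb hs0.le
    · -- upper bound
      rw [hsum]
      calc s * G.toReal
          ≤ s * (1 + 2 * (-Real.log t) + 2 * K') :=
            mul_le_mul_of_nonneg_left hGtoReal_ub hs0.le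
        _ = 2 + (1 + 2 * K') / L ε := by
            rw [hlogt, hsdef]
            field_simp
            ring
  refine tendsto_of_tendsto_of_tendsto_of_le_of_le' hlow hup ?_ ?_
  · filter_upwards [hev] with ε hε
    exact (key ε hε).1
  · filter_upwards [hev] with ε hε
    exact (key ε hε).2
end

section
/- Let a ∈ (0,1), let c > 0, and let Z be a real random variable whose law is absolutely continuous (Z has a density) and satisfies E Z² < ∞. Then (1/(−log(cε))) · Σ_{n≥1} (1/n) · P(|Z| > c ε n^a) converges to 1/a as ε → 0⁺. -/
open MeasureTheory ProbabilityTheory Filter Real Topology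

lemma bern {x r : ℝ} (hx : 1 ≤ x) (hr0 : 0 < r) (hr1 : r ≤ 1) :
    r * (x+1) ^ (-(1+r)) ≤ x ^ (-r) - (x+1) ^ (-r) := by
  have hx0 : 0 < x := lt_of_lt_of_le one_pos hx
  have hx1 : 0 < x + 1 := by linarith
  set v : ℝ := x / (x+1) with hv
  have hv0 : 0 < v := div_pos hx0 hx1
  have hv1 : v < 1 := (div_lt_one hx1).2 (by linarith)
  have hb : v ^ r ≤ 1 + r * (v - 1) := by
    have := rpow_one_add_le_one_add_mul_self (s := v - 1) (by linarith) hr0.le hr1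
    simpa using this
  set w : ℝ := r * (1 - v) with hwdef
  have hw : w < 1 := by nlinarith
  have hw0 : 0 ≤ w := by nlinarith
  have hvr : 1 + w ≤ v ^ (-r) := by
    have hpos : 0 < v ^ r := Real.rpow_pos_of_pos hv0 r
    rw [Real.rpow_neg hv0.le]
    have h1 : v ^ r ≤ 1 - w := by rw [hwdef]; nlinarith
    have h2 : 1 + w ≤ (1 - w)⁻¹ := by
      rw [inv_eq_one_div, le_div_iff₀ (by linarith)]; nlinarith
    refine h2.trans ?_
    exact inv_anti₀ hpos h1
  have hAB : v ^ (-r) = x ^ (-r) / (x+1) ^ (-r) := by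
    rw [hv, Real.div_rpow hx0.le hx1.le]
  have hB : 0 < (x+1) ^ (-r) := Real.rpow_pos_of_pos hx1 (-r)
  have hA : 0 < x ^ (-r) := Real.rpow_pos_of_pos hx0 (-r)
  have hsplit : (x+1) ^ (-(1+r)) = (x+1)^(-r) * (x+1)⁻¹ := by
    rw [show -(1+r) = -r + (-1) by ring, Real.rpow_add hx1, Real.rpow_neg_one]
  have h1v : 1 - v = (x+1)⁻¹ := by rw [hv]; field_simp; ring
  -- (1 + w) * B ≤ A
  have hmain : (1 + w) * (x+1)^(-r) ≤ x ^ (-r) := by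
    have := mul_le_mul_of_nonneg_right hvr hB.le
    rwa [hAB, div_mul_cancel₀ _ (ne_of_gt hB)] at this
  rw [hsplit]
  have hinv : 0 < (x+1)⁻¹ := by positivity
  calc r * ((x+1)^(-r) * (x+1)⁻¹) = (1 + w) * (x+1)^(-r) - (x+1)^(-r) := by
        rw [hwdef, h1v]; ring
    _ ≤ x ^ (-r) - (x+1)^(-r) := by linarith

lemma tail_bound {r : ℝ} (hr0 : 0 < r) (hr1 : r ≤ 1) {N : ℕ} (hN : 1 ≤ N) :
    (∑' m : ℕ, ((m : ℝ) + N + 1) ^ (-(1+r))) ≤ (N:ℝ)^(-r) / r := by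
  set f : ℕ → ℝ := fun m => ((m:ℝ) + N) ^ (-r) with hf
  have hxN : ∀ m : ℕ, (1:ℝ) ≤ (m:ℝ) + N := by
    intro m
    have : (1:ℝ) ≤ (N:ℝ) := by exact_mod_cast hN
    have : (0:ℝ) ≤ (m:ℝ) := Nat.cast_nonneg m
    linarith
  have hdiff : ∀ m : ℕ, ((m : ℝ) + N + 1) ^ (-(1+r)) ≤ (f m - f (m+1))/r := by
    intro m
    have hb := bern (hxN m) hr0 hr1
    rw [le_div_iff₀ hr0, mul_comm]
    have : f (m+1) = ((m:ℝ) + N + 1) ^ (-r) := by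
      simp only [hf]; push_cast; ring_nf
    rw [this]
    exact hb
  have hanti : ∀ m : ℕ, 0 ≤ f m - f (m+1) := by
    intro m
    have h1 : (0:ℝ) < (m:ℝ) + N := lt_of_lt_of_le one_pos (hxN m)
    have h2 : ((m:ℝ) + N) ≤ ((m+1:ℕ):ℝ) + N := by push_cast; linarith
    have := Real.rpow_le_rpow_of_nonpos h1 h2 (neg_nonpos.2 hr0.le)
    simpa [hf] using this
  have hf0 : Tendsto f atTop (𝓝 0) := by
    have h1 : Tendsto (fun m : ℕ => (m:ℝ) + N) atTop atTop :=
      tendsto_atTop_add_const_right _ _ tendsto_natCast_atTop_atTop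
    exact (tendsto_rpow_neg_atTop hr0).comp h1
  have hHasSum : HasSum (fun m => f m - f (m+1)) (f 0) := by
    rw [hasSum_iff_tendsto_nat_of_nonneg hanti]
    have : ∀ n : ℕ, ∑ i ∈ Finset.range n, (f i - f (i+1)) = f 0 - f n := by
      intro n; exact Finset.sum_range_sub' f n
    simp_rw [this]
    simpa using tendsto_const_nhds.sub hf0
  have hsumdiff : Summable (fun m => (f m - f (m+1))/r) := hHasSum.summable.div_const r
  have hLHS : Summable (fun m : ℕ => ((m : ℝ) + N + 1) ^ (-(1+r))) := by
    refine Summable.of_nonneg_of_le (fun m => ?_) hdiff hsumdiff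
    positivity
  calc (∑' m : ℕ, ((m : ℝ) + N + 1) ^ (-(1+r)))
      ≤ ∑' m : ℕ, (f m - f (m+1))/r := Summable.tsum_le_tsum hdiff hLHS hsumdiff
    _ = (f 0)/r := by rw [tsum_div_const, hHasSum.tsum_eq]
    _ = (N:ℝ)^(-r) / r := by simp [hf]

lemma cheb {Ω : Type*} [MeasureSpace Ω] [IsProbabilityMeasure (ℙ : Measure Ω)]
    (Z : Ω → ℝ) (hZmom : Integrable (fun ω => (Z ω)^2) (ℙ : Measure Ω)) {x : ℝ} (hx : 0 < x) :
    (ℙ {ω | x < |Z ω|}).toReal ≤ Real.sqrt (∫ ω, (Z ω)^2 ∂ℙ) / x := by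
  set K := ∫ ω, (Z ω)^2 ∂(ℙ : Measure Ω) with hK
  have hK0 : 0 ≤ K := integral_nonneg (fun ω => sq_nonneg _)
  have hsub : {ω | x < |Z ω|} ⊆ {ω | x^2 ≤ (Z ω)^2} := by
    intro ω hω
    simp only [Set.mem_setOf_eq] at *
    have : x ≤ |Z ω| := le_of_lt hω
    calc x^2 ≤ |Z ω|^2 := by nlinarith [abs_nonneg (Z ω)]
      _ = (Z ω)^2 := sq_abs _
  have hmono : (ℙ {ω | x < |Z ω|}).toReal ≤ (ℙ {ω | x^2 ≤ (Z ω)^2}).toReal := by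
    apply ENNReal.toReal_le_toReal (measure_ne_top _ _) (measure_ne_top _ _) |>.2
    exact measure_mono hsub
  have hmark : x^2 * (ℙ {ω | x^2 ≤ (Z ω)^2}).toReal ≤ K :=
    mul_meas_ge_le_integral_of_nonneg (ae_of_all _ (fun ω => sq_nonneg _)) hZmom (x^2)
  set F := (ℙ {ω | x < |Z ω|}).toReal with hF
  have hF1 : F ≤ 1 := by
    rw [hF]
    exact ENNReal.toReal_le_of_le_ofReal one_pos.le (by simpa using prob_le_one)
  have hF0 : 0 ≤ F := ENNReal.toReal_nonneg
  have hFK : x^2 * F ≤ K := le_trans (by nlinarith) hmark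
  rw [le_div_iff₀ hx]
  rw [Real.le_sqrt (by positivity)]
  · nlinarith
  · exact hK0

lemma near_one {Ω : Type*} [MeasureSpace Ω] [IsProbabilityMeasure (ℙ : Measure Ω)]
    (Z : Ω → ℝ) (hZmeas : Measurable Z)
    (hZdens : (Measure.map Z (ℙ : Measure Ω)) ≪ (volume : Measure ℝ))
    {δ : ℝ} (hδ : 0 < δ) :
    ∃ t : ℝ, 0 < t ∧ 1 - δ ≤ (ℙ {ω | t < |Z ω|}).toReal := by
  set A : ℕ → Set Ω := fun k => {ω | 1/((k:ℝ)+1) < |Z ω|} with hA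
  have hmono : Monotone A := by
    intro k l hkl ω hω
    simp only [hA, Set.mem_setOf_eq] at *
    have hkl' : ((k:ℝ)) ≤ (l:ℝ) := Nat.cast_le.2 hkl
    have : 1/((l:ℝ)+1) ≤ 1/((k:ℝ)+1) :=
      one_div_le_one_div_of_le (by positivity) (by linarith)
    linarith
  have hunion : (⋃ k, A k) = {ω | Z ω ≠ 0} := by
    ext ω
    simp only [Set.mem_iUnion, hA, Set.mem_setOf_eq]
    constructor
    · rintro ⟨k, hk⟩
      intro h0
      rw [h0] at hk; simp at hk
      have : (0:ℝ) < 1/((k:ℝ)+1) := by positivity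
      linarith
    · intro h
      have habs : 0 < |Z ω| := abs_pos.2 h
      obtain ⟨k, hk⟩ := exists_nat_one_div_lt habs
      exact ⟨k, hk⟩
  have hzero : ℙ (Z ⁻¹' {0}) = 0 := by
    have h1 : Measure.map Z (ℙ : Measure Ω) {0} = 0 :=
      hZdens (Real.volume_singleton)
    rwa [Measure.map_apply hZmeas (measurableSet_singleton 0)] at h1
  have hone : ℙ {ω | Z ω ≠ 0} = 1 := by
    have hc : {ω | Z ω ≠ 0} = (Z ⁻¹' {0})ᶜ := by
      ext ω; simp [Set.mem_preimage]
    rw [hc, measure_compl (hZmeas (measurableSet_singleton 0)) (measure_ne_top _ _), hzero,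
      measure_univ, tsub_zero]
  have htend : Tendsto (fun k => ℙ (A k)) atTop (𝓝 1) := by
    have := tendsto_measure_iUnion_atTop (μ := (ℙ : Measure Ω)) hmono
    rwa [hunion, hone] at this
  have htendR : Tendsto (fun k => (ℙ (A k)).toReal) atTop (𝓝 1) := by
    have h1 : ((1 : ENNReal)).toReal = 1 := by simp
    have := (ENNReal.tendsto_toReal (by simp : (1:ENNReal) ≠ ⊤)).comp htend
    exact this
  have hev : ∀ᶠ k in atTop, 1 - δ ≤ (ℙ (A k)).toReal :=
    htendR.eventually (eventually_ge_nhds (by linarith))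
  obtain ⟨k, hk⟩ := hev.exists
  refine ⟨1/((k:ℝ)+1), by positivity, ?_⟩
  simpa [hA] using hk

lemma harm_cast (n : ℕ) : ((harmonic n : ℚ) : ℝ) = ∑ i ∈ Finset.range n, 1/((i:ℝ)+1) := by
  rw [harmonic]
  push_cast
  simp [one_div]

lemma sumshift {a : ℝ} (ha : 0 < a) (N : ℕ) :
    Summable (fun m : ℕ => ((m:ℝ)+N+1)^(-(1+a))) := by
  have h : Summable (fun n : ℕ => ((n:ℝ))^(-(1+a))) := Real.summable_nat_rpow.2 (by linarith)
  have h2 := (summable_nat_add_iff (N+1)).2 h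
  refine h2.congr (fun m => ?_)
  push_cast
  ring_nf

lemma Ltend {c : ℝ} (hc : 0 < c) :
    Tendsto (fun ε : ℝ => -Real.log (c*ε)) (𝓝[>] (0:ℝ)) atTop := by
  have h0 : Tendsto (fun ε : ℝ => c*ε) (𝓝[>] (0:ℝ)) (𝓝[>] (0:ℝ)) := by
    rw [tendsto_nhdsWithin_iff]
    constructor
    · have : Tendsto (fun ε : ℝ => c*ε) (𝓝 (0:ℝ)) (𝓝 (c*0)) :=
        (continuous_const.mul continuous_id).tendsto 0
      simpa using this.mono_left nhdsWithin_le_nhds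
    · filter_upwards [eventually_mem_nhdsWithin] with ε hε
      exact Set.mem_Ioi.2 (mul_pos hc hε)
  have h1 : Tendsto (fun ε : ℝ => Real.log (c*ε)) (𝓝[>] (0:ℝ)) atBot :=
    tendsto_log_nhdsGT_zero.comp h0
  exact tendsto_neg_atBot_atTop.comp h1

lemma cmul_tendsto {c : ℝ} (hc : 0 < c) :
    Tendsto (fun ε : ℝ => c*ε) (𝓝[>] (0:ℝ)) (𝓝 (0:ℝ)) := by
  have : Tendsto (fun ε : ℝ => c*ε) (𝓝 (0:ℝ)) (𝓝 (c*0)) :=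
    (continuous_const.mul continuous_id).tendsto 0
  simpa using this.mono_left nhdsWithin_le_nhds

theorem stmt_3 {Ω : Type*} [MeasureSpace Ω] [IsProbabilityMeasure (ℙ : Measure Ω)]
    (a : ℝ) (ha0 : 0 < a) (ha1 : a < 1) (c : ℝ) (hc : 0 < c)
    (Z : Ω → ℝ) (hZmeas : Measurable Z)
    (hZdens : (Measure.map Z (ℙ : Measure Ω)) ≪ (volume : Measure ℝ))
    (hZmom : Integrable (fun ω => (Z ω) ^ 2) (ℙ : Measure Ω)) :
    Tendsto
      (fun ε : ℝ =>
        (1 / (-Real.log (c * ε))) *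
          ∑' n : ℕ, (1 / ((n : ℝ) + 1)) *
            (ℙ {ω | c * ε * ((n : ℝ) + 1) ^ a < |Z ω|}).toReal)
      (𝓝[>] 0) (𝓝 (1 / a)) := by
  set sK := Real.sqrt (∫ ω, (Z ω)^2 ∂(ℙ : Measure Ω)) with hsKdef
  have hsK0 : 0 ≤ sK := Real.sqrt_nonneg _
  have hcheb : ∀ x : ℝ, 0 < x → (ℙ {ω | x < |Z ω|}).toReal ≤ sK / x :=
    fun x hx => cheb Z hZmom hx
  have hF1 : ∀ x : ℝ, (ℙ {ω | x < |Z ω|}).toReal ≤ 1 := by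
    intro x
    have h := prob_le_one (μ := (ℙ : Measure Ω)) (s := {ω | x < |Z ω|})
    simpa using ENNReal.toReal_mono (by simp) h
  have hFanti : ∀ x y : ℝ, x ≤ y →
      (ℙ {ω | y < |Z ω|}).toReal ≤ (ℙ {ω | x < |Z ω|}).toReal := by
    intro x y hxy
    refine (ENNReal.toReal_le_toReal (measure_ne_top _ _) (measure_ne_top _ _)).2 ?_
    exact measure_mono (fun ω hω => lt_of_le_of_lt hxy hω)
  have hbound : ∀ ε : ℝ, 0 < ε → ∀ n : ℕ,
      1/((n:ℝ)+1) * (ℙ {ω | c*ε*((n:ℝ)+1)^a < |Z ω|}).toReal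
        ≤ sK/(c*ε) * ((n:ℝ)+1)^(-(1+a)) := by
    intro ε hε n
    have hn1 : (0:ℝ) < (n:ℝ)+1 := by positivity
    have hxa : (0:ℝ) < ((n:ℝ)+1)^a := Real.rpow_pos_of_pos hn1 a
    have hx : 0 < c*ε*((n:ℝ)+1)^a := by positivity
    have h1 := hcheb _ hx
    have hxpow : ((n:ℝ)+1)^(-(1+a)) = (((n:ℝ)+1) * ((n:ℝ)+1)^a)⁻¹ := by
      rw [show -(1+a) = (-1) + (-a) by ring, Real.rpow_add hn1, Real.rpow_neg_one,
        Real.rpow_neg hn1.le, mul_inv]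
    calc 1/((n:ℝ)+1) * (ℙ {ω | c*ε*((n:ℝ)+1)^a < |Z ω|}).toReal
        ≤ 1/((n:ℝ)+1) * (sK/(c*ε*((n:ℝ)+1)^a)) := by
          apply mul_le_mul_of_nonneg_left h1 (by positivity)
      _ = sK/(c*ε) * ((n:ℝ)+1)^(-(1+a)) := by
          rw [hxpow]
          field_simp
  have htermnn : ∀ ε : ℝ, ∀ n : ℕ,
      0 ≤ 1/((n:ℝ)+1) * (ℙ {ω | c*ε*((n:ℝ)+1)^a < |Z ω|}).toReal := by
    intro ε n; positivity
  have hsum : ∀ ε : ℝ, 0 < ε → Summable (fun n : ℕ =>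
      1/((n:ℝ)+1) * (ℙ {ω | c*ε*((n:ℝ)+1)^a < |Z ω|}).toReal) := by
    intro ε hε
    refine Summable.of_nonneg_of_le (htermnn ε) (hbound ε hε) ?_
    simpa using (sumshift ha0 0).mul_left (sK/(c*ε))
  rw [show (𝓝[>] (0:ℝ)) = (𝓝[>] (0:ℝ)) from rfl]
  apply tendsto_order.2
  constructor
  · -- lower bound
    intro b hb
    have hab : a*b < 1 := by
      have h := (lt_div_iff₀ ha0).1 hb
      linarith
    set δ := min (1/2 : ℝ) ((1 - a*b)/2) with hδdef
    have hδ0 : 0 < δ := lt_min (by norm_num) (by linarith)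
    have hδ1 : δ < 1 := lt_of_le_of_lt (min_le_left _ _) (by norm_num)
    have hβ : a*b < 1 - δ := by
      have h2 : δ ≤ (1 - a*b)/2 := min_le_right _ _
      linarith
    obtain ⟨t, ht0, htF⟩ := near_one Z hZmeas hZdens hδ0
    have hγ0 : 0 < (1-δ)/a - b := by
      rw [sub_pos, lt_div_iff₀ ha0]; nlinarith
    set γ := (1-δ)/a - b with hγdef
    set T := (1-δ)*Real.log t/a with hTdef
    filter_upwards [eventually_mem_nhdsWithin,
      (cmul_tendsto hc).eventually (eventually_lt_nhds ht0),
      (Ltend hc).eventually_ge_atTop (|T|/γ + 1)] with ε hε hεt hεL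
    have hε0 : (0:ℝ) < ε := hε
    have hcε : 0 < c*ε := by positivity
    set L := -Real.log (c*ε) with hLdef
    have hL1 : 1 ≤ L := by
      have : 0 ≤ |T|/γ := by positivity
      linarith
    have hL0 : 0 < L := by linarith
    set y := (t/(c*ε))^(a⁻¹) with hydef
    have htc1 : 1 ≤ t/(c*ε) := (one_le_div hcε).2 hεt.le
    have hy1 : 1 ≤ y := by
      have := Real.rpow_le_rpow (by norm_num : (0:ℝ) ≤ 1) htc1 (by positivity : (0:ℝ) ≤ a⁻¹)
      simpa [hydef] using this
    have hy0 : 0 < y := by linarith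
    set M := ⌊y⌋₊ with hMdef
    have hM1 : 1 ≤ M := Nat.le_floor (by exact_mod_cast hy1)
    have hMy : (M:ℝ) ≤ y := Nat.floor_le hy0.le
    have hyM : y ≤ (M:ℝ)+1 := (Nat.lt_floor_add_one y).le
    have hkey : ∀ n : ℕ, n < M →
        1-δ ≤ (ℙ {ω | c*ε*((n:ℝ)+1)^a < |Z ω|}).toReal := by
      intro n hn
      refine le_trans htF (hFanti _ _ ?_)
      have h1 : ((n:ℝ)+1) ≤ y := by
        have hnM : ((n:ℝ)+1) ≤ (M:ℝ) := by exact_mod_cast Nat.succ_le_of_lt hn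
        linarith
      have h2 : ((n:ℝ)+1)^a ≤ y^a := Real.rpow_le_rpow (by positivity) h1 ha0.le
      have h3 : y^a = t/(c*ε) := by
        rw [hydef, ← Real.rpow_mul (by positivity), inv_mul_cancel₀ (ne_of_gt ha0),
          Real.rpow_one]
      calc c*ε*((n:ℝ)+1)^a ≤ c*ε*(t/(c*ε)) := by
            apply mul_le_mul_of_nonneg_left (h3 ▸ h2) hcε.le
        _ = t := by field_simp
    have hlow : (1-δ) * Real.log ((M:ℝ)+1) ≤
        ∑' n : ℕ, 1/((n:ℝ)+1) * (ℙ {ω | c*ε*((n:ℝ)+1)^a < |Z ω|}).toReal := by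
      have hharm : Real.log ((M:ℝ)+1) ≤ ((harmonic M : ℚ) : ℝ) := by
        have := log_add_one_le_harmonic M
        push_cast at this ⊢
        convert this using 2
      calc (1-δ) * Real.log ((M:ℝ)+1) ≤ (1-δ) * ((harmonic M : ℚ) : ℝ) := by
            apply mul_le_mul_of_nonneg_left hharm (by linarith)
        _ = ∑ i ∈ Finset.range M, (1-δ) * (1/((i:ℝ)+1)) := by
            rw [harm_cast, Finset.mul_sum]
        _ ≤ ∑ i ∈ Finset.range M,
              1/((i:ℝ)+1) * (ℙ {ω | c*ε*((i:ℝ)+1)^a < |Z ω|}).toReal := by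
            apply Finset.sum_le_sum
            intro i hi
            rw [mul_comm (1-δ)]
            apply mul_le_mul_of_nonneg_left (hkey i (Finset.mem_range.1 hi)) (by positivity)
        _ ≤ _ := Summable.sum_le_tsum _ (fun i _ => htermnn ε i) (hsum ε hε0)
    have hlogy : Real.log y = (Real.log t + L)/a := by
      rw [hydef, Real.log_rpow (by positivity), Real.log_div (ne_of_gt ht0) (ne_of_gt hcε),
        hLdef]
      ring
    have hlogM : (Real.log t + L)/a ≤ Real.log ((M:ℝ)+1) := by
      have := Real.log_le_log hy0 hyM
      rw [hlogy] at this
      linarith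
    have hS : (1-δ)*((Real.log t + L)/a) ≤
        ∑' n : ℕ, 1/((n:ℝ)+1) * (ℙ {ω | c*ε*((n:ℝ)+1)^a < |Z ω|}).toReal :=
      le_trans (mul_le_mul_of_nonneg_left hlogM (by linarith)) hlow
    have hTγL : |T| < γ*L := by
      have h2 : γ*(|T|/γ + 1) ≤ γ*L := mul_le_mul_of_nonneg_left hεL hγ0.le
      have h3 : γ*(|T|/γ + 1) = |T| + γ := by field_simp
      have h4 : |T| + γ ≤ γ*L := by rw [← h3]; exact h2
      linarith [h4, hγ0]
    have hmain : b < (1/L) * ((1-δ)*((Real.log t + L)/a)) := by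
      have hexp : (1/L) * ((1-δ)*((Real.log t + L)/a)) = T/L + (1-δ)/a := by
        rw [hTdef]; field_simp
      rw [hexp]
      have h2 : -γ < T/L := by
        rw [neg_lt, ← neg_div, div_lt_iff₀ hL0]
        calc -T ≤ |T| := neg_le_abs T
          _ < γ*L := hTγL
      have : b = (1-δ)/a - γ := by rw [hγdef]; ring
      linarith
    calc b < (1/L) * ((1-δ)*((Real.log t + L)/a)) := hmain
      _ ≤ (1/L) * ∑' n : ℕ, 1/((n:ℝ)+1) *
            (ℙ {ω | c*ε*((n:ℝ)+1)^a < |Z ω|}).toReal := by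
          apply mul_le_mul_of_nonneg_left hS (by positivity)
      _ = _ := by norm_num
  · -- upper bound
    intro b hb
    have hγ0 : 0 < b - 1/a := by linarith
    set γ := b - 1/a with hγdef
    have hlog2 : 0 < Real.log 2 := Real.log_pos (by norm_num)
    have hC0 : 0 < 1 + Real.log 2 + sK/a := by positivity
    set C := 1 + Real.log 2 + sK/a with hCdef
    filter_upwards [eventually_mem_nhdsWithin,
      (cmul_tendsto hc).eventually (eventually_lt_nhds one_pos),
      (Ltend hc).eventually_ge_atTop (C/γ + 1)] with ε hε hε1 hεL
    have hε0 : (0:ℝ) < ε := hε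
    have hcε : 0 < c*ε := by positivity
    set L := -Real.log (c*ε) with hLdef
    have hL0 : 0 < L := by
      have h0 : 0 ≤ C/γ := by positivity
      linarith
    set y := (c*ε)^(-a⁻¹) with hydef
    have hy0 : 0 < y := Real.rpow_pos_of_pos hcε _
    have hy1 : 1 ≤ y :=
      Real.one_le_rpow_of_pos_of_le_one_of_nonpos hcε hε1.le
        (neg_nonpos.2 (by positivity))
    set N := ⌈y⌉₊ with hNdef
    have hN0 : 0 < N := Nat.ceil_pos.2 hy0
    have hN1 : 1 ≤ N := hN0
    have hyN : y ≤ (N:ℝ) := Nat.le_ceil y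
    have hNpos : (0:ℝ) < (N:ℝ) := lt_of_lt_of_le hy0 hyN
    have hN2y : (N:ℝ) ≤ 2*y := by
      have h2 := Nat.ceil_lt_add_one hy0.le
      linarith
    have hsplitsum := Summable.sum_add_tsum_nat_add (f := fun n : ℕ =>
        1/((n:ℝ)+1) * (ℙ {ω | c*ε*((n:ℝ)+1)^a < |Z ω|}).toReal) N (hsum ε hε0)
    have hhead : (∑ i ∈ Finset.range N,
        1/((i:ℝ)+1) * (ℙ {ω | c*ε*((i:ℝ)+1)^a < |Z ω|}).toReal)
          ≤ ((harmonic N : ℚ) : ℝ) := by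
      rw [harm_cast]
      apply Finset.sum_le_sum
      intro i _
      calc 1/((i:ℝ)+1) * (ℙ {ω | c*ε*((i:ℝ)+1)^a < |Z ω|}).toReal
          ≤ 1/((i:ℝ)+1) * 1 := mul_le_mul_of_nonneg_left (hF1 _) (by positivity)
        _ = 1/((i:ℝ)+1) := mul_one _
    have hharm2 : ((harmonic N : ℚ) : ℝ) ≤ 1 + Real.log N :=
      harmonic_le_one_add_log N
    have hlogy : Real.log y = L/a := by
      rw [hydef, Real.log_rpow hcε, hLdef]; ring
    have hlogN : Real.log N ≤ Real.log 2 + L/a := by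
      have h1 : Real.log N ≤ Real.log (2*y) := Real.log_le_log hNpos hN2y
      rwa [Real.log_mul (by norm_num) (ne_of_gt hy0), hlogy] at h1
    have hb2 : ∀ m : ℕ,
        1/(((m+N:ℕ):ℝ)+1) * (ℙ {ω | c*ε*(((m+N:ℕ):ℝ)+1)^a < |Z ω|}).toReal
          ≤ sK/(c*ε) * ((m:ℝ)+N+1)^(-(1+a)) := by
      intro m
      have h := hbound ε hε0 (m+N)
      push_cast at h ⊢
      exact h
    have hsumL : Summable (fun m : ℕ =>
        1/(((m+N:ℕ):ℝ)+1) * (ℙ {ω | c*ε*(((m+N:ℕ):ℝ)+1)^a < |Z ω|}).toReal) :=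
      (summable_nat_add_iff (f := fun n : ℕ =>
        1/((n:ℝ)+1) * (ℙ {ω | c*ε*((n:ℝ)+1)^a < |Z ω|}).toReal) N).2 (hsum ε hε0)
    have hsumR : Summable (fun m : ℕ => sK/(c*ε) * ((m:ℝ)+N+1)^(-(1+a))) :=
      (sumshift ha0 N).mul_left _
    have hNcε : (N:ℝ)^(-a) ≤ c*ε := by
      have h1 : (N:ℝ)^(-a) ≤ y^(-a) :=
        Real.rpow_le_rpow_of_nonpos hy0 hyN (neg_nonpos.2 ha0.le)
      have h2 : y^(-a) = c*ε := by
        rw [hydef, ← Real.rpow_mul hcε.le,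
          show -a⁻¹ * -a = 1 by field_simp, Real.rpow_one]
      linarith
    have htail : (∑' m : ℕ,
        1/(((m+N:ℕ):ℝ)+1) * (ℙ {ω | c*ε*(((m+N:ℕ):ℝ)+1)^a < |Z ω|}).toReal)
          ≤ sK/a := by
      calc (∑' m : ℕ,
          1/(((m+N:ℕ):ℝ)+1) * (ℙ {ω | c*ε*(((m+N:ℕ):ℝ)+1)^a < |Z ω|}).toReal)
          ≤ ∑' m : ℕ, sK/(c*ε) * ((m:ℝ)+N+1)^(-(1+a)) :=
            Summable.tsum_le_tsum hb2 hsumL hsumR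
        _ = sK/(c*ε) * ∑' m : ℕ, ((m:ℝ)+N+1)^(-(1+a)) := tsum_mul_left
        _ ≤ sK/(c*ε) * ((N:ℝ)^(-a)/a) :=
            mul_le_mul_of_nonneg_left (tail_bound ha0 ha1.le hN1) (by positivity)
        _ ≤ sK/(c*ε) * ((c*ε)/a) := by
            apply mul_le_mul_of_nonneg_left _ (by positivity)
            gcongr
        _ = sK/a := by
            field_simp
    have hS : (∑' n : ℕ,
        1/((n:ℝ)+1) * (ℙ {ω | c*ε*((n:ℝ)+1)^a < |Z ω|}).toReal) ≤ C + L/a := by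
      rw [← hsplitsum]
      have hh : (∑ i ∈ Finset.range N,
          1/((i:ℝ)+1) * (ℙ {ω | c*ε*((i:ℝ)+1)^a < |Z ω|}).toReal)
            ≤ 1 + Real.log 2 + L/a := by
        calc _ ≤ ((harmonic N : ℚ) : ℝ) := hhead
          _ ≤ 1 + Real.log N := hharm2
          _ ≤ 1 + (Real.log 2 + L/a) := by linarith
          _ = 1 + Real.log 2 + L/a := by ring
      calc _ ≤ (1 + Real.log 2 + L/a) + sK/a := add_le_add hh htail
        _ = C + L/a := by rw [hCdef]; ring
    have hCL : C/L < γ := by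
      have h2 : γ*(C/γ + 1) ≤ γ*L := mul_le_mul_of_nonneg_left hεL hγ0.le
      have h3 : γ*(C/γ + 1) = C + γ := by field_simp
      have h4 : C + γ ≤ γ*L := by rw [← h3]; exact h2
      rw [div_lt_iff₀ hL0]
      linarith
    calc (1/L) * (∑' n : ℕ,
        1/((n:ℝ)+1) * (ℙ {ω | c*ε*((n:ℝ)+1)^a < |Z ω|}).toReal)
        ≤ (1/L)*(C + L/a) := mul_le_mul_of_nonneg_left hS (by positivity)
      _ = C/L + 1/a := by field_simp
      _ < γ + 1/a := by linarith
      _ = b := by rw [hγdef]; ring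
end

section
/- Let N be a standard normal random variable and c > 0. Then (cε)² · Σ_{n≥1} P(|N| > c ε √n) converges to 1 as ε → 0⁺. -/
open MeasureTheory ProbabilityTheory Filter Real Topology
open scoped ENNReal NNReal

lemma aux_integral_sq_gauss :
    ∫ x : ℝ, x ^ 2 * Real.exp (-(2⁻¹ : ℝ) * x ^ 2) = Real.sqrt (2 * π) := by
  have hb : (0 : ℝ) < 2⁻¹ := by norm_num
  have hint2 : Integrable (fun x : ℝ => x ^ 2 * Real.exp (-(2⁻¹ : ℝ) * x ^ 2)) := by
    have h := integrable_rpow_mul_exp_neg_mul_sq hb (s := 2) (by norm_num)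
    have h2 : ∀ x : ℝ, x ^ (2 : ℝ) = x ^ 2 := fun x => by
      rw [← Real.rpow_natCast x 2]; norm_num
    simpa only [h2] using h
  have hexp : Integrable (fun x : ℝ => Real.exp (-(2⁻¹ : ℝ) * x ^ 2)) :=
    integrable_exp_neg_mul_sq hb
  have hderiv : ∀ x : ℝ, HasDerivAt (fun x : ℝ => -x * Real.exp (-(2⁻¹ : ℝ) * x ^ 2))
      (x ^ 2 * Real.exp (-(2⁻¹ : ℝ) * x ^ 2) - Real.exp (-(2⁻¹ : ℝ) * x ^ 2)) x := by
    intro x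
    have h1 : HasDerivAt (fun x : ℝ => -(2⁻¹ : ℝ) * x ^ 2) (-(2⁻¹ : ℝ) * (2 * x ^ 1)) x :=
      (hasDerivAt_pow 2 x).const_mul _
    have h2 := h1.exp
    have h3 : HasDerivAt (fun x : ℝ => -x) (-1 : ℝ) x := (hasDerivAt_id x).neg
    have h4 := h3.mul h2
    refine h4.congr_deriv ?_
    ring_nf
  have hf : Integrable (fun x : ℝ => -x * Real.exp (-(2⁻¹ : ℝ) * x ^ 2)) := by
    simpa only [neg_mul, Pi.neg_def] using (integrable_mul_exp_neg_mul_sq hb).neg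
  have h0 : ∫ x : ℝ, (x ^ 2 * Real.exp (-(2⁻¹ : ℝ) * x ^ 2)
      - Real.exp (-(2⁻¹ : ℝ) * x ^ 2)) = 0 :=
    integral_eq_zero_of_hasDerivAt_of_integrable hderiv (hint2.sub hexp) hf
  rw [integral_sub hint2 hexp, sub_eq_zero] at h0
  rw [h0, integral_gaussian]
  norm_num [mul_comm]

lemma aux_lintegral_sq_gaussianReal :
    ∫⁻ x : ℝ, ENNReal.ofReal (x ^ 2) ∂(gaussianReal 0 1) = 1 := by
  rw [gaussianReal_of_var_ne_zero 0 one_ne_zero,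
    lintegral_withDensity_eq_lintegral_mul _ (measurable_gaussianPDF 0 1)
      (by exact (measurable_id.pow_const 2).ennreal_ofReal)]
  have hpdf : ∀ x : ℝ, gaussianPDFReal 0 1 x
      = (Real.sqrt (2 * π))⁻¹ * Real.exp (-(2⁻¹ : ℝ) * x ^ 2) := by
    intro x
    simp only [gaussianPDFReal, NNReal.coe_one, mul_one, sub_zero]
    congr 1
    ring_nf
  have heq : ∀ x : ℝ, (gaussianPDF 0 1 * fun x => ENNReal.ofReal (x ^ 2)) x
      = ENNReal.ofReal ((Real.sqrt (2 * π))⁻¹ * (x ^ 2 * Real.exp (-(2⁻¹ : ℝ) * x ^ 2))) := by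
    intro x
    simp only [Pi.mul_apply, gaussianPDF]
    rw [← ENNReal.ofReal_mul (gaussianPDFReal_nonneg 0 1 x)]
    congr 1
    rw [hpdf x]
    ring
  simp only [heq]
  have hint : Integrable (fun x : ℝ =>
      (Real.sqrt (2 * π))⁻¹ * (x ^ 2 * Real.exp (-(2⁻¹ : ℝ) * x ^ 2))) := by
    have hint2 : Integrable (fun x : ℝ => x ^ 2 * Real.exp (-(2⁻¹ : ℝ) * x ^ 2)) := by
      have h := integrable_rpow_mul_exp_neg_mul_sq (by norm_num : (0:ℝ) < 2⁻¹)
        (s := 2) (by norm_num)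
      have h2 : ∀ x : ℝ, x ^ (2 : ℝ) = x ^ 2 := fun x => by
        rw [← Real.rpow_natCast x 2]; norm_num
      simpa only [h2] using h
    exact hint2.const_mul _
  rw [← ofReal_integral_eq_lintegral_ofReal hint ?_]
  · rw [integral_const_mul, aux_integral_sq_gauss, inv_mul_cancel₀, ENNReal.ofReal_one]
    positivity
  · filter_upwards with x
    positivity

lemma aux_tsum_if_lt (m : ℕ) : ∑' n : ℕ, (if n < m then (1 : ℝ≥0∞) else 0) = m := by
  have h1 : ∑' n : ℕ, (if n < m then (1 : ℝ≥0∞) else 0)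
      = ∑ n ∈ Finset.range m, (if n < m then (1 : ℝ≥0∞) else 0) :=
    tsum_eq_sum (fun n hn => if_neg (by simpa using hn))
  rw [h1, Finset.sum_congr rfl (fun n hn => if_pos (Finset.mem_range.mp hn)),
    Finset.sum_const, Finset.card_range, nsmul_eq_mul, mul_one]

/-- Key comparison: for a nonneg function `Y` on a probability space,
`∑' n, μ {n+1 < Y} ≤ ∫⁻ Y ≤ 1 + ∑' n, μ {n+1 < Y}`. -/
lemma aux_tail_sum_bounds {μ : Measure ℝ} [IsProbabilityMeasure μ] {Y : ℝ → ℝ}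
    (hY : Measurable Y) (hY0 : ∀ x, 0 ≤ Y x) :
    (∑' n : ℕ, μ {x | (n : ℝ) + 1 < Y x}) ≤ ∫⁻ x, ENNReal.ofReal (Y x) ∂μ ∧
      (∫⁻ x, ENNReal.ofReal (Y x) ∂μ) ≤ 1 + ∑' n : ℕ, μ {x | (n : ℝ) + 1 < Y x} := by
  have hmeas : ∀ n : ℕ, MeasurableSet {x | (n : ℝ) + 1 < Y x} := fun n =>
    measurableSet_lt measurable_const hY
  have key : (∑' n : ℕ, μ {x | (n : ℝ) + 1 < Y x})
      = ∫⁻ x, ((⌈Y x - 1⌉₊ : ℕ) : ℝ≥0∞) ∂μ := by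
    have h1 : ∀ n : ℕ, μ {x | (n : ℝ) + 1 < Y x}
        = ∫⁻ x, Set.indicator {x | (n : ℝ) + 1 < Y x} (1 : ℝ → ℝ≥0∞) x ∂μ := fun n =>
      (lintegral_indicator_one (hmeas n)).symm
    simp_rw [h1]
    rw [← lintegral_tsum (fun n => ((measurable_one.indicator (hmeas n)).aemeasurable))]
    refine lintegral_congr fun x => ?_
    have hiff : ∀ n : ℕ, ((n : ℝ) + 1 < Y x ↔ n < ⌈Y x - 1⌉₊) := fun n => by
      rw [Nat.lt_ceil, lt_sub_iff_add_lt]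
    calc ∑' n : ℕ, Set.indicator {x | (n : ℝ) + 1 < Y x} (1 : ℝ → ℝ≥0∞) x
        = ∑' n : ℕ, (if n < ⌈Y x - 1⌉₊ then (1 : ℝ≥0∞) else 0) := by
          refine tsum_congr fun n => ?_
          simp only [Set.indicator_apply, Pi.one_apply, Set.mem_setOf_eq]
          exact if_congr (hiff n) rfl rfl
      _ = (⌈Y x - 1⌉₊ : ℝ≥0∞) := aux_tsum_if_lt _
  constructor
  · rw [key]
    refine lintegral_mono fun x => ?_
    have hle : ((⌈Y x - 1⌉₊ : ℕ) : ℝ) ≤ Y x := by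
      rcases le_or_gt (Y x) 1 with h | h
      · rw [Nat.ceil_eq_zero.2 (by linarith)]
        simpa using hY0 x
      · have := Nat.ceil_lt_add_one (a := Y x - 1) (by linarith)
        linarith
    calc ((⌈Y x - 1⌉₊ : ℕ) : ℝ≥0∞) = ENNReal.ofReal ((⌈Y x - 1⌉₊ : ℕ) : ℝ) := by
          simp
      _ ≤ ENNReal.ofReal (Y x) := ENNReal.ofReal_le_ofReal hle
  · rw [key]
    have hpt : ∀ x, ENNReal.ofReal (Y x) ≤ ((⌈Y x - 1⌉₊ : ℕ) : ℝ≥0∞) + 1 := by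
      intro x
      have hle : Y x ≤ ((⌈Y x - 1⌉₊ : ℕ) : ℝ) + 1 := by
        have := Nat.le_ceil (Y x - 1)
        linarith
      calc ENNReal.ofReal (Y x) ≤ ENNReal.ofReal (((⌈Y x - 1⌉₊ : ℕ) : ℝ) + 1) :=
            ENNReal.ofReal_le_ofReal hle
        _ = ((⌈Y x - 1⌉₊ : ℕ) : ℝ≥0∞) + 1 := by
            rw [ENNReal.ofReal_add (by positivity) zero_le_one]
            simp
    calc ∫⁻ x, ENNReal.ofReal (Y x) ∂μ
        ≤ ∫⁻ x, (((⌈Y x - 1⌉₊ : ℕ) : ℝ≥0∞) + 1) ∂μ := lintegral_mono hpt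
      _ = (∫⁻ x, ((⌈Y x - 1⌉₊ : ℕ) : ℝ≥0∞) ∂μ) + 1 := by
          rw [lintegral_add_right _ measurable_const]
          simp
      _ = 1 + ∫⁻ x, ((⌈Y x - 1⌉₊ : ℕ) : ℝ≥0∞) ∂μ := by rw [add_comm]

lemma aux_set_iff {a : ℝ} (ha : 0 < a) {r : ℝ} (hr : 0 ≤ r) (x : ℝ) :
    a * Real.sqrt r < |x| ↔ r < (x / a) ^ 2 := by
  have h2 : (x / a) ^ 2 = (|x| / a) ^ 2 := by
    rw [div_pow, div_pow, sq_abs]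
  rw [h2]
  rcases eq_or_ne x 0 with hx | hx
  · simp only [hx, abs_zero, zero_div]
    exact iff_of_false (not_lt.2 (by positivity)) (not_lt.2 (by simpa using hr))
  · have hx0 : 0 < |x| / a := div_pos (abs_pos.2 hx) ha
    rw [mul_comm, ← lt_div_iff₀ ha]
    exact Real.sqrt_lt' hx0

theorem stmt_8 {Ω : Type*} [MeasureSpace Ω] [IsProbabilityMeasure (ℙ : Measure Ω)]
    (N : Ω → ℝ) (hN : Measure.map N (ℙ : Measure Ω) = gaussianReal 0 1)
    (c : ℝ) (hc : 0 < c) :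
    Tendsto
      (fun ε : ℝ =>
        (c * ε) ^ 2 *
          ∑' n : ℕ, (ℙ {ω | c * ε * Real.sqrt ((n : ℝ) + 1) < |N ω|}).toReal)
      (𝓝[>] 0) (𝓝 1) := by
  have hNm : AEMeasurable N (ℙ : Measure Ω) := by
    by_contra h
    have := Measure.map_of_not_aemeasurable h
    rw [hN] at this
    have h1 : (gaussianReal 0 1) Set.univ = 1 := measure_univ
    rw [this] at h1
    simp at h1
  set μ : Measure ℝ := gaussianReal 0 1 with hμ
  -- main bounds for each ε > 0
  have main : ∀ ε : ℝ, 0 < ε →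
      1 - (c * ε) ^ 2 ≤ (c * ε) ^ 2 *
          ∑' n : ℕ, (ℙ {ω | c * ε * Real.sqrt ((n : ℝ) + 1) < |N ω|}).toReal ∧
      (c * ε) ^ 2 *
          ∑' n : ℕ, (ℙ {ω | c * ε * Real.sqrt ((n : ℝ) + 1) < |N ω|}).toReal ≤ 1 := by
    intro ε hε
    set a : ℝ := c * ε with ha_def
    have ha : 0 < a := mul_pos hc hε
    have hYmeas : Measurable (fun x : ℝ => (x / a) ^ 2) :=
      (measurable_id.div_const a).pow_const 2
    -- rewrite each probability
    have hset : ∀ n : ℕ, ℙ {ω | a * Real.sqrt ((n : ℝ) + 1) < |N ω|}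
        = μ {x | (n : ℝ) + 1 < (x / a) ^ 2} := by
      intro n
      have hs : MeasurableSet {x : ℝ | (n : ℝ) + 1 < (x / a) ^ 2} :=
        measurableSet_lt measurable_const hYmeas
      have h1 : {ω | a * Real.sqrt ((n : ℝ) + 1) < |N ω|}
          = N ⁻¹' {x | (n : ℝ) + 1 < (x / a) ^ 2} := by
        ext ω
        simp only [Set.mem_setOf_eq, Set.mem_preimage]
        exact aux_set_iff ha (by positivity) (N ω)
      rw [h1, ← Measure.map_apply_of_aemeasurable hNm hs, hN]
    -- value of the lintegral of Y
    have hE : ∫⁻ x, ENNReal.ofReal ((x / a) ^ 2) ∂μ = ENNReal.ofReal ((a ^ 2)⁻¹) := by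
      have heq : ∀ x : ℝ, ENNReal.ofReal ((x / a) ^ 2)
          = ENNReal.ofReal ((a ^ 2)⁻¹) * ENNReal.ofReal (x ^ 2) := by
        intro x
        rw [← ENNReal.ofReal_mul (by positivity)]
        congr 1
        field_simp
      simp_rw [heq]
      rw [lintegral_const_mul' _ _ ENNReal.ofReal_ne_top, hμ,
        aux_lintegral_sq_gaussianReal, mul_one]
    obtain ⟨hlow, hup⟩ := aux_tail_sum_bounds (μ := μ) hYmeas (fun x => by positivity)
    rw [hE] at hlow hup
    set S : ℝ≥0∞ := ∑' n : ℕ, μ {x | (n : ℝ) + 1 < (x / a) ^ 2} with hS_def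
    have hS_ne : S ≠ ⊤ := (lt_of_le_of_lt hlow ENNReal.ofReal_lt_top).ne
    have hsum_eq : ∑' n : ℕ, (ℙ {ω | a * Real.sqrt ((n : ℝ) + 1) < |N ω|}).toReal
        = S.toReal := by
      rw [← ENNReal.tsum_toReal_eq (fun n => measure_ne_top _ _)]
      congr 1
      exact tsum_congr hset
    rw [hsum_eq]
    have hS_le : S.toReal ≤ (a ^ 2)⁻¹ := by
      have := ENNReal.toReal_mono ENNReal.ofReal_ne_top hlow
      rwa [ENNReal.toReal_ofReal (by positivity)] at this
    have hS_ge : (a ^ 2)⁻¹ ≤ 1 + S.toReal := by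
      have h1 : (1 + S) ≠ ⊤ := by
        simp [hS_ne]
      have := ENNReal.toReal_mono h1 hup
      rwa [ENNReal.toReal_ofReal (by positivity), ENNReal.toReal_add ENNReal.one_ne_top hS_ne,
        ENNReal.toReal_one] at this
    have ha2 : (0 : ℝ) < a ^ 2 := by positivity
    constructor
    · nlinarith [mul_le_mul_of_nonneg_left hS_ge ha2.le,
        mul_inv_cancel₀ ha2.ne']
    · nlinarith [mul_le_mul_of_nonneg_left hS_le ha2.le,
        mul_inv_cancel₀ ha2.ne']
  -- squeeze
  have hg : Tendsto (fun ε : ℝ => 1 - (c * ε) ^ 2) (𝓝[>] 0) (𝓝 1) := by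
    have hcont : Continuous (fun ε : ℝ => 1 - (c * ε) ^ 2) := by fun_prop
    have := (hcont.tendsto 0).mono_left (nhdsWithin_le_nhds (s := Set.Ioi (0:ℝ)))
    simpa using this
  refine tendsto_of_tendsto_of_tendsto_of_le_of_le' hg tendsto_const_nhds ?_ ?_
  · filter_upwards [self_mem_nhdsWithin] with ε hε
    exact (main ε hε).1
  · filter_upwards [self_mem_nhdsWithin] with ε hε
    exact (main ε hε).2
end

section
/- Let a ∈ (1/2, 1), let c > 0, and let Z be a real random variable whose law is absolutely continuous (Z has a density) and satisfies E Z² < ∞. Then (cε)^{1/a} · Σ_{n≥1} P(|Z| > c ε n^a) converges to E|Z|^{1/a} as ε → 0⁺. -/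
open MeasureTheory ProbabilityTheory Filter Real Topology Set

lemma aux_layercake_tendsto {Ω : Type*} [MeasureSpace Ω] [IsProbabilityMeasure (ℙ : Measure Ω)]
    (Y : Ω → ℝ) (hYm : Measurable Y) (hY0 : ∀ ω, 0 ≤ Y ω)
    (hYint : Integrable Y (ℙ : Measure Ω)) :
    Tendsto (fun δ : ℝ => δ * ∑' n : ℕ, (ℙ {ω | δ * ((n : ℝ) + 1) < Y ω}).toReal)
      (𝓝[>] 0) (𝓝 (∫ ω, Y ω ∂(ℙ : Measure Ω))) := by
  set g : ℝ → ℝ := fun t => (ℙ {ω | t < Y ω}).toReal with hgdef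
  have hganti : Antitone g := fun s t hst =>
    ENNReal.toReal_mono (measure_ne_top _ _) (measure_mono fun ω h => lt_of_le_of_lt hst h)
  have hgm : Measurable g := hganti.measurable
  have hg0 : ∀ t, 0 ≤ g t := fun t => ENNReal.toReal_nonneg
  have hg1 : ∀ t, g t ≤ 1 := by
    intro t
    have hle : ℙ {ω | t < Y ω} ≤ 1 := prob_le_one
    have h := ENNReal.toReal_mono ENNReal.one_ne_top hle
    simpa using h
  have hI : ∫ ω, Y ω ∂(ℙ : Measure Ω) = ∫ t in Ioi (0:ℝ), g t :=
    hYint.integral_eq_integral_meas_lt (Filter.Eventually.of_forall hY0)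
  have key := lintegral_eq_lintegral_meas_lt (ℙ : Measure Ω)
      (Filter.Eventually.of_forall hY0) hYm.aemeasurable
  have hgint : IntegrableOn g (Ioi (0:ℝ)) := by
    refine ⟨hgm.aestronglyMeasurable.restrict, ?_⟩
    rw [hasFiniteIntegral_iff_norm]
    have : ∫⁻ t in Ioi (0:ℝ), ENNReal.ofReal ‖g t‖ = ∫⁻ t in Ioi (0:ℝ), ℙ {ω | t < Y ω} := by
      refine lintegral_congr fun t => ?_
      rw [Real.norm_of_nonneg (hg0 t)]
      exact ENNReal.ofReal_toReal (measure_ne_top _ _)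
    rw [this, ← key]
    exact hYint.lintegral_lt_top
  rw [hI]
  set I : ℝ := ∫ t in Ioi (0:ℝ), g t with hIdef
  show Tendsto (fun δ : ℝ => δ * ∑' n : ℕ, g (δ * ((n : ℝ) + 1))) (𝓝[>] 0) (𝓝 I)
  have hbounds : ∀ δ : ℝ, 0 < δ →
      I - δ ≤ δ * ∑' n : ℕ, g (δ * ((n : ℝ) + 1)) ∧
      δ * ∑' n : ℕ, g (δ * ((n : ℝ) + 1)) ≤ I := by
    intro δ hδ
    set aseq : ℕ → ℝ := fun k => δ * k with haseqdef
    have haseq_mono : ∀ k : ℕ, aseq k ≤ aseq (k + 1) := by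
      intro k
      have : (k : ℝ) ≤ (k : ℝ) + 1 := by linarith
      simpa [aseq] using mul_le_mul_of_nonneg_left (by push_cast; linarith) hδ.le
    have haseq_nonneg : ∀ k : ℕ, 0 ≤ aseq k := fun k => by positivity
    have haseq_succ : ∀ k : ℕ, aseq (k + 1) = δ * ((k : ℝ) + 1) := by
      intro k; simp only [haseqdef]; push_cast; ring
    have hIOc : ∀ x y : ℝ, 0 ≤ x → IntegrableOn g (Ioc x y) :=
      fun x y hx => hgint.mono_set (fun t ht => lt_of_le_of_lt hx ht.1)
    have hIntInt : ∀ x y : ℝ, 0 ≤ x → x ≤ y → IntervalIntegrable g volume x y := by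
      intro x y hx hxy
      rw [intervalIntegrable_iff, uIoc_of_le hxy]
      exact hIOc x y hx
    set f : ℕ → ℝ := fun n => δ * g (δ * ((n : ℝ) + 1)) with hfdef
    have hf0 : ∀ n, 0 ≤ f n := fun n => mul_nonneg hδ.le (hg0 _)
    have hvol : ∀ k : ℕ, (volume (Ioc (aseq k) (aseq (k + 1)))).toReal = δ := by
      intro k
      rw [Real.volume_Ioc, ENNReal.toReal_ofReal (by linarith [haseq_mono k])]
      simp only [haseqdef]; push_cast; ring
    have hA : ∀ n : ℕ, f n ≤ ∫ t in (aseq n)..(aseq (n + 1)), g t := by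
      intro n
      rw [intervalIntegral.integral_of_le (haseq_mono n)]
      have h := setIntegral_ge_of_const_le (μ := volume) measurableSet_Ioc
        (by rw [Real.volume_Ioc]; exact ENNReal.ofReal_ne_top)
        (fun t ht => hganti (le_of_le_of_eq ht.2 (haseq_succ n)))
        (hIOc _ _ (haseq_nonneg n))
      calc f n = g (δ * ((n : ℝ) + 1)) * (volume (Ioc (aseq n) (aseq (n + 1)))).toReal := by
            rw [hvol n]; ring
        _ ≤ ∫ t in Ioc (aseq n) (aseq (n + 1)), g t := by
          rw [measureReal_def, smul_eq_mul, mul_comm] at h; exact h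
    have hB : ∀ n : ℕ, (∫ t in (aseq (n + 1))..(aseq (n + 2)), g t) ≤ f n := by
      intro n
      rw [intervalIntegral.integral_of_le (haseq_mono (n + 1))]
      have h := setIntegral_mono_on (μ := volume) (s := Ioc (aseq (n + 1)) (aseq (n + 2)))
        (hIOc _ _ (haseq_nonneg (n + 1)))
        (MeasureTheory.integrableOn_const (by rw [Real.volume_Ioc]; exact ENNReal.ofReal_ne_top))
        measurableSet_Ioc
        (fun t ht => hganti (le_of_eq_of_le (haseq_succ n).symm ht.1.le))
      calc (∫ t in Ioc (aseq (n + 1)) (aseq (n + 2)), g t)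
          ≤ ∫ _ in Ioc (aseq (n + 1)) (aseq (n + 2)), g (δ * ((n : ℝ) + 1)) := h
        _ = f n := by rw [setIntegral_const, smul_eq_mul, measureReal_def, hvol (n + 1)]
    have hpartial_upper : ∀ N : ℕ, ∑ n ∈ Finset.range N, f n ≤ I := by
      intro N
      have hadj := intervalIntegral.sum_integral_adjacent_intervals
        (a := aseq) (n := N) (f := g) (μ := volume)
        (fun k _ => hIntInt _ _ (haseq_nonneg k) (haseq_mono k))
      calc ∑ n ∈ Finset.range N, f n ≤ ∑ n ∈ Finset.range N, ∫ t in (aseq n)..(aseq (n + 1)), g t :=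
            Finset.sum_le_sum fun n _ => hA n
        _ = ∫ t in (aseq 0)..(aseq N), g t := hadj
        _ ≤ I := by
            rw [show aseq 0 = 0 by simp [aseq],
              intervalIntegral.integral_of_le (haseq_nonneg N)]
            exact setIntegral_mono_set hgint
              (Filter.Eventually.of_forall fun t => hg0 t)
              (HasSubset.Subset.eventuallyLE Ioc_subset_Ioi_self)
    have hsum : Summable f := summable_of_sum_range_le hf0 hpartial_upper
    have htsum_eq : δ * ∑' n : ℕ, g (δ * ((n : ℝ) + 1)) = ∑' n, f n := (tsum_mul_left).symm
    constructor
    · -- lower bound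
      have hpartial_lower : ∀ N : ℕ, (∫ t in (aseq 1)..(aseq (N + 1)), g t) ≤ ∑' n, f n := by
        intro N
        have hadj := intervalIntegral.sum_integral_adjacent_intervals
          (a := fun k => aseq (k + 1)) (n := N) (f := g) (μ := volume)
          (fun k _ => hIntInt _ _ (haseq_nonneg (k + 1)) (haseq_mono (k + 1)))
        calc (∫ t in (aseq 1)..(aseq (N + 1)), g t)
            = ∑ n ∈ Finset.range N, ∫ t in (aseq (n + 1))..(aseq (n + 2)), g t := hadj.symm
          _ ≤ ∑ n ∈ Finset.range N, f n := Finset.sum_le_sum fun n _ => hB n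
          _ ≤ ∑' n, f n := Summable.sum_le_tsum _ (fun n _ => hf0 n) hsum
      have hIioi : IntegrableOn g (Ioi (aseq 1)) :=
        hgint.mono_set (fun t ht => lt_trans (by simpa [aseq] using hδ : (0:ℝ) < aseq 1) ht)
      have hblim : Tendsto (fun N : ℕ => aseq (N + 1)) atTop atTop := by
        have h1 : Tendsto (fun N : ℕ => ((N : ℝ) + 1)) atTop atTop :=
          tendsto_atTop_add_const_right _ 1 tendsto_natCast_atTop_atTop
        have := h1.const_mul_atTop hδ
        refine this.congr fun N => ?_
        rw [haseq_succ N]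
      have hlim := intervalIntegral_tendsto_integral_Ioi (aseq 1) hIioi hblim
      have h1 : (∫ t in Ioi (aseq 1), g t) ≤ ∑' n, f n :=
        le_of_tendsto hlim (Filter.Eventually.of_forall hpartial_lower)
      have hsplit : I = (∫ t in Ioc (0:ℝ) (aseq 1), g t) + ∫ t in Ioi (aseq 1), g t := by
        rw [hIdef, ← setIntegral_union Ioc_disjoint_Ioi_same measurableSet_Ioi
          (hIOc _ _ le_rfl) hIioi, Ioc_union_Ioi_eq_Ioi (haseq_nonneg 1)]
      have h3 : (∫ t in Ioc (0:ℝ) (aseq 1), g t) ≤ δ := by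
        have h := setIntegral_mono_on (μ := volume) (s := Ioc (0:ℝ) (aseq 1))
          (hIOc _ _ le_rfl)
          (MeasureTheory.integrableOn_const (by rw [Real.volume_Ioc]; exact ENNReal.ofReal_ne_top))
          measurableSet_Ioc (fun t _ => hg1 t)
        calc (∫ t in Ioc (0:ℝ) (aseq 1), g t) ≤ ∫ _ in Ioc (0:ℝ) (aseq 1), (1:ℝ) := h
          _ = δ := by
              rw [setIntegral_const, smul_eq_mul, mul_one, measureReal_def, Real.volume_Ioc,
                ENNReal.toReal_ofReal (by simpa using (haseq_nonneg 1))]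
              simp [aseq]
      rw [htsum_eq]
      linarith
    · rw [htsum_eq]
      exact Real.tsum_le_of_sum_range_le hf0 hpartial_upper
  have hlow : Tendsto (fun δ : ℝ => I - δ) (𝓝[>] 0) (𝓝 I) := by
    have : Tendsto (fun δ : ℝ => I - δ) (𝓝 0) (𝓝 (I - 0)) :=
      tendsto_const_nhds.sub tendsto_id
    simpa using this.mono_left nhdsWithin_le_nhds
  refine tendsto_of_tendsto_of_tendsto_of_le_of_le' hlow tendsto_const_nhds ?_ ?_
  · exact eventually_mem_nhdsWithin.mono fun δ hδ => (hbounds δ hδ).1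
  · exact eventually_mem_nhdsWithin.mono fun δ hδ => (hbounds δ hδ).2

theorem stmt_9 {Ω : Type*} [MeasureSpace Ω] [IsProbabilityMeasure (ℙ : Measure Ω)]
    (a : ℝ) (ha0 : 1 / 2 < a) (ha1 : a < 1) (c : ℝ) (hc : 0 < c)
    (Z : Ω → ℝ) (hZmeas : Measurable Z)
    (hZdens : (Measure.map Z (ℙ : Measure Ω)) ≪ (volume : Measure ℝ))
    (hZmom : Integrable (fun ω => (Z ω) ^ 2) (ℙ : Measure Ω)) :
    Tendsto
      (fun ε : ℝ =>
        (c * ε) ^ (1 / a) *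
          ∑' n : ℕ, (ℙ {ω | c * ε * ((n : ℝ) + 1) ^ a < |Z ω|}).toReal)
      (𝓝[>] 0) (𝓝 (∫ ω, |Z ω| ^ (1 / a) ∂(ℙ : Measure Ω))) := by
  have ha : 0 < a := by linarith
  have hpa : 0 < 1 / a := by positivity
  have hpa2 : 1 / a ≤ 2 := by rw [div_le_iff₀ ha]; linarith
  set Y : Ω → ℝ := fun ω => |Z ω| ^ (1 / a) with hYdef
  have hYm : Measurable Y := by
    have hcont : Continuous fun x : ℝ => x ^ (1 / a) := by
      rw [continuous_iff_continuousAt]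
      exact fun x => Real.continuousAt_rpow_const x (1 / a) (Or.inr hpa.le)
    exact hcont.measurable.comp hZmeas.abs
  have hY0 : ∀ ω, 0 ≤ Y ω := fun ω => Real.rpow_nonneg (abs_nonneg _) _
  have hYint : Integrable Y (ℙ : Measure Ω) := by
    refine Integrable.mono' ((integrable_const (1:ℝ)).add hZmom)
      hYm.aestronglyMeasurable (Filter.Eventually.of_forall fun ω => ?_)
    rw [Real.norm_of_nonneg (hY0 ω)]
    simp only [Pi.add_apply]
    rcases le_total (|Z ω|) 1 with h | h
    · have h1 : Y ω ≤ 1 := Real.rpow_le_one (abs_nonneg _) h hpa.le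
      nlinarith [sq_nonneg (Z ω)]
    · have h2 : Y ω ≤ |Z ω| ^ (2:ℝ) := Real.rpow_le_rpow_of_exponent_le h hpa2
      have h3 : |Z ω| ^ (2:ℝ) = Z ω ^ 2 := by
        rw [show (2:ℝ) = ((2:ℕ):ℝ) by norm_num, Real.rpow_natCast, sq_abs]
      rw [h3] at h2
      nlinarith
  have haux := aux_layercake_tendsto Y hYm hY0 hYint
  have h1 : Tendsto (fun ε : ℝ => c * ε) (𝓝[>] 0) (𝓝[>] 0) := by
    apply tendsto_nhdsWithin_of_tendsto_nhds_of_eventually_within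
    · have hcont : Continuous fun ε : ℝ => c * ε := continuous_const.mul continuous_id
      have h := hcont.tendsto 0
      rw [mul_zero] at h
      exact h.mono_left nhdsWithin_le_nhds
    · exact eventually_mem_nhdsWithin.mono fun ε hε => mul_pos hc hε
  have h2 : Tendsto (fun x : ℝ => x ^ (1 / a)) (𝓝[>] 0) (𝓝[>] 0) := by
    apply tendsto_nhdsWithin_of_tendsto_nhds_of_eventually_within
    · have hcont : ContinuousAt (fun x : ℝ => x ^ (1 / a)) 0 :=
        Real.continuousAt_rpow_const 0 (1 / a) (Or.inr hpa.le)
      have h := hcont.tendsto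
      rw [Real.zero_rpow (ne_of_gt hpa)] at h
      exact h.mono_left nhdsWithin_le_nhds
    · exact eventually_mem_nhdsWithin.mono fun x hx => Real.rpow_pos_of_pos hx _
  have hφ : Tendsto (fun ε : ℝ => (c * ε) ^ (1 / a)) (𝓝[>] 0) (𝓝[>] 0) := h2.comp h1
  have hcomp := haux.comp hφ
  refine Filter.Tendsto.congr' ?_ hcomp
  filter_upwards [eventually_mem_nhdsWithin] with ε (hε : ε ∈ Ioi (0:ℝ))
  have hk : 0 < c * ε := mul_pos hc hε
  simp only [Function.comp_apply]
  congr 1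
  refine tsum_congr fun n => ?_
  congr 2
  have hb : (0:ℝ) < (n : ℝ) + 1 := by positivity
  have he : (c * ε * ((n:ℝ) + 1) ^ a) ^ (1 / a) = (c * ε) ^ (1 / a) * ((n:ℝ) + 1) := by
    rw [Real.mul_rpow hk.le (Real.rpow_nonneg hb.le a), ← Real.rpow_mul hb.le,
      mul_one_div_cancel (ne_of_gt ha), Real.rpow_one]
  ext ω
  simp only [Set.mem_setOf_eq]
  rw [← he]
  exact Real.rpow_lt_rpow_iff (x := c * ε * ((n:ℝ) + 1) ^ a) (y := |Z ω|)
    (by positivity) (abs_nonneg _) hpa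
end

section
/- Let q ≥ 2 be an integer, 1 − 1/(2q) < H < 1, let c_{2,q,H} > 0 be the constant for which Z_n := V_n/(c_{2,q,H} n^{1−q(1−H)}) converges in L²(Ω) to a random variable Z with E Z² = 1. Then for every c > 0, (cε)^{1/(1−q(1−H))} · Σ_{n≥1} [ P(|Z_n| > c ε n^{1−q(1−H)}) − P(|Z| > c ε n^{1−q(1−H)}) ] converges to 0 as ε → 0⁺. -/
open MeasureTheory ProbabilityTheory Filter Real Topology
open scoped ENNReal NNReal

section AuxLemmas

lemma tsum_indicator_count (y : ℝ) :
    ∑' n : ℕ, (if (n : ℝ) + 1 < y then (1 : ℝ≥0∞) else 0) = (⌈y - 1⌉₊ : ℝ≥0∞) := by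
  rw [tsum_eq_sum (s := Finset.range ⌈y - 1⌉₊)
    (fun n hn => if_neg (by
      intro h
      exact hn (Finset.mem_range.2 (Nat.lt_ceil.2 (by linarith)))))]
  rw [Finset.sum_congr rfl (fun n hn => if_pos (by
    have := Nat.lt_ceil.1 (Finset.mem_range.1 hn); linarith))]
  simp

lemma rpow_base_anti {x y c : ℝ} (hx : 0 < x) (hxy : x ≤ y) (hc : c ≤ 0) :
    y ^ c ≤ x ^ c := by
  have hy0 : (0 : ℝ) < y := lt_of_lt_of_le hx hxy
  rw [show c = -(-c) by ring, Real.rpow_neg hx.le, Real.rpow_neg hy0.le]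
  exact inv_anti₀ (Real.rpow_pos_of_pos hx _)
    (Real.rpow_le_rpow hx.le hxy (by linarith))

lemma layer_bounds {Ω : Type*} [MeasureSpace Ω] [IsProbabilityMeasure (ℙ : Measure Ω)]
    (R : Ω → ℝ) (hR : AEMeasurable R ℙ) (hRnn : ∀ ω, 0 ≤ R ω)
    (β s : ℝ) (hβ : 0 < β) (hs : 0 < s)
    (hint : Integrable (fun ω => R ω ^ β⁻¹) ℙ) :
    Summable (fun n : ℕ => (ℙ {ω | s * ((n : ℝ) + 1) ^ β < R ω}).toReal) ∧
    (∑' n : ℕ, (ℙ {ω | s * ((n : ℝ) + 1) ^ β < R ω}).toReal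
        ≤ s ^ (-β⁻¹) * ∫ ω, R ω ^ β⁻¹) ∧
    (s ^ (-β⁻¹) * ∫ ω, R ω ^ β⁻¹
        ≤ (∑' n : ℕ, (ℙ {ω | s * ((n : ℝ) + 1) ^ β < R ω}).toReal) + 1) := by
  set Y : Ω → ℝ := fun ω => (R ω / s) ^ β⁻¹ with hY_def
  have hYm : AEMeasurable Y ℙ :=
    (Real.continuous_rpow_const (inv_nonneg.2 hβ.le)).measurable.comp_aemeasurable
      (hR.div_const s)
  have hYeq : Y = fun ω => R ω ^ β⁻¹ * (s ^ β⁻¹)⁻¹ := by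
    funext ω
    show (R ω / s) ^ β⁻¹ = _
    rw [Real.div_rpow (hRnn ω) hs.le, div_eq_mul_inv]
  have hYint : Integrable Y ℙ := by rw [hYeq]; exact hint.mul_const _
  have hYnn : ∀ ω, 0 ≤ Y ω := fun ω => Real.rpow_nonneg (div_nonneg (hRnn ω) hs.le) _
  have hIY : ∫ ω, Y ω = s ^ (-β⁻¹) * ∫ ω, R ω ^ β⁻¹ := by
    rw [hYeq, integral_mul_const, Real.rpow_neg hs.le, mul_comm]
  set Y' : Ω → ℝ := hYm.mk Y with hY'_def
  have hY'm : Measurable Y' := hYm.measurable_mk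
  have hYY' : Y =ᵐ[ℙ] Y' := hYm.ae_eq_mk
  have hAeq : ∀ n : ℕ, {ω | s * ((n : ℝ) + 1) ^ β < R ω} = {ω | (n : ℝ) + 1 < Y ω} := by
    intro n
    ext ω
    simp only [Set.mem_setOf_eq, hY_def]
    rw [Real.lt_rpow_inv_iff_of_pos (by positivity) (div_nonneg (hRnn ω) hs.le) hβ,
      lt_div_iff₀ hs, mul_comm]
  have hμ : ∀ n : ℕ, ℙ {ω | (n : ℝ) + 1 < Y ω} = ℙ {ω | (n : ℝ) + 1 < Y' ω} := by
    intro n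
    refine measure_congr (hYY'.mono fun ω h => ?_)
    change ((n : ℝ) + 1 < Y ω) = ((n : ℝ) + 1 < Y' ω)
    rw [h]
  set S : ℝ≥0∞ := ∑' n : ℕ, ℙ {ω | (n : ℝ) + 1 < Y' ω} with hS_def
  have h1 : S = ∫⁻ ω, (⌈Y' ω - 1⌉₊ : ℝ≥0∞) ∂ℙ := by
    have hms : ∀ n : ℕ, MeasurableSet {ω | (n : ℝ) + 1 < Y' ω} := fun n =>
      measurableSet_lt measurable_const hY'm
    rw [hS_def]
    calc ∑' n : ℕ, ℙ {ω | (n : ℝ) + 1 < Y' ω}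
        = ∑' n : ℕ, ∫⁻ ω, Set.indicator {ω | (n : ℝ) + 1 < Y' ω} 1 ω ∂ℙ :=
          tsum_congr fun n => (lintegral_indicator_one (hms n)).symm
      _ = ∫⁻ ω, ∑' n : ℕ, Set.indicator {ω | (n : ℝ) + 1 < Y' ω} 1 ω ∂ℙ :=
          (lintegral_tsum (fun n => (measurable_one.indicator (hms n)).aemeasurable)).symm
      _ = ∫⁻ ω, (⌈Y' ω - 1⌉₊ : ℝ≥0∞) ∂ℙ := by
          refine lintegral_congr fun ω => ?_
          simp_rw [Set.indicator_apply, Set.mem_setOf_eq, Pi.one_apply]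
          exact tsum_indicator_count (Y' ω)
  have h2a : ∀ ω, (⌈Y' ω - 1⌉₊ : ℝ≥0∞) ≤ ENNReal.ofReal (Y' ω) := by
    intro ω
    by_cases hy : 1 ≤ Y' ω
    · have h := Nat.ceil_lt_add_one (show (0:ℝ) ≤ Y' ω - 1 by linarith)
      rw [← ENNReal.ofReal_natCast]
      exact ENNReal.ofReal_le_ofReal (by linarith)
    · rw [Nat.ceil_eq_zero.2 (by linarith : Y' ω - 1 ≤ 0)]
      simp
  have h2b : ∀ ω, ENNReal.ofReal (Y' ω) ≤ (⌈Y' ω - 1⌉₊ : ℝ≥0∞) + 1 := by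
    intro ω
    have h := Nat.le_ceil (Y' ω - 1)
    calc ENNReal.ofReal (Y' ω) ≤ ENNReal.ofReal ((⌈Y' ω - 1⌉₊ : ℝ) + 1) :=
          ENNReal.ofReal_le_ofReal (by linarith)
      _ = (⌈Y' ω - 1⌉₊ : ℝ≥0∞) + 1 := by
          rw [ENNReal.ofReal_add (Nat.cast_nonneg _) zero_le_one, ENNReal.ofReal_natCast,
            ENNReal.ofReal_one]
  have h3 : ∫⁻ ω, ENNReal.ofReal (Y' ω) ∂ℙ = ENNReal.ofReal (∫ ω, Y ω) := by
    rw [MeasureTheory.ofReal_integral_eq_lintegral_ofReal hYint (ae_of_all _ hYnn)]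
    exact lintegral_congr_ae (hYY'.mono fun ω h => by dsimp only; rw [h])
  have hSle : S ≤ ENNReal.ofReal (∫ ω, Y ω) := by
    rw [h1, ← h3]; exact lintegral_mono h2a
  have hgeS : ENNReal.ofReal (∫ ω, Y ω) ≤ S + 1 := by
    rw [← h3, h1]
    calc ∫⁻ ω, ENNReal.ofReal (Y' ω) ∂ℙ ≤ ∫⁻ ω, ((⌈Y' ω - 1⌉₊ : ℝ≥0∞) + 1) ∂ℙ :=
          lintegral_mono h2b
      _ = (∫⁻ ω, (⌈Y' ω - 1⌉₊ : ℝ≥0∞) ∂ℙ) + 1 := by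
          rw [lintegral_add_right _ measurable_const, lintegral_one, measure_univ]
  have hS_ne : S ≠ ⊤ := (hSle.trans_lt ENNReal.ofReal_lt_top).ne
  have hsum_eq : (∑' n : ℕ, ℙ {ω | s * ((n : ℝ) + 1) ^ β < R ω}) = S := by
    rw [hS_def]
    exact tsum_congr fun n => by rw [hAeq n, hμ n]
  have htsum_toReal : ∑' n : ℕ, (ℙ {ω | s * ((n : ℝ) + 1) ^ β < R ω}).toReal = S.toReal := by
    rw [← ENNReal.tsum_toReal_eq (fun n => measure_ne_top _ _), hsum_eq]
  have hInn : 0 ≤ ∫ ω, Y ω := integral_nonneg hYnn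
  refine ⟨?_, ?_, ?_⟩
  · exact ENNReal.summable_toReal (by rw [hsum_eq]; exact hS_ne)
  · rw [htsum_toReal, ← hIY]
    calc S.toReal ≤ (ENNReal.ofReal (∫ ω, Y ω)).toReal :=
          ENNReal.toReal_mono ENNReal.ofReal_ne_top hSle
      _ = ∫ ω, Y ω := ENNReal.toReal_ofReal hInn
  · rw [htsum_toReal, ← hIY]
    calc ∫ ω, Y ω = (ENNReal.ofReal (∫ ω, Y ω)).toReal := (ENNReal.toReal_ofReal hInn).symm
      _ ≤ (S + 1).toReal := ENNReal.toReal_mono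
          (ENNReal.add_ne_top.2 ⟨hS_ne, ENNReal.one_ne_top⟩) hgeS
      _ = S.toReal + 1 := by rw [ENNReal.toReal_add hS_ne ENNReal.one_ne_top, ENNReal.toReal_one]

lemma rpow_tail_sum {p : ℝ} (hp : 1 < p) (K : ℕ) (hK : 1 ≤ K) :
    ∑' n : ℕ, ((n : ℝ) + K + 1) ^ (-p) ≤ (K : ℝ) ^ (1 - p) / (p - 1) := by
  have hK1 : (1 : ℝ) ≤ K := by exact_mod_cast hK
  set g : ℕ → ℝ := fun n => ((n : ℝ) + K) ^ (1 - p) / (p - 1) with hg_def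
  have hpos : ∀ n : ℕ, (0 : ℝ) < (n : ℝ) + K := fun n => by
    have : (0 : ℝ) ≤ (n : ℝ) := Nat.cast_nonneg n
    linarith
  have hanti : ∀ x y : ℝ, 1 ≤ x → x ≤ y → y ^ (1 - p) ≤ x ^ (1 - p) := by
    intro x y hx hxy
    have hx0 : (0 : ℝ) < x := by linarith
    have hy0 : (0 : ℝ) < y := by linarith
    rw [show (1 - p) = -(p - 1) by ring, Real.rpow_neg hx0.le, Real.rpow_neg hy0.le]
    exact inv_anti₀ (Real.rpow_pos_of_pos hx0 _)
      (Real.rpow_le_rpow hx0.le hxy (by linarith))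
  have hgnn : ∀ n : ℕ, 0 ≤ g n - g (n + 1) := by
    intro n
    rw [hg_def]
    dsimp only
    rw [div_sub_div_same]
    apply div_nonneg _ (by linarith)
    have h2 := hanti ((n : ℝ) + K) (((n + 1 : ℕ) : ℝ) + K) (by linarith)
      (by push_cast; linarith)
    linarith
  have hg0 : Tendsto g atTop (𝓝 0) := by
    have h1 : Tendsto (fun n : ℕ => (n : ℝ) + K) atTop atTop :=
      tendsto_atTop_add_const_right atTop _ tendsto_natCast_atTop_atTop
    have h2 : Tendsto (fun n : ℕ => ((n : ℝ) + K) ^ (1 - p)) atTop (𝓝 0) := by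
      have := (tendsto_rpow_neg_atTop (by linarith : (0:ℝ) < p - 1)).comp h1
      simpa [Function.comp_def, show -(p-1) = 1 - p by ring] using this
    simpa using h2.div_const (p - 1)
  have hHasSum : HasSum (fun n : ℕ => g n - g (n + 1)) (g 0) := by
    rw [hasSum_iff_tendsto_nat_of_nonneg hgnn]
    have : ∀ N : ℕ, ∑ i ∈ Finset.range N, (g i - g (i + 1)) = g 0 - g N := fun N =>
      Finset.sum_range_sub' g N
    simp_rw [this]
    simpa using tendsto_const_nhds.sub hg0
  have key : ∀ n : ℕ, ((n : ℝ) + K + 1) ^ (-p) ≤ g n - g (n + 1) := by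
    intro n
    set a : ℝ := (n : ℝ) + K with ha_def
    have ha1 : (1 : ℝ) ≤ a := by rw [ha_def]; have := (Nat.cast_nonneg n : (0:ℝ) ≤ n); linarith
    have ha0 : (0 : ℝ) < a := by linarith
    have hab : a < a + 1 := by linarith
    obtain ⟨x, hx, hslope⟩ := exists_hasDerivAt_eq_slope (fun x => x ^ (1 - p))
      (fun x => (1 - p) * x ^ (1 - p - 1)) hab
      (fun y hy => (Real.continuousAt_rpow_const y (1 - p)
        (Or.inl (ne_of_gt (lt_of_lt_of_le ha0 hy.1)))).continuousWithinAt)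
      (fun y hy => Real.hasDerivAt_rpow_const (Or.inl (ne_of_gt (lt_trans ha0 hy.1))))
    have hx0 : (0 : ℝ) < x := lt_trans ha0 hx.1
    have hxb : x ≤ a + 1 := le_of_lt hx.2
    have hslope' : (a + 1) ^ (1 - p) - a ^ (1 - p) = (1 - p) * x ^ (-p) := by
      rw [show (1 - p - 1) = -p by ring, show a + 1 - a = 1 by ring, div_one] at hslope
      linarith [hslope]
    have hxest : (a + 1) ^ (-p) ≤ x ^ (-p) := by
      rw [Real.rpow_neg hx0.le, Real.rpow_neg (by linarith : (0:ℝ) ≤ a + 1)]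
      exact inv_anti₀ (Real.rpow_pos_of_pos hx0 _)
        (Real.rpow_le_rpow hx0.le hxb (by linarith))
    have hcast : ((n + 1 : ℕ) : ℝ) + K = a + 1 := by rw [ha_def]; push_cast; ring
    have hgoal : (a + 1) ^ (-p) ≤ (a ^ (1 - p) - (a + 1) ^ (1 - p)) / (p - 1) := by
      rw [le_div_iff₀ (by linarith : (0:ℝ) < p - 1)]
      nlinarith [hslope', hxest]
    calc ((n : ℝ) + K + 1) ^ (-p) = (a + 1) ^ (-p) := by rw [ha_def]
      _ ≤ (a ^ (1 - p) - (a + 1) ^ (1 - p)) / (p - 1) := hgoal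
      _ = g n - g (n + 1) := by
          rw [hg_def]
          dsimp only
          rw [hcast, div_sub_div_same]
  have hsummable : Summable (fun n : ℕ => ((n : ℝ) + K + 1) ^ (-p)) :=
    Summable.of_nonneg_of_le (fun n => Real.rpow_nonneg (by positivity) _) key
      hHasSum.summable
  calc ∑' n : ℕ, ((n : ℝ) + K + 1) ^ (-p) ≤ ∑' n : ℕ, (g n - g (n + 1)) :=
        Summable.tsum_le_tsum key hsummable hHasSum.summable
    _ = g 0 := hHasSum.tsum_eq
    _ = (K : ℝ) ^ (1 - p) / (p - 1) := by rw [hg_def]; norm_num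

lemma final_bound {aT bT PmT PpT ppT : ℕ → ℝ} {sm sp spp : ℝ}
    (hkey : ∀ n, |aT n - bT n| ≤ (PmT n - PpT n) + ppT n)
    (hSm : Summable PmT) (hSp : Summable PpT) (hpp : Summable ppT)
    (hSmUB : ∑' n, PmT n ≤ sm) (hSpLB : sp ≤ ∑' n, PpT n) (hppUB : ∑' n, ppT n ≤ spp) :
    |∑' n, (aT n - bT n)| ≤ (sm - sp) + spp := by
  have hLsum : Summable (fun n => (PmT n - PpT n) + ppT n) := (hSm.sub hSp).add hpp
  have habs : Summable (fun n => |aT n - bT n|) :=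
    Summable.of_nonneg_of_le (fun n => abs_nonneg _) hkey hLsum
  have h1 : |∑' n, (aT n - bT n)| ≤ ∑' n, |aT n - bT n| := by
    have h := norm_tsum_le_tsum_norm (f := fun n => aT n - bT n)
      (by simpa [Real.norm_eq_abs] using habs)
    simpa [Real.norm_eq_abs] using h
  have h2 : ∑' n, |aT n - bT n| ≤ ∑' n, ((PmT n - PpT n) + ppT n) :=
    Summable.tsum_le_tsum hkey habs hLsum
  have h3 : ∑' n, ((PmT n - PpT n) + ppT n)
      = (∑' n, PmT n - ∑' n, PpT n) + ∑' n, ppT n := by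
    rw [Summable.tsum_add (hSm.sub hSp) hpp, Summable.tsum_sub hSm hSp]
  linarith

end AuxLemmas

/-- A (centered) fractional Brownian motion with Hurst parameter `H`:
all finite-dimensional distributions are centered Gaussian (equivalently, every finite
linear combination of values of the process is a centered real Gaussian), with covariance
`E (B s * B t) = (s^(2H) + t^(2H) - |t-s|^(2H)) / 2` for nonnegative times. -/
structure IsFractionalBrownianMotion {Ω : Type*} [MeasureSpace Ω]
    (B : ℝ → Ω → ℝ) (H : ℝ) : Prop where
  measurable : ∀ t : ℝ, Measurable (B t)
  gaussian_fdd : ∀ (n : ℕ) (t : Fin n → ℝ), (∀ i, 0 ≤ t i) → ∀ c : Fin n → ℝ,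
    ∃ v : NNReal,
      Measure.map (fun ω => ∑ i, c i * B (t i) ω) (ℙ : Measure Ω) = gaussianReal 0 v
  covariance : ∀ s t : ℝ, 0 ≤ s → 0 ≤ t →
    ∫ ω, B s ω * B t ω ∂(ℙ : Measure Ω)
      = (s ^ (2 * H) + t ^ (2 * H) - |t - s| ^ (2 * H)) / 2

/-- `V_n = ∑_{k=0}^{n-1} H_q (n^H (B_{(k+1)/n} - B_{k/n}))`, where `H_q` is the Hermite
polynomial of degree `q`. -/
noncomputable def hermiteVariation {Ω : Type*} [MeasureSpace Ω]
    (B : ℝ → Ω → ℝ) (H : ℝ) (q n : ℕ) (ω : Ω) : ℝ :=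
  ∑ k ∈ Finset.range n,
    Polynomial.aeval
      ((n : ℝ) ^ H * (B (((k : ℝ) + 1) / n) ω - B ((k : ℝ) / n) ω))
      (Polynomial.hermite q)
set_option maxHeartbeats 1000000 in
theorem stmt_11 {Ω : Type*} [MeasureSpace Ω] [IsProbabilityMeasure (ℙ : Measure Ω)]
    (q : ℕ) (hq : 2 ≤ q) (H : ℝ) (hH0 : 1 - 1 / (2 * q) < H) (hH1 : H < 1)
    (B : ℝ → Ω → ℝ) (hB : IsFractionalBrownianMotion B H)
    (c₂ : ℝ) (hc₂ : 0 < c₂) (Z : Ω → ℝ)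
    (hZvar : (∫ ω, (Z ω) ^ 2 ∂(ℙ : Measure Ω)) = 1)
    (hconv : Tendsto
      (fun n : ℕ => eLpNorm
        (fun ω => hermiteVariation B H q n ω / (c₂ * (n : ℝ) ^ (1 - q * (1 - H))) - Z ω)
        2 (ℙ : Measure Ω))
      atTop (𝓝 0))
    (c : ℝ) (hc : 0 < c) :
    Tendsto
      (fun ε : ℝ =>
        (c * ε) ^ (1 / (1 - q * (1 - H))) *
          ∑' n : ℕ,
            ((ℙ {ω | c * ε * ((n : ℝ) + 1) ^ (1 - q * (1 - H)) <
                |hermiteVariation B H q (n + 1) ω /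
                  (c₂ * ((n : ℝ) + 1) ^ (1 - q * (1 - H)))|}).toReal -
              (ℙ {ω | c * ε * ((n : ℝ) + 1) ^ (1 - q * (1 - H)) < |Z ω|}).toReal))
      (𝓝[>] 0) (𝓝 0) := by
  -- basic exponent facts
  have hq1 : (2 : ℝ) ≤ (q : ℝ) := by exact_mod_cast hq
  have hqpos : (0 : ℝ) < (q : ℝ) := by linarith
  set α : ℝ := 1 - (q : ℝ) * (1 - H) with hα_def
  have hαhalf : 1 / 2 < α := by
    have h1 : 1 - H < 1 / (2 * (q : ℝ)) := by linarith
    have h2 : (q : ℝ) * (1 - H) < (q : ℝ) * (1 / (2 * (q : ℝ))) :=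
      mul_lt_mul_of_pos_left h1 hqpos
    have h3 : (q : ℝ) * (1 / (2 * (q : ℝ))) = 1 / 2 := by field_simp
    rw [hα_def]; linarith
  have hαpos : 0 < α := by linarith
  have hαinvpos : 0 < α⁻¹ := by positivity
  have hαinv2 : α⁻¹ ≤ 2 := by rw [← one_div, div_le_iff₀ hαpos]; linarith
  have h2α : 1 < 2 * α := by linarith
  -- integrability facts about Z
  have hZ2int : Integrable (fun ω => Z ω ^ 2) ℙ := by
    by_contra hcon
    rw [integral_undef hcon] at hZvar
    norm_num at hZvar
  have hZabs : AEMeasurable (fun ω => |Z ω|) ℙ := by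
    have h1 : AEMeasurable (fun ω => Z ω ^ 2) ℙ := hZ2int.aemeasurable
    have h2 : AEMeasurable (fun ω => Real.sqrt (Z ω ^ 2)) ℙ :=
      Real.continuous_sqrt.measurable.comp_aemeasurable h1
    exact h2.congr (ae_of_all _ fun ω => Real.sqrt_sq_eq_abs (Z ω))
  have hZrint : Integrable (fun ω => |Z ω| ^ α⁻¹) ℙ := by
    have hm : AEStronglyMeasurable (fun ω => |Z ω| ^ α⁻¹) ℙ :=
      ((Real.continuous_rpow_const hαinvpos.le).measurable.comp_aemeasurable
        hZabs).aestronglyMeasurable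
    refine Integrable.mono' ((integrable_const (1 : ℝ)).add hZ2int) hm (ae_of_all _ fun ω => ?_)
    simp only [Pi.add_apply]
    rw [Real.norm_eq_abs, abs_of_nonneg (Real.rpow_nonneg (abs_nonneg _) _)]
    rcases le_or_gt (|Z ω|) 1 with h | h
    · have h1 : |Z ω| ^ α⁻¹ ≤ 1 := Real.rpow_le_one (abs_nonneg _) h hαinvpos.le
      nlinarith [sq_nonneg (Z ω)]
    · have h2 : |Z ω| ^ α⁻¹ ≤ |Z ω| ^ (2 : ℝ) :=
        Real.rpow_le_rpow_of_exponent_le h.le hαinv2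
      rw [show (2 : ℝ) = ((2 : ℕ) : ℝ) by norm_num, Real.rpow_natCast, sq_abs] at h2
      linarith
  obtain ⟨I, hI_def⟩ : ∃ I : ℝ, I = ∫ ω, |Z ω| ^ α⁻¹ := ⟨_, rfl⟩
  have hInn : 0 ≤ I := by
    rw [hI_def]
    exact integral_nonneg fun ω => Real.rpow_nonneg (abs_nonneg _) _
  -- the normalized variations and their eLpNorm convergence
  obtain ⟨W, hW_def⟩ : ∃ W : ℕ → Ω → ℝ,
      W = fun n ω => hermiteVariation B H q (n + 1) ω / (c₂ * ((n : ℝ) + 1) ^ α) := ⟨_, rfl⟩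
  have hWmeas : ∀ n, Measurable (W n) := by
    intro n
    rw [hW_def]
    apply Measurable.div_const
    apply Finset.measurable_sum
    intro k _
    exact (Polynomial.hermite q).continuous_aeval.measurable.comp
      (measurable_const.mul ((hB.measurable _).sub (hB.measurable _)))
  obtain ⟨g, hg_def⟩ : ∃ g : ℕ → Ω → ℝ, g = fun n ω => |W n ω| - |Z ω| := ⟨_, rfl⟩
  have hgmeas : ∀ n, AEMeasurable (g n) ℙ := by
    intro n
    rw [hg_def]
    exact ((hWmeas n).abs.aemeasurable).sub hZabs
  have hgbound : ∀ n, eLpNorm (g n) 2 ℙ ≤ eLpNorm (fun ω => W n ω - Z ω) 2 ℙ := by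
    intro n
    refine eLpNorm_mono fun ω => ?_
    simp only [hg_def]
    rw [Real.norm_eq_abs, Real.norm_eq_abs]
    exact abs_abs_sub_abs_le_abs_sub _ _
  have hconv' : Tendsto (fun n : ℕ => eLpNorm (fun ω => W n ω - Z ω) 2 ℙ) atTop (𝓝 0) := by
    refine (hconv.comp (tendsto_add_atTop_nat 1)).congr fun n => ?_
    simp only [Function.comp_apply, hW_def, Nat.cast_add, Nat.cast_one]
  -- start the limit argument
  rw [NormedAddCommGroup.tendsto_nhds_zero]
  intro η hη
  -- choose θ
  obtain ⟨θ, hθη, hθ0, hθ1⟩ : ∃ θ : ℝ,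
      I * ((1 - θ) ^ (-α⁻¹) - (1 + θ) ^ (-α⁻¹)) < η / 4 ∧ 0 < θ ∧ θ < 1 := by
    have hcont : ContinuousAt (fun θ : ℝ => I * ((1 - θ) ^ (-α⁻¹) - (1 + θ) ^ (-α⁻¹))) 0 := by
      apply ContinuousAt.mul continuousAt_const
      apply ContinuousAt.sub
      · exact ContinuousAt.rpow_const (continuousAt_const.sub continuousAt_id)
          (Or.inl (by norm_num))
      · exact ContinuousAt.rpow_const (continuousAt_const.add continuousAt_id)
          (Or.inl (by norm_num))
    have ht := hcont.tendsto
    rw [show I * ((1 - (0:ℝ)) ^ (-α⁻¹) - (1 + 0) ^ (-α⁻¹)) = 0 by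
      norm_num] at ht
    have hev := (ht.eventually_lt_const (show (0:ℝ) < η / 4 by linarith)).filter_mono
      (nhdsWithin_le_nhds (s := Set.Ioi (0:ℝ)))
    have hmem : Set.Ioo (0 : ℝ) 1 ∈ 𝓝[>] (0 : ℝ) :=
      Ioo_mem_nhdsGT_of_mem ⟨le_refl 0, one_pos⟩
    obtain ⟨θ, h1, h2⟩ := (hev.and (eventually_of_mem hmem fun x hx => hx)).exists
    exact ⟨θ, h1, h2.1, h2.2⟩
  -- choose δ
  obtain ⟨δ, hδη, hδ0⟩ : ∃ δ : ℝ,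
      (δ / θ) ^ α⁻¹ * (1 + 1 / (2 * α - 1)) < η / 4 ∧ 0 < δ := by
    have hcont : ContinuousAt (fun δ : ℝ => (δ / θ) ^ α⁻¹ * (1 + 1 / (2 * α - 1))) 0 := by
      apply ContinuousAt.mul _ continuousAt_const
      exact ContinuousAt.rpow_const (continuousAt_id.div_const θ) (Or.inr hαinvpos.le)
    have ht := hcont.tendsto
    rw [show ((0:ℝ) / θ) ^ α⁻¹ * (1 + 1 / (2 * α - 1)) = 0 by
      rw [zero_div, Real.zero_rpow (ne_of_gt hαinvpos), zero_mul]] at ht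
    have hev := (ht.eventually_lt_const (show (0:ℝ) < η / 4 by linarith)).filter_mono
      (nhdsWithin_le_nhds (s := Set.Ioi (0:ℝ)))
    obtain ⟨δ, h1, h2⟩ := (hev.and self_mem_nhdsWithin).exists
    exact ⟨δ, h1, h2⟩
  -- choose n₀
  obtain ⟨n₀, hn₀⟩ := eventually_atTop.1
    (hconv'.eventually_le_const (ENNReal.ofReal_pos.2 hδ0))
  -- eventual smallness in ε
  have hεsmall : ∀ᶠ ε in 𝓝[>] (0 : ℝ), (c * ε) ^ α⁻¹ * ((n₀ : ℝ) + 2) < η / 4 := by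
    have hcont : ContinuousAt (fun ε : ℝ => (c * ε) ^ α⁻¹ * ((n₀ : ℝ) + 2)) 0 := by
      apply ContinuousAt.mul _ continuousAt_const
      exact ContinuousAt.rpow_const (continuousAt_const.mul continuousAt_id)
        (Or.inr hαinvpos.le)
    have ht := hcont.tendsto
    rw [show (c * (0:ℝ)) ^ α⁻¹ * ((n₀ : ℝ) + 2) = 0 by
      rw [mul_zero, Real.zero_rpow (ne_of_gt hαinvpos), zero_mul]] at ht
    exact (ht.eventually_lt_const (show (0:ℝ) < η / 4 by linarith)).filter_mono
      (nhdsWithin_le_nhds (s := Set.Ioi (0:ℝ)))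
  filter_upwards [hεsmall, self_mem_nhdsWithin] with ε hεs hεpos
  rw [Set.mem_Ioi] at hεpos
  -- per-ε quantities
  have hcε : 0 < c * ε := by positivity
  have hθ0' : (0:ℝ) ≤ θ := hθ0.le
  have hθc : θ * c ≠ 0 := by positivity
  have hPnn : 0 ≤ (c * ε) ^ α⁻¹ := Real.rpow_nonneg hcε.le _
  have hXpos : ∀ n : ℕ, 0 < c * ε * ((n : ℝ) + 1) ^ α := by
    intro n
    have : (0:ℝ) < ((n : ℝ) + 1) ^ α := Real.rpow_pos_of_pos (by positivity) _
    positivity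
  -- layer bounds for |Z| at levels (1∓θ)(cε)
  obtain ⟨hSmSummable, hSmUB, -⟩ := layer_bounds (fun ω => |Z ω|) hZabs
    (fun ω => abs_nonneg _) α ((1 - θ) * (c * ε)) hαpos (by nlinarith) hZrint
  obtain ⟨hSpSummable, -, hSpLB⟩ := layer_bounds (fun ω => |Z ω|) hZabs
    (fun ω => abs_nonneg _) α ((1 + θ) * (c * ε)) hαpos (by nlinarith) hZrint
  rw [← hI_def] at hSmUB hSpLB
  -- toReal comparison helpers
  have htri : ∀ s t u : Set Ω, s ⊆ t ∪ u →
      (ℙ s).toReal ≤ (ℙ t).toReal + (ℙ u).toReal := by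
    intro s t u hsub
    have h1 : ℙ s ≤ ℙ t + ℙ u := (measure_mono hsub).trans (measure_union_le _ _)
    have h2 := ENNReal.toReal_mono
      (ENNReal.add_ne_top.2 ⟨measure_ne_top _ _, measure_ne_top _ _⟩) h1
    rwa [ENNReal.toReal_add (measure_ne_top _ _) (measure_ne_top _ _)] at h2
  have hmono : ∀ s t : Set Ω, s ⊆ t → (ℙ s).toReal ≤ (ℙ t).toReal := fun s t hsub =>
    ENNReal.toReal_mono (measure_ne_top _ _) (measure_mono hsub)
  -- the key comparison inequalities
  have key1 : ∀ n : ℕ,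
      (ℙ {ω | c * ε * ((n : ℝ) + 1) ^ α < |W n ω|}).toReal ≤
        (ℙ {ω | (1 - θ) * (c * ε) * ((n : ℝ) + 1) ^ α < |Z ω|}).toReal +
        (ℙ {ω | θ * (c * ε * ((n : ℝ) + 1) ^ α) ≤ |g n ω|}).toReal := by
    intro n
    refine htri _ _ _ fun ω hω => ?_
    rw [Set.mem_setOf_eq] at hω
    by_contra hcon
    simp only [Set.mem_union, Set.mem_setOf_eq, not_or, not_lt, not_le] at hcon
    obtain ⟨h1, h2⟩ := hcon
    have hg1 : g n ω = |W n ω| - |Z ω| := by simp only [hg_def]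
    have hg2 : g n ω ≤ |g n ω| := le_abs_self _
    have hrw : (1 - θ) * (c * ε) * ((n : ℝ) + 1) ^ α
        = c * ε * ((n : ℝ) + 1) ^ α - θ * (c * ε * ((n : ℝ) + 1) ^ α) := by ring
    linarith
  have key2 : ∀ n : ℕ,
      (ℙ {ω | (1 + θ) * (c * ε) * ((n : ℝ) + 1) ^ α < |Z ω|}).toReal ≤
        (ℙ {ω | c * ε * ((n : ℝ) + 1) ^ α < |W n ω|}).toReal +
        (ℙ {ω | θ * (c * ε * ((n : ℝ) + 1) ^ α) ≤ |g n ω|}).toReal := by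
    intro n
    refine htri _ _ _ fun ω hω => ?_
    rw [Set.mem_setOf_eq] at hω
    by_contra hcon
    simp only [Set.mem_union, Set.mem_setOf_eq, not_or, not_lt, not_le] at hcon
    obtain ⟨h1, h2⟩ := hcon
    have hg1 : g n ω = |W n ω| - |Z ω| := by simp only [hg_def]
    have hg2 : -(g n ω) ≤ |g n ω| := neg_le_abs _
    have hrw : (1 + θ) * (c * ε) * ((n : ℝ) + 1) ^ α
        = c * ε * ((n : ℝ) + 1) ^ α + θ * (c * ε * ((n : ℝ) + 1) ^ α) := by ring
    linarith
  have key3a : ∀ n : ℕ,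
      (ℙ {ω | c * ε * ((n : ℝ) + 1) ^ α < |Z ω|}).toReal ≤
        (ℙ {ω | (1 - θ) * (c * ε) * ((n : ℝ) + 1) ^ α < |Z ω|}).toReal := by
    intro n
    refine hmono _ _ fun ω hω => ?_
    rw [Set.mem_setOf_eq] at hω ⊢
    have h1 : 0 ≤ θ * (c * ε * ((n : ℝ) + 1) ^ α) := mul_nonneg hθ0' (hXpos n).le
    have hrw : (1 - θ) * (c * ε) * ((n : ℝ) + 1) ^ α
        = c * ε * ((n : ℝ) + 1) ^ α - θ * (c * ε * ((n : ℝ) + 1) ^ α) := by ring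
    linarith
  have key3b : ∀ n : ℕ,
      (ℙ {ω | (1 + θ) * (c * ε) * ((n : ℝ) + 1) ^ α < |Z ω|}).toReal ≤
        (ℙ {ω | c * ε * ((n : ℝ) + 1) ^ α < |Z ω|}).toReal := by
    intro n
    refine hmono _ _ fun ω hω => ?_
    rw [Set.mem_setOf_eq] at hω ⊢
    have h1 : 0 ≤ θ * (c * ε * ((n : ℝ) + 1) ^ α) := mul_nonneg hθ0' (hXpos n).le
    have hrw : (1 + θ) * (c * ε) * ((n : ℝ) + 1) ^ α
        = c * ε * ((n : ℝ) + 1) ^ α + θ * (c * ε * ((n : ℝ) + 1) ^ α) := by ring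
    linarith
  have keyabs : ∀ n : ℕ,
      |(ℙ {ω | c * ε * ((n : ℝ) + 1) ^ α < |W n ω|}).toReal -
          (ℙ {ω | c * ε * ((n : ℝ) + 1) ^ α < |Z ω|}).toReal| ≤
        ((ℙ {ω | (1 - θ) * (c * ε) * ((n : ℝ) + 1) ^ α < |Z ω|}).toReal -
          (ℙ {ω | (1 + θ) * (c * ε) * ((n : ℝ) + 1) ^ α < |Z ω|}).toReal) +
        (ℙ {ω | θ * (c * ε * ((n : ℝ) + 1) ^ α) ≤ |g n ω|}).toReal := by
    have habs_helper : ∀ A Bz Pm Pp Pq : ℝ, A ≤ Pm + Pq → Pp ≤ A + Pq →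
        Bz ≤ Pm → Pp ≤ Bz → |A - Bz| ≤ (Pm - Pp) + Pq := by
      intro A Bz Pm Pp Pq u1 u2 u3 u4
      rw [abs_sub_le_iff]
      constructor
      · linarith
      · linarith
    exact fun n => habs_helper _ _ _ _ _ (key1 n) (key2 n) (key3a n) (key3b n)
  -- constants for the Chebyshev part
  obtain ⟨D₀, hD₀_def⟩ : ∃ D₀ : ℝ, D₀ = δ / (θ * c) := ⟨_, rfl⟩
  have hD₀pos : 0 < D₀ := by rw [hD₀_def]; positivity
  obtain ⟨κ, hκ_def⟩ : ∃ κ : ℝ, κ = (D₀ / ε) ^ α⁻¹ := ⟨_, rfl⟩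
  have hκpos : 0 < κ := by rw [hκ_def]; positivity
  obtain ⟨M, hM_def⟩ : ∃ M : ℕ, M = max n₀ ⌈κ⌉₊ := ⟨_, rfl⟩
  have hM1 : 1 ≤ M := by
    rw [hM_def]; exact le_trans (Nat.ceil_pos.2 hκpos) (le_max_right _ _)
  have hMκ : κ ≤ (M : ℝ) := by
    rw [hM_def]
    exact (Nat.le_ceil κ).trans (by exact_mod_cast le_max_right n₀ ⌈κ⌉₊)
  have hMn₀ : n₀ ≤ M := by rw [hM_def]; exact le_max_left _ _
  have hMle : (M : ℝ) ≤ (n₀ : ℝ) + κ + 1 := by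
    have h1 : M ≤ n₀ + ⌈κ⌉₊ := by
      rw [hM_def]; exact max_le (Nat.le_add_right _ _) (Nat.le_add_left _ _)
    have h2 : (⌈κ⌉₊ : ℝ) < κ + 1 := Nat.ceil_lt_add_one hκpos.le
    have h3 : ((M : ℕ) : ℝ) ≤ (n₀ : ℝ) + (⌈κ⌉₊ : ℝ) := by exact_mod_cast h1
    linarith
  -- Chebyshev bound
  have hcheb : ∀ n : ℕ, n₀ ≤ n →
      (ℙ {ω | θ * (c * ε * ((n : ℝ) + 1) ^ α) ≤ |g n ω|}).toReal ≤
        D₀ ^ 2 * (ε⁻¹) ^ 2 * ((n : ℝ) + 1) ^ (-(2 * α)) := by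
    intro n hn
    have hNpos : (0:ℝ) < ((n : ℝ) + 1) ^ α := Real.rpow_pos_of_pos (by positivity) _
    have hτpos : 0 < θ * (c * ε * ((n : ℝ) + 1) ^ α) := mul_pos hθ0 (hXpos n)
    have hseteq : {ω | θ * (c * ε * ((n : ℝ) + 1) ^ α) ≤ |g n ω|}
        = {ω | ENNReal.ofReal (θ * (c * ε * ((n : ℝ) + 1) ^ α)) ≤ (‖g n ω‖₊ : ℝ≥0∞)} := by
      ext ω
      simp only [Set.mem_setOf_eq]
      rw [← enorm_eq_nnnorm, ← ofReal_norm, Real.norm_eq_abs]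
      exact Iff.symm (ENNReal.ofReal_le_ofReal_iff (abs_nonneg _))
    have h1 : ℙ {ω | θ * (c * ε * ((n : ℝ) + 1) ^ α) ≤ |g n ω|}
        ≤ (ENNReal.ofReal (θ * (c * ε * ((n : ℝ) + 1) ^ α)))⁻¹ ^ (2:ℝ)
          * (ENNReal.ofReal δ) ^ (2:ℝ) := by
      rw [hseteq]
      have h2 := meas_ge_le_mul_pow_eLpNorm_enorm (μ := ℙ) (p := 2) two_ne_zero
        ENNReal.ofNat_ne_top (hgmeas n).aestronglyMeasurable
        (ε := ENNReal.ofReal (θ * (c * ε * ((n : ℝ) + 1) ^ α)))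
        (ne_of_gt (ENNReal.ofReal_pos.2 hτpos)) (fun h => absurd h ENNReal.ofReal_ne_top)
      rw [show ((2:ℝ≥0∞)).toReal = (2:ℝ) by simp] at h2
      refine h2.trans ?_
      gcongr
      exact (hgbound n).trans (hn₀ n hn)
    have hRHSne : (ENNReal.ofReal (θ * (c * ε * ((n : ℝ) + 1) ^ α)))⁻¹ ^ (2:ℝ)
        * (ENNReal.ofReal δ) ^ (2:ℝ) ≠ ⊤ := by
      apply ENNReal.mul_ne_top
      · exact ENNReal.rpow_ne_top_of_nonneg (by norm_num)
          (ENNReal.inv_ne_top.2 (ne_of_gt (ENNReal.ofReal_pos.2 hτpos)))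
      · exact ENNReal.rpow_ne_top_of_nonneg (by norm_num) ENNReal.ofReal_ne_top
    have h3 := ENNReal.toReal_mono hRHSne h1
    rw [ENNReal.toReal_mul, ← ENNReal.toReal_rpow, ← ENNReal.toReal_rpow,
      ENNReal.toReal_inv, ENNReal.toReal_ofReal hτpos.le, ENNReal.toReal_ofReal hδ0.le] at h3
    refine h3.trans (le_of_eq ?_)
    rw [Real.rpow_two, Real.rpow_two]
    have hbb : ((n : ℝ) + 1) ^ (-(2 * α)) = ((((n : ℝ) + 1) ^ α) ^ (2:ℕ))⁻¹ := by
      rw [← Real.rpow_natCast (((n : ℝ) + 1) ^ α) 2, ← Real.rpow_mul (by positivity),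
        ← Real.rpow_neg (by positivity)]
      congr 1
      push_cast
      ring
    rw [hbb, hD₀_def]
    have hθne : θ ≠ 0 := hθ0.ne'
    have hcne : c ≠ 0 := hc.ne'
    have hεne : ε ≠ 0 := hεpos.ne'
    have hNne : ((n : ℝ) + 1) ^ α ≠ 0 := hNpos.ne'
    field_simp
  -- summability of the Chebyshev majorant, and of the p-sequence
  have hbase_summable : Summable (fun n : ℕ => ((n : ℝ) + 1) ^ (-(2 * α))) := by
    have h1 : Summable (fun n : ℕ => ((n : ℝ) ^ (2 * α))⁻¹) :=
      Real.summable_nat_rpow_inv.2 h2α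
    have h2 := (summable_nat_add_iff (f := fun n : ℕ => ((n : ℝ) ^ (2 * α))⁻¹) 1).2 h1
    refine h2.congr fun n => ?_
    push_cast
    rw [Real.rpow_neg (by positivity)]
  have hchebSummable : Summable (fun n : ℕ =>
      D₀ ^ 2 * (ε⁻¹) ^ 2 * ((n : ℝ) + 1) ^ (-(2 * α))) := by
    exact hbase_summable.mul_left (D₀ ^ 2 * (ε⁻¹) ^ 2)
  have hppSummable : Summable (fun n : ℕ =>
      (ℙ {ω | θ * (c * ε * ((n : ℝ) + 1) ^ α) ≤ |g n ω|}).toReal) := by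
    have hshift : Summable (fun n : ℕ =>
        (ℙ {ω | θ * (c * ε * (((n + n₀ : ℕ) : ℝ) + 1) ^ α) ≤ |g (n + n₀) ω|}).toReal) :=
      Summable.of_nonneg_of_le (fun n => ENNReal.toReal_nonneg)
        (fun n => hcheb (n + n₀) (Nat.le_add_left _ _))
        ((summable_nat_add_iff (f := fun n : ℕ =>
          D₀ ^ 2 * (ε⁻¹) ^ 2 * ((n : ℝ) + 1) ^ (-(2 * α))) n₀).2 hchebSummable)
    exact (summable_nat_add_iff (f := fun n : ℕ =>
      (ℙ {ω | θ * (c * ε * ((n : ℝ) + 1) ^ α) ≤ |g n ω|}).toReal) n₀).1 hshift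
  -- the p-sum bound
  have hppsum : ∑' n : ℕ,
      (ℙ {ω | θ * (c * ε * ((n : ℝ) + 1) ^ α) ≤ |g n ω|}).toReal
        ≤ (M : ℝ) + κ / (2 * α - 1) := by
    rw [← Summable.sum_add_tsum_nat_add M hppSummable]
    have hhead : ∑ i ∈ Finset.range M,
        (ℙ {ω | θ * (c * ε * ((i : ℝ) + 1) ^ α) ≤ |g i ω|}).toReal ≤ (M : ℝ) := by
      calc ∑ i ∈ Finset.range M,
          (ℙ {ω | θ * (c * ε * ((i : ℝ) + 1) ^ α) ≤ |g i ω|}).toReal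
          ≤ ∑ _i ∈ Finset.range M, (1:ℝ) :=
            Finset.sum_le_sum (fun i _ => by
              have h1 : ℙ {ω | θ * (c * ε * ((i : ℝ) + 1) ^ α) ≤ |g i ω|} ≤ 1 :=
                prob_le_one
              exact le_trans (ENNReal.toReal_mono ENNReal.one_ne_top h1) (by norm_num))
        _ = (M : ℝ) := by simp
    have htail : ∑' n : ℕ,
        (ℙ {ω | θ * (c * ε * (((n + M : ℕ) : ℝ) + 1) ^ α) ≤ |g (n + M) ω|}).toReal
          ≤ κ / (2 * α - 1) := by
      have hb1 : ∑' n : ℕ,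
          (ℙ {ω | θ * (c * ε * (((n + M : ℕ) : ℝ) + 1) ^ α) ≤ |g (n + M) ω|}).toReal
            ≤ ∑' n : ℕ, D₀ ^ 2 * (ε⁻¹) ^ 2 * (((n + M : ℕ) : ℝ) + 1) ^ (-(2 * α)) :=
        Summable.tsum_le_tsum (fun n => hcheb (n + M) (le_trans hMn₀ (Nat.le_add_left _ _)))
          ((summable_nat_add_iff (f := fun n : ℕ =>
            (ℙ {ω | θ * (c * ε * ((n : ℝ) + 1) ^ α) ≤ |g n ω|}).toReal) M).2 hppSummable)
          ((summable_nat_add_iff (f := fun n : ℕ =>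
            D₀ ^ 2 * (ε⁻¹) ^ 2 * ((n : ℝ) + 1) ^ (-(2 * α))) M).2 hchebSummable)
      have hb2 : ∑' n : ℕ, D₀ ^ 2 * (ε⁻¹) ^ 2 * (((n + M : ℕ) : ℝ) + 1) ^ (-(2 * α))
          = D₀ ^ 2 * (ε⁻¹) ^ 2 * ∑' n : ℕ, ((n : ℝ) + (M : ℝ) + 1) ^ (-(2 * α)) := by
        rw [← tsum_mul_left]
        exact tsum_congr fun n => by push_cast; ring_nf
      have hb3 := rpow_tail_sum h2α M hM1
      have hb4 : (M : ℝ) ^ (1 - 2 * α) ≤ κ ^ (1 - 2 * α) :=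
        rpow_base_anti hκpos hMκ (by linarith)
      have hu : (0:ℝ) < D₀ / ε := by positivity
      have hid : D₀ ^ 2 * (ε⁻¹) ^ 2 * κ ^ (1 - 2 * α) = κ := by
        have h1 : D₀ ^ 2 * (ε⁻¹) ^ 2 = (D₀ / ε) ^ (2:ℕ) := by
          rw [div_pow, div_eq_mul_inv, ← inv_pow]
        rw [h1, hκ_def, ← Real.rpow_natCast (D₀ / ε) 2, ← Real.rpow_mul hu.le,
          ← Real.rpow_add hu]
        congr 1
        push_cast
        field_simp
        ring
      have hDnn : (0:ℝ) ≤ D₀ ^ 2 * (ε⁻¹) ^ 2 := by positivity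
      calc ∑' n : ℕ,
          (ℙ {ω | θ * (c * ε * (((n + M : ℕ) : ℝ) + 1) ^ α) ≤ |g (n + M) ω|}).toReal
          ≤ D₀ ^ 2 * (ε⁻¹) ^ 2 * ∑' n : ℕ, ((n : ℝ) + (M : ℝ) + 1) ^ (-(2 * α)) := by
            rw [← hb2]; exact hb1
        _ ≤ D₀ ^ 2 * (ε⁻¹) ^ 2 * ((M : ℝ) ^ (1 - 2 * α) / (2 * α - 1)) :=
            mul_le_mul_of_nonneg_left hb3 hDnn
        _ ≤ D₀ ^ 2 * (ε⁻¹) ^ 2 * (κ ^ (1 - 2 * α) / (2 * α - 1)) :=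
            mul_le_mul_of_nonneg_left
              ((div_le_div_iff_of_pos_right (by linarith : (0:ℝ) < 2 * α - 1)).2 hb4) hDnn
        _ = κ / (2 * α - 1) := by rw [← mul_div_assoc, hid]
    linarith
  -- combine everything
  have hT : |∑' n : ℕ,
      ((ℙ {ω | c * ε * ((n : ℝ) + 1) ^ α < |W n ω|}).toReal -
        (ℙ {ω | c * ε * ((n : ℝ) + 1) ^ α < |Z ω|}).toReal)| ≤
      ((((1 - θ) * (c * ε)) ^ (-α⁻¹) * I - ((((1 + θ) * (c * ε)) ^ (-α⁻¹) * I) - 1))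
        + ((M : ℝ) + κ / (2 * α - 1))) :=
    final_bound keyabs hSmSummable hSpSummable hppSummable hSmUB
      (by linarith [hSpLB]) hppsum
  -- product identities
  have hcε1 : (c * ε) ^ α⁻¹ * (c * ε) ^ (-α⁻¹) = 1 := by
    rw [← Real.rpow_add hcε]
    simp
  have e1 : (c * ε) ^ α⁻¹ * ((1 - θ) * (c * ε)) ^ (-α⁻¹) = (1 - θ) ^ (-α⁻¹) := by
    rw [Real.mul_rpow (by linarith : (0:ℝ) ≤ 1 - θ) hcε.le]
    calc (c * ε) ^ α⁻¹ * ((1 - θ) ^ (-α⁻¹) * (c * ε) ^ (-α⁻¹))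
        = (1 - θ) ^ (-α⁻¹) * ((c * ε) ^ α⁻¹ * (c * ε) ^ (-α⁻¹)) := by ring
      _ = (1 - θ) ^ (-α⁻¹) := by rw [hcε1, mul_one]
  have e2 : (c * ε) ^ α⁻¹ * ((1 + θ) * (c * ε)) ^ (-α⁻¹) = (1 + θ) ^ (-α⁻¹) := by
    rw [Real.mul_rpow (by linarith : (0:ℝ) ≤ 1 + θ) hcε.le]
    calc (c * ε) ^ α⁻¹ * ((1 + θ) ^ (-α⁻¹) * (c * ε) ^ (-α⁻¹))
        = (1 + θ) ^ (-α⁻¹) * ((c * ε) ^ α⁻¹ * (c * ε) ^ (-α⁻¹)) := by ring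
      _ = (1 + θ) ^ (-α⁻¹) := by rw [hcε1, mul_one]
  have e3 : (c * ε) ^ α⁻¹ * κ = (δ / θ) ^ α⁻¹ := by
    rw [hκ_def, hD₀_def, ← Real.mul_rpow hcε.le (by positivity)]
    congr 1
    field_simp
  -- rewrite the goal
  have hsets : ∀ n : ℕ,
      {ω | c * ε * ((n : ℝ) + 1) ^ α <
          |hermiteVariation B H q (n + 1) ω / (c₂ * ((n : ℝ) + 1) ^ α)|}
        = {ω | c * ε * ((n : ℝ) + 1) ^ α < |W n ω|} := by
    intro n
    rw [hW_def]
  simp only [hsets]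
  rw [Real.norm_eq_abs, abs_mul, abs_of_nonneg (by positivity : (0:ℝ) ≤ (c * ε) ^ (1 / α)),
    one_div]
  have hfinal := mul_le_mul_of_nonneg_left hT hPnn
  have hexpand : (c * ε) ^ α⁻¹ *
      ((((1 - θ) * (c * ε)) ^ (-α⁻¹) * I - ((((1 + θ) * (c * ε)) ^ (-α⁻¹) * I) - 1))
        + ((M : ℝ) + κ / (2 * α - 1)))
      = ((c * ε) ^ α⁻¹ * ((1 - θ) * (c * ε)) ^ (-α⁻¹)) * I
        - ((c * ε) ^ α⁻¹ * ((1 + θ) * (c * ε)) ^ (-α⁻¹)) * I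
        + (c * ε) ^ α⁻¹ + (c * ε) ^ α⁻¹ * (M : ℝ)
        + ((c * ε) ^ α⁻¹ * κ) * (1 / (2 * α - 1)) := by ring
  rw [hexpand, e1, e2, e3] at hfinal
  have hPM : (c * ε) ^ α⁻¹ * (M : ℝ) ≤ (c * ε) ^ α⁻¹ * ((n₀ : ℝ) + κ + 1) :=
    mul_le_mul_of_nonneg_left hMle hPnn
  have hexp2 : (c * ε) ^ α⁻¹ * ((n₀ : ℝ) + κ + 1)
      = (c * ε) ^ α⁻¹ * ((n₀ : ℝ) + 2) + ((c * ε) ^ α⁻¹ * κ) - (c * ε) ^ α⁻¹ := by ring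
  rw [hexp2, e3] at hPM
  have hexp3 : (1 - θ) ^ (-α⁻¹) * I - (1 + θ) ^ (-α⁻¹) * I
      = I * ((1 - θ) ^ (-α⁻¹) - (1 + θ) ^ (-α⁻¹)) := by ring
  have hexp4 : (δ / θ) ^ α⁻¹ * (1 + 1 / (2 * α - 1))
      = (δ / θ) ^ α⁻¹ + (δ / θ) ^ α⁻¹ * (1 / (2 * α - 1)) := by ring
  refine lt_of_le_of_lt hfinal ?_
  linarith [hθη, hδη, hεs, hexp3, hexp4, hPM]
end

section
/- Let H ∈ (0,1), let (B_t)_{t≥0} be a fractional Brownian motion with Hurst parameter H, and let N be a standard normal random variable. Then ε^{1/H} · Σ_{n≥1} P(|B_n| > ε n^{2H}) converges to E|N|^{1/H} as ε → 0⁺. -/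
open MeasureTheory ProbabilityTheory Filter Real Topology
open Set
open scoped ENNReal NNReal

lemma aux_integrable_abs_rpow_mul_exp {p : ℝ} (hp : 0 ≤ p) :
    Integrable (fun x : ℝ => |x| ^ p * rexp (-x ^ 2 / 2)) := by
  have hmeas : Measurable fun x : ℝ => |x| ^ p * rexp (-x ^ 2 / 2) :=
    (measurable_abs.pow measurable_const).mul
      (((measurable_id.pow_const 2).neg.div_const 2).exp)
  have hint : Integrable (fun x : ℝ => rexp (p ^ 2) * rexp (-(4⁻¹ : ℝ) * x ^ 2)) :=
    (integrable_exp_neg_mul_sq (by norm_num : (0:ℝ) < 4⁻¹)).const_mul _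
  refine hint.mono' hmeas.aestronglyMeasurable (ae_of_all _ fun x => ?_)
  have h0 : 0 ≤ |x| ^ p * rexp (-x ^ 2 / 2) := by positivity
  rw [Real.norm_of_nonneg h0]
  have h1 : |x| ^ p ≤ rexp (|x| * p) := by
    calc |x| ^ p ≤ (rexp |x|) ^ p :=
          Real.rpow_le_rpow (abs_nonneg x) (by linarith [Real.add_one_le_exp |x|]) hp
    _ = rexp (|x| * p) := by rw [← Real.exp_one_rpow |x|, ← Real.rpow_mul
          (le_of_lt (Real.exp_pos 1)), Real.exp_one_rpow]
  have h2 : |x| * p ≤ x ^ 2 / 4 + p ^ 2 := by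
    nlinarith [sq_nonneg (|x| / 2 - p), sq_abs x]
  calc |x| ^ p * rexp (-x ^ 2 / 2) ≤ rexp (|x| * p) * rexp (-x ^ 2 / 2) := by
        apply mul_le_mul_of_nonneg_right h1 (le_of_lt (Real.exp_pos _))
  _ ≤ rexp (x ^ 2 / 4 + p ^ 2) * rexp (-x ^ 2 / 2) := by
        apply mul_le_mul_of_nonneg_right (Real.exp_le_exp.2 h2) (le_of_lt (Real.exp_pos _))
  _ = rexp (p ^ 2) * rexp (-(4⁻¹ : ℝ) * x ^ 2) := by
        rw [← Real.exp_add, ← Real.exp_add]; ring_nf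

lemma aux_integrable_sq_exp : Integrable (fun x : ℝ => x ^ 2 * rexp (-x ^ 2 / 2)) := by
  have := aux_integrable_abs_rpow_mul_exp (p := 2) (by norm_num)
  refine this.congr (ae_of_all _ fun x => ?_)
  simp only [Real.rpow_two, sq_abs]

lemma aux_hasDerivAt (x : ℝ) :
    HasDerivAt (fun x : ℝ => -x * rexp (-x ^ 2 / 2))
      (x ^ 2 * rexp (-x ^ 2 / 2) - rexp (-x ^ 2 / 2)) x := by
  have h1 : HasDerivAt (fun x : ℝ => -x ^ 2 / 2) (-(2 * x) / 2) x := by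
    have := ((hasDerivAt_pow 2 x).neg.div_const 2)
    simpa using this
  have h1' : HasDerivAt (fun x : ℝ => -x ^ 2 / 2) (-x) x := by
    convert h1 using 1; ring
  have h2 := h1'.exp
  have h3 := ((hasDerivAt_id x).neg.mul h2)
  refine HasDerivAt.congr_deriv h3 ?_
  simp only [Pi.neg_apply, id_eq]
  ring

lemma aux_tendsto_atTop : Tendsto (fun x : ℝ => -x * rexp (-x ^ 2 / 2)) atTop (𝓝 0) := by
  have h : Tendsto (fun x : ℝ => x * rexp (-x ^ 2 / 2)) atTop (𝓝 0) := by
    have hO := (rpow_mul_exp_neg_mul_sq_isLittleO_exp_neg (by norm_num : (0:ℝ) < 2⁻¹) 1).isBigO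
    have h2 : Tendsto (fun x : ℝ => rexp (-(1 / 2) * x)) atTop (𝓝 0) := by
      have hb : Tendsto (fun x : ℝ => -(1 / 2) * x) atTop atBot :=
        tendsto_id.const_mul_atTop_of_neg (by norm_num)
      exact tendsto_exp_atBot.comp hb
    have h3 := hO.trans_tendsto h2
    refine h3.congr' (Eventually.of_forall fun x => ?_)
    rw [Real.rpow_one]
    congr 1
    ring
  simpa using h.neg

lemma aux_tendsto_atBot : Tendsto (fun x : ℝ => -x * rexp (-x ^ 2 / 2)) atBot (𝓝 0) := by
  have h := (aux_tendsto_atTop.comp tendsto_neg_atBot_atTop).neg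
  rw [neg_zero] at h
  refine h.congr fun x => ?_
  simp [Function.comp]

lemma aux_integral_sq_exp : ∫ x : ℝ, x ^ 2 * rexp (-x ^ 2 / 2) = Real.sqrt (2 * π) := by
  have hgauss : Integrable (fun x : ℝ => rexp (-x ^ 2 / 2)) := by
    have := integrable_exp_neg_mul_sq (by norm_num : (0:ℝ) < 2⁻¹)
    refine this.congr (ae_of_all _ fun x => ?_); ring_nf
  have hf' : Integrable (fun x : ℝ => x ^ 2 * rexp (-x ^ 2 / 2) - rexp (-x ^ 2 / 2)) :=
    aux_integrable_sq_exp.sub hgauss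
  have htop : ∫ x in Ioi (0:ℝ), (x ^ 2 * rexp (-x ^ 2 / 2) - rexp (-x ^ 2 / 2)) = 0 := by
    have := integral_Ioi_of_hasDerivAt_of_tendsto' (a := 0)
      (f := fun x : ℝ => -x * rexp (-x ^ 2 / 2))
      (fun x _ => aux_hasDerivAt x) hf'.integrableOn aux_tendsto_atTop
    simpa using this
  have hbot : ∫ x in Iic (0:ℝ), (x ^ 2 * rexp (-x ^ 2 / 2) - rexp (-x ^ 2 / 2)) = 0 := by
    have := integral_Iic_of_hasDerivAt_of_tendsto' (a := 0)
      (f := fun x : ℝ => -x * rexp (-x ^ 2 / 2))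
      (fun x _ => aux_hasDerivAt x) hf'.integrableOn aux_tendsto_atBot
    simpa using this
  have hsplit := intervalIntegral.integral_Iic_add_Ioi (b := (0:ℝ)) (μ := volume)
    hf'.integrableOn hf'.integrableOn
  have hzero : ∫ x : ℝ, (x ^ 2 * rexp (-x ^ 2 / 2) - rexp (-x ^ 2 / 2)) = 0 := by
    rw [← hsplit, htop, hbot]; ring
  have heq : ∫ x : ℝ, x ^ 2 * rexp (-x ^ 2 / 2) = ∫ x : ℝ, rexp (-x ^ 2 / 2) := by
    have := integral_sub aux_integrable_sq_exp hgauss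
    rw [hzero] at this
    linarith [this]
  rw [heq]
  have h5 : ∫ x : ℝ, rexp (-x ^ 2 / 2) = ∫ x : ℝ, rexp (-2⁻¹ * x ^ 2) := by
    congr 1; ext x; ring_nf
  rw [h5, integral_gaussian]
  congr 1
  ring

lemma aux_pdf_one (x : ℝ) :
    gaussianPDFReal 0 1 x = (Real.sqrt (2 * π))⁻¹ * rexp (-x ^ 2 / 2) := by
  simp [gaussianPDFReal]

lemma aux_integral_gaussianReal_one (f : ℝ → ℝ) :
    ∫ x, f x ∂(gaussianReal 0 1) = ∫ x, f x * gaussianPDFReal 0 1 x := by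
  rw [gaussianReal_of_var_ne_zero 0 one_ne_zero]
  have h : (volume : Measure ℝ).withDensity (gaussianPDF 0 1)
      = (volume : Measure ℝ).withDensity (fun x => ((gaussianPDFReal 0 1 x).toNNReal : ℝ≥0∞)) := by
    rfl
  rw [h, integral_withDensity_eq_integral_smul (measurable_gaussianPDFReal 0 1).real_toNNReal f]
  congr 1
  ext x
  rw [NNReal.smul_def, smul_eq_mul, Real.coe_toNNReal _ (gaussianPDFReal_nonneg 0 1 x), mul_comm]

lemma aux_sq_gaussianReal_one : ∫ x, x ^ 2 ∂(gaussianReal 0 1) = 1 := by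
  rw [aux_integral_gaussianReal_one]
  have h : ∀ x : ℝ, x ^ 2 * gaussianPDFReal 0 1 x
      = (Real.sqrt (2 * π))⁻¹ * (x ^ 2 * rexp (-x ^ 2 / 2)) := by
    intro x; rw [aux_pdf_one]; ring
  simp_rw [h]
  rw [integral_const_mul, aux_integral_sq_exp, inv_mul_cancel₀]
  positivity

lemma aux_sq_gaussianReal (v : ℝ≥0) : ∫ x, x ^ 2 ∂(gaussianReal 0 v) = v := by
  by_cases hv : v = 0
  · simp [hv]
  have hmap : Measure.map (fun x => Real.sqrt v * x) (gaussianReal 0 1) = gaussianReal 0 v := by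
    have := gaussianReal_map_const_mul (μ := 0) (v := 1) (Real.sqrt v)
    rw [this, mul_zero]
    congr 1
    ext
    simp [Real.sq_sqrt v.coe_nonneg]
  rw [← hmap, integral_map (f := fun x : ℝ => x ^ 2) (measurable_const_mul _).aemeasurable
    (measurable_id.pow_const 2).aestronglyMeasurable]
  have h2 : ∀ x : ℝ, (Real.sqrt v * x) ^ 2 = (v : ℝ) * x ^ 2 := by
    intro x; rw [mul_pow, Real.sq_sqrt v.coe_nonneg]
  simp_rw [h2]
  rw [integral_const_mul, aux_sq_gaussianReal_one, mul_one]

lemma aux_integrable_rpow_gaussianReal {p : ℝ} (hp : 0 ≤ p) :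
    Integrable (fun x : ℝ => |x| ^ p) (gaussianReal 0 1) := by
  rw [gaussianReal_of_var_ne_zero 0 one_ne_zero,
    integrable_withDensity_iff (measurable_gaussianPDF 0 1)
      (ae_of_all _ fun x => ENNReal.ofReal_lt_top)]
  have h : ∀ x : ℝ, |x| ^ p * (gaussianPDF 0 1 x).toReal
      = (Real.sqrt (2 * π))⁻¹ * (|x| ^ p * rexp (-x ^ 2 / 2)) := by
    intro x
    rw [gaussianPDF, ENNReal.toReal_ofReal (gaussianPDFReal_nonneg 0 1 x), aux_pdf_one]
    ring
  simp_rw [h]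
  exact (aux_integrable_abs_rpow_mul_exp hp).const_mul _

lemma aux_tail_sum_tendsto {Ω : Type*} [MeasureSpace Ω] [IsProbabilityMeasure (ℙ : Measure Ω)]
    {X : Ω → ℝ} (hXm : AEMeasurable X ℙ) (hX0 : ∀ ω, 0 ≤ X ω) (hXi : Integrable X ℙ) :
    Tendsto (fun δ : ℝ => δ * ∑' n : ℕ, (ℙ {ω | δ * ((n : ℝ) + 1) < X ω}).toReal)
      (𝓝[>] 0) (𝓝 (∫ ω, X ω ∂(ℙ : Measure Ω))) := by
  set T : ℝ → ℝ≥0∞ := fun t => ℙ {ω | t < X ω} with hT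
  have hTanti : Antitone T := fun s t hst => measure_mono (fun ω h => lt_of_le_of_lt hst h)
  have hTm : Measurable T := hTanti.measurable
  have hL : ∫⁻ ω, ENNReal.ofReal (X ω) ∂ℙ = ∫⁻ t in Ioi 0, T t :=
    lintegral_eq_lintegral_meas_lt ℙ (ae_of_all _ hX0) hXm
  have hLfin : ∫⁻ t in Ioi (0:ℝ), T t ≠ ∞ := by
    rw [← hL]; exact hXi.lintegral_lt_top.ne
  have hLtoReal : (∫⁻ t in Ioi (0:ℝ), T t).toReal = ∫ ω, X ω ∂ℙ := by
    rw [← hL, ← ofReal_integral_eq_lintegral_ofReal hXi (ae_of_all _ hX0),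
      ENNReal.toReal_ofReal (integral_nonneg hX0)]
  -- key bounds for each δ > 0
  have key : ∀ δ : ℝ, 0 < δ →
      (∫ ω, X ω ∂ℙ) - δ ≤ δ * ∑' n : ℕ, (ℙ {ω | δ * ((n : ℝ) + 1) < X ω}).toReal ∧
      δ * ∑' n : ℕ, (ℙ {ω | δ * ((n : ℝ) + 1) < X ω}).toReal ≤ ∫ ω, X ω ∂ℙ := by
    intro δ hδ
    have hunion : Ioi (0:ℝ) = ⋃ n : ℕ, Ioc (δ * n) (δ * ((n : ℝ) + 1)) := by
      ext x
      simp only [mem_Ioi, mem_iUnion, mem_Ioc]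
      constructor
      · intro hx
        have hm1 : 1 ≤ ⌈x / δ⌉₊ := Nat.one_le_ceil_iff.2 (div_pos hx hδ)
        refine ⟨⌈x / δ⌉₊ - 1, ?_, ?_⟩
        · have h1 : ((⌈x / δ⌉₊ : ℝ)) < x / δ + 1 := Nat.ceil_lt_add_one (by positivity)
          have h2 : ((⌈x / δ⌉₊ - 1 : ℕ) : ℝ) = (⌈x / δ⌉₊ : ℝ) - 1 := by
            push_cast [Nat.cast_sub hm1]; ring
          rw [h2]
          rw [mul_comm, ← lt_div_iff₀ hδ]
          linarith
        · have h3 : x / δ ≤ (⌈x / δ⌉₊ : ℝ) := Nat.le_ceil _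
          have h2 : ((⌈x / δ⌉₊ - 1 : ℕ) : ℝ) + 1 = (⌈x / δ⌉₊ : ℝ) := by
            push_cast [Nat.cast_sub hm1]; ring
          rw [h2, mul_comm, ← div_le_iff₀ hδ]
          exact h3
      · rintro ⟨n, h1, h2⟩
        exact lt_of_le_of_lt (by positivity) h1
    have hdisj : Pairwise (Function.onFun Disjoint fun n : ℕ => Ioc (δ * n) (δ * ((n : ℝ) + 1))) := by
      intro m n hmn
      rcases hmn.lt_or_gt with h | h
      · refine Set.Ioc_disjoint_Ioc.2 ?_
        have : δ * ((m : ℝ) + 1) ≤ δ * n := by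
          have : ((m : ℝ) + 1) ≤ n := by exact_mod_cast Nat.succ_le_of_lt h
          nlinarith
        exact le_trans (min_le_left _ _) (le_trans this (le_max_right _ _))
      · refine Set.Ioc_disjoint_Ioc.2 ?_
        have : δ * ((n : ℝ) + 1) ≤ δ * m := by
          have : ((n : ℝ) + 1) ≤ m := by exact_mod_cast Nat.succ_le_of_lt h
          nlinarith
        exact le_trans (min_le_right _ _) (le_trans this (le_max_left _ _))
    have hsum : ∫⁻ t in Ioi (0:ℝ), T t
        = ∑' n : ℕ, ∫⁻ t in Ioc (δ * n) (δ * ((n : ℝ) + 1)), T t := by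
      rw [hunion, lintegral_iUnion (fun n => measurableSet_Ioc) hdisj]
    have hvol : ∀ n : ℕ, volume (Ioc (δ * n) (δ * ((n : ℝ) + 1))) = ENNReal.ofReal δ := by
      intro n; rw [Real.volume_Ioc]; congr 1; ring
    have hub : ∀ n : ℕ, ∫⁻ t in Ioc (δ * n) (δ * ((n : ℝ) + 1)), T t
        ≤ ENNReal.ofReal δ * T (δ * n) := by
      intro n
      calc ∫⁻ t in Ioc (δ * n) (δ * ((n : ℝ) + 1)), T t
          ≤ ∫⁻ _ in Ioc (δ * n) (δ * ((n : ℝ) + 1)), T (δ * n) :=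
            setLIntegral_mono measurable_const (fun t ht => hTanti ht.1.le)
        _ = ENNReal.ofReal δ * T (δ * n) := by
            rw [setLIntegral_const, hvol n, mul_comm]
    have hlb : ∀ n : ℕ, ENNReal.ofReal δ * T (δ * ((n : ℝ) + 1))
        ≤ ∫⁻ t in Ioc (δ * n) (δ * ((n : ℝ) + 1)), T t := by
      intro n
      calc ENNReal.ofReal δ * T (δ * ((n : ℝ) + 1))
          = ∫⁻ _ in Ioc (δ * n) (δ * ((n : ℝ) + 1)), T (δ * ((n : ℝ) + 1)) := by
            rw [setLIntegral_const, hvol n, mul_comm]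
        _ ≤ ∫⁻ t in Ioc (δ * n) (δ * ((n : ℝ) + 1)), T t :=
            setLIntegral_mono hTm (fun t ht => hTanti ht.2)
    set A : ℝ≥0∞ := ∑' n : ℕ, T (δ * ((n : ℝ) + 1)) with hA
    have low : ENNReal.ofReal δ * A ≤ ∫⁻ t in Ioi (0:ℝ), T t := by
      rw [hsum, ← ENNReal.tsum_mul_left]
      exact ENNReal.tsum_le_tsum hlb
    have up : ∫⁻ t in Ioi (0:ℝ), T t ≤ ENNReal.ofReal δ + ENNReal.ofReal δ * A := by
      rw [hsum]
      have s1 : ∑' n : ℕ, ∫⁻ t in Ioc (δ * n) (δ * ((n : ℝ) + 1)), T t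
          ≤ ∑' n : ℕ, ENNReal.ofReal δ * T (δ * n) := ENNReal.tsum_le_tsum hub
      have s2 : ∑' n : ℕ, ENNReal.ofReal δ * T (δ * (n : ℕ))
          = ENNReal.ofReal δ * T (δ * ((0:ℕ) : ℝ))
            + ∑' n : ℕ, ENNReal.ofReal δ * T (δ * ((n + 1 : ℕ) : ℝ)) :=
        tsum_eq_zero_add' ENNReal.summable
      have s3 : ∑' n : ℕ, ENNReal.ofReal δ * T (δ * ((n + 1 : ℕ) : ℝ))
          = ENNReal.ofReal δ * A := by
        rw [hA, ← ENNReal.tsum_mul_left]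
        apply tsum_congr
        intro n
        push_cast
        ring_nf
      have s4 : ENNReal.ofReal δ * T (δ * ((0:ℕ) : ℝ)) ≤ ENNReal.ofReal δ := by
        calc ENNReal.ofReal δ * T (δ * ((0:ℕ) : ℝ)) ≤ ENNReal.ofReal δ * 1 :=
              mul_le_mul_right prob_le_one _
          _ = ENNReal.ofReal δ := mul_one _
      calc ∑' n : ℕ, ∫⁻ t in Ioc (δ * n) (δ * ((n : ℝ) + 1)), T t
          ≤ ∑' n : ℕ, ENNReal.ofReal δ * T (δ * n) := s1
        _ = ENNReal.ofReal δ * T (δ * ((0:ℕ) : ℝ)) + ENNReal.ofReal δ * A := by rw [s2, s3]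
        _ ≤ ENNReal.ofReal δ + ENNReal.ofReal δ * A := add_le_add s4 le_rfl
    have hAfin : A ≠ ∞ := by
      have h1 : ENNReal.ofReal δ * A ≠ ∞ := ne_top_of_le_ne_top hLfin low
      exact (ENNReal.lt_top_of_mul_ne_top_right h1
        (by simp [ENNReal.ofReal_eq_zero, not_le, hδ])).ne
    have hSrepr : δ * ∑' n : ℕ, (ℙ {ω | δ * ((n : ℝ) + 1) < X ω}).toReal
        = (ENNReal.ofReal δ * A).toReal := by
      rw [ENNReal.toReal_mul, ENNReal.toReal_ofReal hδ.le, hA,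
        ENNReal.tsum_toReal_eq (fun n => measure_ne_top _ _)]
    constructor
    · rw [hSrepr]
      have := ENNReal.toReal_mono (by
          exact ENNReal.add_ne_top.2 ⟨ENNReal.ofReal_ne_top, ENNReal.mul_ne_top ENNReal.ofReal_ne_top hAfin⟩) up
      rw [ENNReal.toReal_add ENNReal.ofReal_ne_top
        (ENNReal.mul_ne_top ENNReal.ofReal_ne_top hAfin), ENNReal.toReal_ofReal hδ.le,
        hLtoReal] at this
      linarith
    · rw [hSrepr]
      have := ENNReal.toReal_mono hLfin low
      rwa [hLtoReal] at this
  refine tendsto_of_tendsto_of_tendsto_of_le_of_le'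
    (g := fun δ : ℝ => (∫ ω, X ω ∂ℙ) - δ) (h := fun _ : ℝ => ∫ ω, X ω ∂ℙ)
    ?_ tendsto_const_nhds ?_ ?_
  · have : Tendsto (fun δ : ℝ => (∫ ω, X ω ∂ℙ) - δ) (𝓝 0) (𝓝 ((∫ ω, X ω ∂ℙ) - 0)) :=
      (continuous_const.sub continuous_id).tendsto 0
    rw [sub_zero] at this
    exact this.mono_left nhdsWithin_le_nhds
  · exact eventually_nhdsWithin_of_forall (fun δ hδ => (key δ hδ).1)
  · exact eventually_nhdsWithin_of_forall (fun δ hδ => (key δ hδ).2)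

lemma aux_term_eq {Ω : Type*} [MeasureSpace Ω] [IsProbabilityMeasure (ℙ : Measure Ω)]
    {H : ℝ} (hH0 : 0 < H) {B : ℝ → Ω → ℝ} (hB : IsFractionalBrownianMotion B H)
    {N : Ω → ℝ} (hN : Measure.map N (ℙ : Measure Ω) = gaussianReal 0 1)
    {ε : ℝ} (hε : 0 < ε) (n : ℕ) :
    ℙ {ω | ε * ((n : ℝ) + 1) ^ (2 * H) < |B ((n : ℝ) + 1) ω|}
      = ℙ {ω | ε ^ (1 / H) * ((n : ℝ) + 1) < |N ω| ^ (1 / H)} := by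
  set t : ℝ := (n : ℝ) + 1 with htdef
  have ht : 0 < t := by positivity
  -- distribution of B t
  obtain ⟨v, hv⟩ := hB.gaussian_fdd 1 (fun _ => t) (fun _ => ht.le) (fun _ => 1)
  simp only [Fin.sum_univ_one, one_mul] at hv
  -- second moment identifies v
  have hcov := hB.covariance t t ht.le ht.le
  have hzero : |t - t| ^ (2 * H) = (0:ℝ) := by
    rw [sub_self, abs_zero, Real.zero_rpow (by positivity)]
  have hBB : ∫ ω, B t ω * B t ω ∂(ℙ : Measure Ω) = t ^ (2 * H) := by
    rw [hcov, hzero]; ring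
  have hmapint : ∫ x, x ^ 2 ∂(Measure.map (fun ω => B t ω) (ℙ : Measure Ω))
      = ∫ ω, (B t ω) ^ 2 ∂(ℙ : Measure Ω) :=
    integral_map (f := fun x : ℝ => x ^ 2) (hB.measurable t).aemeasurable
      (measurable_id.pow_const 2).aestronglyMeasurable
  have hveq : (v : ℝ) = t ^ (2 * H) := by
    rw [← aux_sq_gaussianReal v, ← hv, hmapint, ← hBB]
    congr 1
    ext ω
    ring
  set σ : ℝ := t ^ H with hσdef
  have hσ : 0 < σ := Real.rpow_pos_of_pos ht H
  have hσ2 : σ ^ 2 = t ^ (2 * H) := by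
    rw [hσdef, ← Real.rpow_natCast (t ^ H) 2, ← Real.rpow_mul ht.le]
    norm_num
    ring_nf
  have hmapσ : Measure.map (fun x => σ * x) (gaussianReal 0 1) = gaussianReal 0 v := by
    have h := gaussianReal_map_const_mul (μ := 0) (v := 1) σ
    have hvnn : (NNReal.mk (σ ^ 2) (sq_nonneg σ) * 1 : ℝ≥0) = v := by
      apply NNReal.coe_injective
      push_cast
      rw [hveq, ← hσ2]
      ring
    rw [mul_zero] at h; rw [← hvnn]
    exact h
  have hset : ∀ a : ℝ, MeasurableSet {x : ℝ | a < |x|} := fun a =>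
    measurableSet_lt measurable_const measurable_abs
  have hNm : AEMeasurable N (ℙ : Measure Ω) :=
    aemeasurable_of_map_neZero (by rw [hN]; infer_instance)
  have hpre : (fun x : ℝ => σ * x) ⁻¹' {x : ℝ | ε * t ^ (2 * H) < |x|}
      = {x : ℝ | ε * t ^ H < |x|} := by
    ext x
    simp only [Set.mem_preimage, Set.mem_setOf_eq, abs_mul, abs_of_pos hσ]
    have h2H : ε * t ^ (2 * H) = σ * (ε * t ^ H) := by
      rw [hσdef, show (2:ℝ) * H = H + H by ring, Real.rpow_add ht]
      ring
    rw [h2H, mul_lt_mul_iff_right₀ hσ]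
  have step1 : ℙ {ω | ε * t ^ (2 * H) < |B t ω|}
      = gaussianReal 0 1 {x : ℝ | ε * t ^ H < |x|} := by
    have e1 : {ω | ε * t ^ (2 * H) < |B t ω|}
        = (fun ω => B t ω) ⁻¹' {x : ℝ | ε * t ^ (2 * H) < |x|} := rfl
    rw [e1, ← Measure.map_apply (hB.measurable t) (hset _), hv, ← hmapσ,
      Measure.map_apply (measurable_const_mul σ) (hset _), hpre]
  have step2 : gaussianReal 0 1 {x : ℝ | ε * t ^ H < |x|}
      = ℙ {ω | ε * t ^ H < |N ω|} := by
    rw [← hN, Measure.map_apply_of_aemeasurable hNm (hset _)]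
    rfl
  have hb : 0 < ε * t ^ H := by positivity
  have step3 : {ω | ε * t ^ H < |N ω|}
      = {ω | ε ^ (1 / H) * t < |N ω| ^ (1 / H)} := by
    ext ω
    simp only [Set.mem_setOf_eq]
    rw [← Real.rpow_lt_rpow_iff hb.le (abs_nonneg _) (by positivity : (0:ℝ) < 1 / H)]
    rw [Real.mul_rpow hε.le (Real.rpow_nonneg ht.le H), ← Real.rpow_mul ht.le,
      mul_one_div_cancel hH0.ne', Real.rpow_one]
  rw [step1, step2, step3]


theorem stmt_15 {Ω : Type*} [MeasureSpace Ω] [IsProbabilityMeasure (ℙ : Measure Ω)]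
    (H : ℝ) (hH0 : 0 < H) (hH1 : H < 1)
    (B : ℝ → Ω → ℝ) (hB : IsFractionalBrownianMotion B H)
    (N : Ω → ℝ) (hN : Measure.map N (ℙ : Measure Ω) = gaussianReal 0 1) :
    Tendsto
      (fun ε : ℝ =>
        ε ^ (1 / H) *
          ∑' n : ℕ,
            (ℙ {ω | ε * ((n : ℝ) + 1) ^ (2 * H) < |B ((n : ℝ) + 1) ω|}).toReal)
      (𝓝[>] 0) (𝓝 (∫ ω, |N ω| ^ (1 / H) ∂(ℙ : Measure Ω))) := by
  have hNm : AEMeasurable N (ℙ : Measure Ω) :=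
    aemeasurable_of_map_neZero (by rw [hN]; infer_instance)
  set X : Ω → ℝ := fun ω => |N ω| ^ (1 / H) with hXdef
  have hg : Measurable fun y : ℝ => |y| ^ (1 / H) := measurable_abs.pow measurable_const
  have hXm : AEMeasurable X (ℙ : Measure Ω) := hg.comp_aemeasurable hNm
  have hX0 : ∀ ω, 0 ≤ X ω := fun ω => Real.rpow_nonneg (abs_nonneg _) _
  have hXi : Integrable X (ℙ : Measure Ω) := by
    have h1 : Integrable (fun x : ℝ => |x| ^ (1 / H)) (Measure.map N (ℙ : Measure Ω)) := by
      rw [hN]; exact aux_integrable_rpow_gaussianReal (by positivity)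
    exact (integrable_map_measure hg.aestronglyMeasurable hNm).1 h1
  have hmain := aux_tail_sum_tendsto hXm hX0 hXi
  have hcomp : Tendsto (fun ε : ℝ => ε ^ (1 / H)) (𝓝[>] 0) (𝓝[>] 0) := by
    rw [tendsto_nhdsWithin_iff]
    constructor
    · have h := (Real.continuousAt_rpow_const 0 (1 / H) (Or.inr (by positivity))).tendsto
      rw [Real.zero_rpow (by positivity : (1:ℝ)/H ≠ 0)] at h
      exact h.mono_left nhdsWithin_le_nhds
    · exact eventually_nhdsWithin_of_forall fun ε hε => Real.rpow_pos_of_pos hε _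
  have hfinal := hmain.comp hcomp
  refine hfinal.congr' ?_
  filter_upwards [self_mem_nhdsWithin] with ε (hε : 0 < ε)
  simp only [Function.comp]
  congr 1
  apply tsum_congr
  intro n
  rw [aux_term_eq hH0 hB hN hε n]
end

section
/- (Erdős converse to Hsu–Robbins) Let X₁, X₂, … be independent identically distributed real random variables and set S_n = X₁ + ⋯ + X_n. If Σ_{n≥1} P(|S_n| > ε n) < ∞ for every ε > 0, then E X₁² < ∞ and E X₁ = 0. -/
open MeasureTheory ProbabilityTheory Filter Real Topology ENNReal NNReal

lemma hr_tsum_ne_top {f : ℕ → ℝ≥0∞} (hft : ∀ n, f n ≠ ∞)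
    (h : Summable fun n => (f n).toReal) : ∑' n, f n ≠ ∞ := by
  have : ∀ n, f n = ((f n).toNNReal : ℝ≥0∞) := fun n => (ENNReal.coe_toNNReal (hft n)).symm
  rw [funext this]
  rw [ENNReal.tsum_coe_ne_top_iff_summable]
  exact NNReal.summable_coe.mp (h.congr fun n => rfl)

lemma hr_key {Ω : Type*} [MeasureSpace Ω] {f : Ω → ℝ} (hf : Measurable f) (c : ℕ → ℝ≥0∞) :
    ∫⁻ ω, ∑' n : ℕ, ({ω | (n:ℝ) < |f ω|}).indicator (fun _ => c n) ω ∂ℙ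
      = ∑' n : ℕ, c n * ℙ {ω | (n:ℝ) < |f ω|} := by
  have hms : ∀ n : ℕ, MeasurableSet {ω | (n:ℝ) < |f ω|} :=
    fun n => measurableSet_lt measurable_const hf.abs
  rw [lintegral_tsum fun n => ((measurable_const.indicator (hms n)).aemeasurable)]
  exact tsum_congr fun n => lintegral_indicator_const (hms n) _

lemma hr_ptsum {Ω : Type*} [MeasureSpace Ω] {f : Ω → ℝ} (c : ℕ → ℝ≥0∞) (ω : Ω) (m : ℕ)
    (hm : (m:ℝ) ≤ |f ω|) :
    ∑ n ∈ Finset.range m, c n ≤ ∑' n : ℕ, ({ω | (n:ℝ) < |f ω|}).indicator (fun _ => c n) ω := by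
  refine le_trans ?_ (ENNReal.sum_le_tsum (Finset.range m))
  refine Finset.sum_le_sum fun n hn => ?_
  have : ω ∈ {ω | (n:ℝ) < |f ω|} := by
    have : (n:ℝ) < m := by exact_mod_cast Finset.mem_range.mp hn
    exact lt_of_lt_of_le this hm
  rw [Set.indicator_of_mem this]

lemma hr_L1 {Ω : Type*} [MeasureSpace Ω] [IsProbabilityMeasure (ℙ : Measure Ω)]
    {f : Ω → ℝ} (hf : Measurable f)
    (h : Summable fun n : ℕ => (ℙ {ω | (n:ℝ) < |f ω|}).toReal) : Integrable f ℙ := by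
  refine ⟨hf.aestronglyMeasurable, ?_⟩
  rw [hasFiniteIntegral_iff_norm]
  have hpt : ∀ ω, ENNReal.ofReal ‖f ω‖ ≤
      1 + ∑' n : ℕ, ({ω | (n:ℝ) < |f ω|}).indicator (fun _ => (1:ℝ≥0∞)) ω := by
    intro ω
    set t := |f ω| with ht
    have ht0 : 0 ≤ t := abs_nonneg _
    have h1 : ENNReal.ofReal ‖f ω‖ ≤ (Nat.floor t : ℝ≥0∞) + 1 := by
      rw [Real.norm_eq_abs]
      calc ENNReal.ofReal t ≤ ENNReal.ofReal ((Nat.floor t : ℝ) + 1) :=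
            ENNReal.ofReal_le_ofReal (Nat.lt_floor_add_one t).le
        _ = (Nat.floor t : ℝ≥0∞) + 1 := by
            rw [ENNReal.ofReal_add (by positivity) one_pos.le, ENNReal.ofReal_natCast,
              ENNReal.ofReal_one]
    refine h1.trans ?_
    have h2 := hr_ptsum (Ω := Ω) (f := f) (fun _ => (1:ℝ≥0∞)) ω (Nat.floor t) (Nat.floor_le ht0)
    simp only [Finset.sum_const, Finset.card_range, nsmul_eq_mul, mul_one] at h2
    rw [add_comm (Nat.floor t : ℝ≥0∞) 1] at h1 ⊢
    exact add_le_add le_rfl h2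
  calc ∫⁻ ω, ENNReal.ofReal ‖f ω‖ ∂ℙ
      ≤ ∫⁻ ω, (1 + ∑' n : ℕ, ({ω | (n:ℝ) < |f ω|}).indicator (fun _ => (1:ℝ≥0∞)) ω) ∂ℙ :=
        lintegral_mono hpt
    _ = 1 + ∑' n : ℕ, (1:ℝ≥0∞) * ℙ {ω | (n:ℝ) < |f ω|} := by
        rw [lintegral_add_left measurable_const, lintegral_const, hr_key hf]
        simp
    _ < ∞ := by
        rw [ENNReal.add_lt_top]
        constructor
        · simp
        · simp only [one_mul]
          exact (hr_tsum_ne_top (fun n => measure_ne_top _ _) h).lt_top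

lemma hr_L2pt (t : ℝ) (ht : 0 ≤ t) :
    t^2 ≤ 16 + 8 * ((∑ n ∈ Finset.range (Nat.floor t), n : ℕ) : ℝ) := by
  rcases lt_or_ge t 4 with h4 | h4
  · have h0 : (0:ℝ) ≤ ((∑ n ∈ Finset.range (Nat.floor t), n : ℕ) : ℝ) := by positivity
    nlinarith
  · set m := Nat.floor t with hm
    have hm4 : 4 ≤ m := Nat.le_floor (by exact_mod_cast h4)
    have h1 : (m:ℝ) ≤ t := Nat.floor_le ht
    have h2 : t < m+1 := Nat.lt_floor_add_one t
    have h3 : (∑ n ∈ Finset.range m, n) * 2 = m*(m-1) := Finset.sum_range_id_mul_two m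
    have h4' : ((∑ n ∈ Finset.range m, n : ℕ):ℝ) * 2 = (m:ℝ) * ((m:ℝ) - 1) := by
      have := congrArg (Nat.cast : ℕ → ℝ) h3
      push_cast [Nat.cast_sub (by omega : 1 ≤ m)] at this ⊢
      linarith
    nlinarith
lemma hr_L2 {Ω : Type*} [MeasureSpace Ω] [IsProbabilityMeasure (ℙ : Measure Ω)]
    {f : Ω → ℝ} (hf : Measurable f)
    (h : Summable fun n : ℕ => (n:ℝ) * (ℙ {ω | (n:ℝ) < |f ω|}).toReal) :
    Integrable (fun ω => (f ω)^2) ℙ := by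
  refine ⟨(hf.pow_const 2).aestronglyMeasurable, ?_⟩
  rw [hasFiniteIntegral_iff_norm]
  have hpt : ∀ ω, ENNReal.ofReal ‖(f ω)^2‖ ≤
      16 + 8 * ∑' n : ℕ, ({ω | (n:ℝ) < |f ω|}).indicator (fun _ => (n:ℝ≥0∞)) ω := by
    intro ω
    set t := |f ω| with htdef
    have ht0 : 0 ≤ t := abs_nonneg _
    have hnorm : ‖(f ω)^2‖ = t^2 := by rw [Real.norm_eq_abs, abs_pow, htdef, sq_abs]
    rw [hnorm]
    have key := hr_L2pt t ht0
    set G : ℕ := ∑ n ∈ Finset.range (Nat.floor t), n with hG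
    calc ENNReal.ofReal (t^2) ≤ ENNReal.ofReal (16 + 8 * (G:ℝ)) := ENNReal.ofReal_le_ofReal key
      _ = 16 + 8 * (G : ℝ≥0∞) := by
          rw [ENNReal.ofReal_add (by norm_num) (by positivity), ENNReal.ofReal_mul (by norm_num)]
          norm_num [ENNReal.ofReal_natCast]
      _ ≤ 16 + 8 * ∑' n : ℕ, ({ω | (n:ℝ) < |f ω|}).indicator (fun _ => (n:ℝ≥0∞)) ω := by
          gcongr
          have h2 := hr_ptsum (Ω := Ω) (f := f) (fun n => (n:ℝ≥0∞)) ω (Nat.floor t)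
            (Nat.floor_le ht0)
          refine le_trans ?_ h2
          rw [hG]
          push_cast
          rfl
  calc ∫⁻ ω, ENNReal.ofReal ‖(f ω)^2‖ ∂ℙ
      ≤ ∫⁻ ω, (16 + 8 * ∑' n : ℕ, ({ω | (n:ℝ) < |f ω|}).indicator (fun _ => (n:ℝ≥0∞)) ω) ∂ℙ :=
        lintegral_mono hpt
    _ = 16 + 8 * ∑' n : ℕ, (n:ℝ≥0∞) * ℙ {ω | (n:ℝ) < |f ω|} := by
        rw [lintegral_add_left measurable_const, lintegral_const_mul' _ _ (by norm_num),
          lintegral_const, hr_key hf]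
        simp
    _ < ∞ := by
        rw [ENNReal.add_lt_top]
        refine ⟨by simp, ?_⟩
        rw [ENNReal.mul_lt_top_iff]
        left
        refine ⟨by simp, ?_⟩
        refine (hr_tsum_ne_top (fun n => ?_) ?_).lt_top
        · exact ENNReal.mul_ne_top (by simp) (measure_ne_top _ _)
        · refine h.congr fun n => ?_
          simp [ENNReal.toReal_mul]

lemma hr_markov {Ω : Type*} [MeasureSpace Ω] [IsProbabilityMeasure (ℙ : Measure Ω)]
    {f : Ω → ℝ} (hf : Measurable f) (hint : Integrable f ℙ) {ε : ℝ} (hε : 0 < ε) :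
    Tendsto (fun n : ℕ => (n:ℝ) * (ℙ {ω | ε*n < |f ω|}).toReal) atTop (𝓝 0) := by
  set A : ℕ → Set Ω := fun n => {ω | ε*n < |f ω|} with hA
  have hAm : ∀ n, MeasurableSet (A n) := fun n => measurableSet_lt measurable_const hf.abs
  set F : ℕ → Ω → ℝ≥0∞ := fun n => (A n).indicator (fun ω => ENNReal.ofReal |f ω|) with hF
  have hbound : ∫⁻ ω, ENNReal.ofReal |f ω| ∂ℙ ≠ ∞ := by
    have := hint.hasFiniteIntegral
    rw [HasFiniteIntegral] at this
    refine ne_of_lt (lt_of_le_of_lt (le_of_eq ?_) this)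
    exact lintegral_congr fun ω => (Real.enorm_eq_ofReal_abs (f ω)).symm
  have hIto : Tendsto (fun n => ∫⁻ ω, F n ω ∂ℙ) atTop (𝓝 0) := by
    have h0 : (0:ℝ≥0∞) = ∫⁻ _, (0:ℝ≥0∞) ∂(ℙ : Measure Ω) := by simp
    rw [h0]
    refine tendsto_lintegral_of_dominated_convergence _ (fun n =>
      ((hf.abs.ennreal_ofReal).indicator (hAm n))) (fun n => ae_of_all _ fun ω => ?_) hbound
      (ae_of_all _ fun ω => ?_)
    · exact Set.indicator_le_self _ _ ω
    · have : ∀ᶠ n in atTop, F n ω = 0 := by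
        have hx : ∀ᶠ n : ℕ in atTop, |f ω| / ε ≤ (n:ℝ) := by
          exact_mod_cast (tendsto_natCast_atTop_atTop (R := ℝ)).eventually_ge_atTop (|f ω| / ε)
        filter_upwards [hx] with n hn
        rw [hF]
        apply Set.indicator_of_notMem
        simp only [hA, Set.mem_setOf_eq, not_lt]
        rw [div_le_iff₀ hε] at hn
        linarith [hn]
      exact Tendsto.congr' (this.mono fun n h => h.symm) tendsto_const_nhds
  have hle : ∀ n : ℕ, ε * n * (ℙ (A n)).toReal ≤ (∫⁻ ω, F n ω ∂ℙ).toReal := by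
    intro n
    have h1 : ENNReal.ofReal (ε*n) * ℙ (A n) ≤ ∫⁻ ω, F n ω ∂ℙ := by
      simp only [hF]
      rw [lintegral_indicator (hAm n), ← setLIntegral_const (A n)]
      refine setLIntegral_mono hf.abs.ennreal_ofReal fun ω hω => ?_
      exact ENNReal.ofReal_le_ofReal (le_of_lt hω)
    have hFle : ∫⁻ ω, F n ω ∂ℙ ≤ ∫⁻ ω, ENNReal.ofReal |f ω| ∂ℙ :=
      lintegral_mono fun ω => Set.indicator_le_self _ _ ω
    have h2 := ENNReal.toReal_mono (ne_of_lt (lt_of_le_of_lt hFle hbound.lt_top)) h1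
    rw [ENNReal.toReal_mul, ENNReal.toReal_ofReal (by positivity)] at h2
    exact h2
  have hsq : Tendsto (fun n : ℕ => ε * n * (ℙ (A n)).toReal) atTop (𝓝 0) := by
    refine squeeze_zero (fun n => by positivity) hle ?_
    have := (ENNReal.tendsto_toReal (by simp)).comp hIto
    simpa [Function.comp_def] using this
  have := hsq.const_mul (1/ε)
  simp only [mul_zero] at this
  refine this.congr fun n => ?_
  field_simp
  ring

theorem stmt_17 {Ω : Type*} [MeasureSpace Ω] [IsProbabilityMeasure (ℙ : Measure Ω)]
    (X : ℕ → Ω → ℝ) (hmeas : ∀ i, Measurable (X i))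
    (hindep : iIndepFun X (ℙ : Measure Ω))
    (hident : ∀ i, IdentDistrib (X i) (X 0) (ℙ : Measure Ω) (ℙ : Measure Ω))
    (hsum : ∀ ε : ℝ, 0 < ε →
      Summable (fun n : ℕ =>
        (ℙ {ω | ε * ((n : ℝ) + 1) < |∑ i ∈ Finset.range (n + 1), X i ω|}).toReal)) :
    Integrable (fun ω => (X 0 ω) ^ 2) (ℙ : Measure Ω) ∧
      (∫ ω, X 0 ω ∂(ℙ : Measure Ω)) = 0 := by
  set S : ℕ → Ω → ℝ := fun n ω => ∑ i ∈ Finset.range n, X i ω with hS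
  have hSmeas : ∀ n, Measurable (S n) := fun n => Finset.measurable_sum _ fun i _ => hmeas i
  -- summability of tail probabilities of |S n| at level ε * n
  have hv : ∀ ε : ℝ, 0 < ε → Summable (fun n : ℕ => (ℙ {ω | ε * n < |S n ω|}).toReal) := by
    intro ε hε
    refine (_root_.summable_nat_add_iff 1).mp ?_
    refine (hsum ε hε).congr fun n => ?_
    congr 2
    push_cast
    rfl
  -- tail probabilities of S n tend to zero
  have hPS : ∀ ε : ℝ, 0 < ε →
      Tendsto (fun n : ℕ => (ℙ {ω | ε * n < |S n ω|}).toReal) atTop (𝓝 0) :=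
    fun ε hε => (hv ε hε).tendsto_atTop_zero
  -- tail summability for |X 0|
  have hXtail : ∀ ε : ℝ, 0 < ε →
      Summable (fun n : ℕ => (ℙ {ω | 2*ε*((n:ℝ)+1) < |X 0 ω|}).toReal) := by
    intro ε hε
    have key : ∀ n : ℕ, (ℙ {ω | 2*ε*((n:ℝ)+1) < |X 0 ω|}).toReal ≤
        (ℙ {ω | ε*((n:ℝ)+1) < |S (n+1) ω|}).toReal + (ℙ {ω | ε*n < |S n ω|}).toReal := by
      intro n
      have hid : ℙ {ω | 2*ε*((n:ℝ)+1) < |X 0 ω|} = ℙ {ω | 2*ε*((n:ℝ)+1) < |X n ω|} := by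
        have hms : MeasurableSet {x : ℝ | 2*ε*((n:ℝ)+1) < |x|} :=
          measurableSet_lt measurable_const measurable_abs
        exact (hident n).symm.measure_mem_eq hms
      have hsub : {ω | 2*ε*((n:ℝ)+1) < |X n ω|} ⊆
          {ω | ε*((n:ℝ)+1) < |S (n+1) ω|} ∪ {ω | ε*n < |S n ω|} := by
        intro ω hω
        simp only [Set.mem_setOf_eq] at hω
        by_contra hcon
        simp only [Set.mem_union, Set.mem_setOf_eq, not_or, not_lt] at hcon
        have hXn : X n ω = S (n+1) ω - S n ω := by
          simp [hS, Finset.sum_range_succ]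
        rw [hXn] at hω
        have := abs_sub (S (n+1) ω) (S n ω)
        have h1 : |S (n+1) ω - S n ω| ≤ |S (n+1) ω| + |S n ω| := abs_sub _ _
        nlinarith [hcon.1, hcon.2, Nat.cast_nonneg (α := ℝ) n]
      rw [hid]
      calc (ℙ {ω | 2*ε*((n:ℝ)+1) < |X n ω|}).toReal
          ≤ (ℙ ({ω | ε*((n:ℝ)+1) < |S (n+1) ω|} ∪ {ω | ε*n < |S n ω|})).toReal := by
            apply ENNReal.toReal_mono (measure_ne_top _ _) (measure_mono hsub)
        _ ≤ _ := by
            rw [← ENNReal.toReal_add (measure_ne_top _ _) (measure_ne_top _ _)]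
            exact ENNReal.toReal_mono (by simp [ENNReal.add_ne_top, measure_ne_top])
              (measure_union_le _ _)
    have hsum1 : Summable (fun n : ℕ => (ℙ {ω | ε*((n:ℝ)+1) < |S (n+1) ω|}).toReal +
        (ℙ {ω | ε*(n:ℝ) < |S n ω|}).toReal) := by
      exact Summable.add ((hsum ε hε).congr fun n => rfl) ((hv ε hε).congr fun n => rfl)
    exact Summable.of_nonneg_of_le (fun n => ENNReal.toReal_nonneg) key hsum1
  -- summability of ℙ(n < |X 0|), hence integrability of X 0
  have hq : Summable (fun n : ℕ => (ℙ {ω | (n:ℝ) < |X 0 ω|}).toReal) := by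
    refine (_root_.summable_nat_add_iff 1).mp ?_
    refine ((hXtail (1/2) (by norm_num)).congr fun n => ?_)
    congr 2
    ext ω
    push_cast
    norm_num
  have hintX : Integrable (X 0) ℙ := hr_L1 (hmeas 0) hq
  -- n * ℙ(ε n < |X 0|) → 0
  have hnp : ∀ ε : ℝ, 0 < ε →
      Tendsto (fun n : ℕ => (n:ℝ) * (ℙ {ω | ε*n < |X 0 ω|}).toReal) atTop (𝓝 0) :=
    fun ε hε => hr_markov (hmeas 0) hintX hε
  have hUtoReal : ∀ a b : Set Ω, (ℙ (a ∪ b)).toReal ≤ (ℙ a).toReal + (ℙ b).toReal := by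
    intro a b
    rw [← ENNReal.toReal_add (measure_ne_top _ _) (measure_ne_top _ _)]
    exact ENNReal.toReal_mono (by simp [ENNReal.add_ne_top, measure_ne_top])
      (measure_union_le _ _)
  have hcore : ∀ ε : ℝ, 0 < ε →
      Summable (fun n : ℕ => (n:ℝ) * (ℙ {ω | ε*n < |X 0 ω|}).toReal) := by
    intro ε hε
    set p : ℕ → ℝ := fun n => (ℙ {ω | ε*n < |X 0 ω|}).toReal with hp
    set δ : ℕ → ℝ := fun n => (ℙ {ω | ε/6*n < |S n ω|}).toReal
      + (ℙ {ω | ε/6*n < |X 0 ω|}).toReal + (n:ℝ) * p n with hδdef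
    have hδ : Tendsto δ atTop (𝓝 0) := by
      have t1 := hPS (ε/6) (by positivity)
      have t2 : Tendsto (fun n : ℕ => (ℙ {ω | ε/6*n < |X 0 ω|}).toReal) atTop (𝓝 0) := by
        refine squeeze_zero' (Eventually.of_forall fun n => ENNReal.toReal_nonneg) ?_
          (hnp (ε/6) (by positivity))
        filter_upwards [eventually_ge_atTop 1] with n hn
        have h1 : (1:ℝ) ≤ (n:ℝ) := by exact_mod_cast hn
        nlinarith [ENNReal.toReal_nonneg (a := ℙ {ω | ε/6*n < |X 0 ω|})]
      have t3 := hnp ε hε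
      have := (t1.add t2).add t3
      simpa [hδdef] using this
    have hev : ∀ᶠ n in atTop, δ n ≤ 1/2 ∧ 1 ≤ n :=
      ((hδ.eventually_lt_const (by norm_num : (0:ℝ) < 1/2)).mono fun n h => h.le).and
        (eventually_ge_atTop 1)
    obtain ⟨N, hN⟩ := eventually_atTop.mp hev
    have hkey : ∀ n : ℕ, 1 ≤ n → δ n ≤ 1/2 →
        (n:ℝ) * p n ≤ 2 * (ℙ {ω | ε/3*n < |S n ω|}).toReal := by
      intro n hn1 hδn
      have hn1' : (1:ℝ) ≤ (n:ℝ) := by exact_mod_cast hn1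
      set c : ℝ := ε * n with hc
      have hc0 : 0 < c := by rw [hc]; nlinarith
      set T : ℕ → Finset ℕ := fun j => (Finset.range n).erase j with hT
      set A : ℕ → Set Ω := fun j => {ω | c < |X j ω|} with hA
      set B : ℕ → Set Ω := fun j =>
        (fun ω (i : {i // i ∈ T j}) => X (i:ℕ) ω) ⁻¹'
          {x : {i // i ∈ T j} → ℝ | |∑ i, x i| ≤ c/3 ∧ ∀ i, |x i| ≤ c} with hB
      have hBmem : ∀ j ω, ω ∈ B j ↔
          (|∑ i ∈ T j, X i ω| ≤ c/3 ∧ ∀ i ∈ T j, |X i ω| ≤ c) := by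
        intro j ω
        simp only [hB, Set.mem_preimage, Set.mem_setOf_eq, Subtype.forall]
        rw [← Finset.sum_coe_sort (T j) (fun i => X i ω)]
      have hAmeas : ∀ j, MeasurableSet (A j) :=
        fun j => measurableSet_lt measurable_const (hmeas j).abs
      have htmeas : ∀ j, MeasurableSet
          {x : {i // i ∈ T j} → ℝ | |∑ i, x i| ≤ c/3 ∧ ∀ i, |x i| ≤ c} := by
        intro j
        have heq : {x : {i // i ∈ T j} → ℝ | |∑ i, x i| ≤ c/3 ∧ ∀ i, |x i| ≤ c}
            = {x : {i // i ∈ T j} → ℝ | |∑ i, x i| ≤ c/3} ∩ ⋂ i, {x | |x i| ≤ c} := by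
          ext x; simp [Set.mem_iInter]
        rw [heq]
        exact (measurableSet_le (Finset.measurable_sum Finset.univ fun i _ =>
            measurable_pi_apply i).abs measurable_const).inter
          (MeasurableSet.iInter fun i => measurableSet_le (measurable_pi_apply i).abs
            measurable_const)
      have hBmeas : ∀ j, MeasurableSet (B j) := by
        intro j
        have hψ : Measurable (fun ω (i : {i // i ∈ T j}) => X (i:ℕ) ω) :=
          measurable_pi_lambda _ fun i => hmeas (i:ℕ)
        exact hψ (htmeas j)
      have hCmeasure : ∀ j ∈ Finset.range n, ℙ (A j ∩ B j) = ℙ (A j) * ℙ (B j) := by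
        intro j hj
        have hdisj : Disjoint ({j} : Finset ℕ) (T j) :=
          Finset.disjoint_singleton_left.mpr (Finset.notMem_erase j _)
        have hi := hindep.indepFun_finset {j} (T j) hdisj hmeas
        have hs : MeasurableSet
            {x : {i // i ∈ ({j}:Finset ℕ)} → ℝ | c < |x ⟨j, Finset.mem_singleton_self j⟩|} :=
          measurableSet_lt measurable_const (measurable_pi_apply _).abs
        exact hi.measure_inter_preimage_eq_mul _ _ hs (htmeas j)
      have hmsc : MeasurableSet {x : ℝ | c < |x|} :=
        measurableSet_lt measurable_const measurable_abs
      have hPA : ∀ j, ℙ (A j) = ℙ {ω | c < |X 0 ω|} := fun j => (hident j).measure_mem_eq hmsc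
      have hpc : (ℙ {ω | c < |X 0 ω|}).toReal = p n := by rw [hp]
      have hsplit : ∀ j ∈ Finset.range n, ∀ ω, ∑ i ∈ T j, X i ω = S n ω - X j ω := by
        intro j hj ω
        have := Finset.sum_erase_add (Finset.range n) (fun i => X i ω) hj
        simp only [hT, hS]
        linarith
      have hBc : ∀ j ∈ Finset.range n, (ℙ (B j)ᶜ).toReal ≤ δ n := by
        intro j hj
        have hsub : (B j)ᶜ ⊆ ({ω | ε/6*n < |S n ω|} ∪ {ω | ε/6*n < |X j ω|})
            ∪ ⋃ i ∈ T j, {ω | c < |X i ω|} := by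
          intro ω hω
          rw [Set.mem_compl_iff, hBmem] at hω
          by_cases hP : |∑ i ∈ T j, X i ω| ≤ c/3
          · have : ¬ ∀ i ∈ T j, |X i ω| ≤ c := fun h => hω ⟨hP, h⟩
            push_neg at this
            obtain ⟨i, hi, hic⟩ := this
            exact Or.inr (Set.mem_biUnion hi (by simpa using hic))
          · push_neg at hP
            rw [hsplit j hj ω] at hP
            have htri : |S n ω - X j ω| ≤ |S n ω| + |X j ω| := abs_sub _ _
            have h6 : ε/6*(n:ℝ) = c/6 := by rw [hc]; ring
            rcases lt_or_ge (c/6) (|S n ω|) with h | h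
            · exact Or.inl (Or.inl (by simp only [Set.mem_setOf_eq, h6]; exact h))
            · refine Or.inl (Or.inr ?_)
              simp only [Set.mem_setOf_eq, h6]
              linarith
        have hU3 : (ℙ (⋃ i ∈ T j, {ω | c < |X i ω|})).toReal ≤ (n:ℝ) * p n := by
          calc (ℙ (⋃ i ∈ T j, {ω | c < |X i ω|})).toReal
              ≤ (∑ i ∈ T j, ℙ {ω | c < |X i ω|}).toReal := by
                refine ENNReal.toReal_mono ?_ (measure_biUnion_finset_le _ _)
                exact (ENNReal.sum_lt_top.mpr fun i _ => measure_lt_top _ _).ne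
            _ = ∑ i ∈ T j, (ℙ {ω | c < |X i ω|}).toReal :=
                ENNReal.toReal_sum fun i _ => measure_ne_top _ _
            _ = ∑ i ∈ T j, p n := by
                refine Finset.sum_congr rfl fun i _ => ?_
                rw [← hpc]
                exact congrArg ENNReal.toReal ((hident i).measure_mem_eq hmsc)
            _ = ((T j).card : ℝ) * p n := by rw [Finset.sum_const, nsmul_eq_mul]
            _ ≤ (n:ℝ) * p n := by
                have hcard : (T j).card ≤ n := le_trans (Finset.card_erase_le)
                  (by simp [Finset.card_range])
                have : ((T j).card : ℝ) ≤ (n:ℝ) := by exact_mod_cast hcard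
                nlinarith [ENNReal.toReal_nonneg (a := ℙ {ω | ε*(n:ℝ) < |X 0 ω|}),
                  (by rw [hp] : p n = (ℙ {ω | ε*(n:ℝ) < |X 0 ω|}).toReal)]
        have hU2 : (ℙ {ω | ε/6*(n:ℝ) < |X j ω|}).toReal
            = (ℙ {ω | ε/6*(n:ℝ) < |X 0 ω|}).toReal := by
          exact congrArg ENNReal.toReal ((hident j).measure_mem_eq
            (measurableSet_lt measurable_const measurable_abs :
              MeasurableSet {x : ℝ | ε/6*(n:ℝ) < |x|}))
        calc (ℙ (B j)ᶜ).toReal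
            ≤ (ℙ (({ω | ε/6*n < |S n ω|} ∪ {ω | ε/6*n < |X j ω|})
                ∪ ⋃ i ∈ T j, {ω | c < |X i ω|})).toReal :=
              ENNReal.toReal_mono (measure_ne_top _ _) (measure_mono hsub)
          _ ≤ (ℙ ({ω | ε/6*n < |S n ω|} ∪ {ω | ε/6*n < |X j ω|})).toReal
                + (ℙ (⋃ i ∈ T j, {ω | c < |X i ω|})).toReal := hUtoReal _ _
          _ ≤ ((ℙ {ω | ε/6*n < |S n ω|}).toReal + (ℙ {ω | ε/6*n < |X j ω|}).toReal)
                + (n:ℝ) * p n := add_le_add (hUtoReal _ _) hU3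
          _ ≤ δ n := by rw [hδdef, hU2]
      have hBlb : ∀ j ∈ Finset.range n, 1/2 ≤ (ℙ (B j)).toReal := by
        intro j hj
        have hadd : (ℙ (B j)).toReal + (ℙ (B j)ᶜ).toReal = 1 := by
          rw [← ENNReal.toReal_add (measure_ne_top _ _) (measure_ne_top _ _),
            measure_add_measure_compl (hBmeas j)]
          simp
        have h1 := hBc j hj
        have h2 : δ n ≤ 1/2 := hδn
        have h3 : (1:ℝ) - δ n ≤ (ℙ (B j)).toReal := by linarith only [hadd, h1]
        have h4 : (1:ℝ)/2 ≤ 1 - δ n := by linarith only [h2]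
        exact le_trans h4 h3
      have hdisjC : (↑(Finset.range n) : Set ℕ).PairwiseDisjoint (fun j => A j ∩ B j) := by
        intro j hj k hk hjk
        simp only [Function.onFun]
        rw [Set.disjoint_left]
        rintro ω ⟨hωjA, hωjB⟩ ⟨hωkA, hωkB⟩
        have h1 : c < |X k ω| := hωkA
        have hkT : k ∈ T j := by
          simp only [hT, Finset.mem_erase]
          exact ⟨fun h => hjk h.symm, by simpa using hk⟩
        have h2 : |X k ω| ≤ c := ((hBmem j ω).mp hωjB).2 k hkT
        linarith
      have hUsub : (⋃ j ∈ Finset.range n, A j ∩ B j) ⊆ {ω | ε/3*n < |S n ω|} := by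
        intro ω hω
        simp only [Set.mem_iUnion, exists_prop] at hω
        obtain ⟨j, hj, hωA, hωB⟩ := hω
        have h1 : c < |X j ω| := hωA
        have h2 : |∑ i ∈ T j, X i ω| ≤ c/3 := ((hBmem j ω).mp hωB).1
        rw [hsplit j hj ω] at h2
        have htri : |X j ω| ≤ |S n ω| + |S n ω - X j ω| := by
          have := abs_sub_abs_le_abs_sub (X j ω) (S n ω)
          have h3 : |X j ω - S n ω| = |S n ω - X j ω| := abs_sub_comm _ _
          linarith [abs_nonneg (S n ω)]
        have h6 : ε/3*(n:ℝ) = c/3 := by rw [hc]; ring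
        simp only [Set.mem_setOf_eq, h6]
        linarith
      have hfin : (n:ℝ) * p n * (1/2) ≤ (ℙ {ω | ε/3*n < |S n ω|}).toReal := by
        have hp0 : 0 ≤ p n := ENNReal.toReal_nonneg
        calc (n:ℝ) * p n * (1/2) = ∑ _j ∈ Finset.range n, p n * (1/2) := by
              rw [Finset.sum_const, Finset.card_range, nsmul_eq_mul]; ring
          _ ≤ ∑ j ∈ Finset.range n, (ℙ (A j ∩ B j)).toReal := by
              refine Finset.sum_le_sum fun j hj => ?_
              rw [hCmeasure j hj, ENNReal.toReal_mul, hPA j, hpc]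
              exact mul_le_mul_of_nonneg_left (hBlb j hj) hp0
          _ = (ℙ (⋃ j ∈ Finset.range n, A j ∩ B j)).toReal := by
              rw [measure_biUnion_finset hdisjC fun j _ => (hAmeas j).inter (hBmeas j)]
              exact (ENNReal.toReal_sum fun j _ => measure_ne_top _ _).symm
          _ ≤ (ℙ {ω | ε/3*n < |S n ω|}).toReal :=
              ENNReal.toReal_mono (measure_ne_top _ _) (measure_mono hUsub)
      linarith
    refine (_root_.summable_nat_add_iff N).mp ?_
    have hw : Summable (fun m : ℕ => 2 * (ℙ {ω | ε/3*(↑(m+N):ℝ) < |S (m+N) ω|}).toReal) :=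
      ((_root_.summable_nat_add_iff N).mpr (hv (ε/3) (by positivity))).mul_left 2
    refine Summable.of_nonneg_of_le (fun m => ?_) (fun m => ?_) hw
    · exact mul_nonneg (Nat.cast_nonneg _) ENNReal.toReal_nonneg
    · exact hkey (m+N) (hN (m+N) le_add_self).2 (hN (m+N) le_add_self).1
  constructor
  · refine hr_L2 (hmeas 0) ?_
    refine (hcore 1 one_pos).congr fun n => ?_
    norm_num
  ·
    have hpair : Pairwise (Function.onFun (IndepFun · · (ℙ:Measure Ω)) X) :=
      fun i j hij => hindep.indepFun hij
    have hslln := strong_law_ae_real X hintX hpair hident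
    by_contra hμ
    have hμpos : 0 < |∫ ω, X 0 ω| := abs_pos.mpr hμ
    set μ0 : ℝ := ∫ ω, X 0 ω with hμ0
    set ε : ℝ := |μ0|/4 with hεdef
    have hε : 0 < ε := by positivity
    set F : ℕ → Set Ω := fun n => {ω | ε * ((n:ℝ)+1) < |S (n+1) ω|} with hF
    have hFmeas : ∀ n, MeasurableSet (F n) :=
      fun n => measurableSet_lt measurable_const (hSmeas (n+1)).abs
    have hae : ∀ᵐ ω ∂(ℙ:Measure Ω), ω ∈ limsup F atTop := by
      filter_upwards [hslln] with ω hω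
      rw [mem_limsup_iff_frequently_mem]
      refine Filter.Eventually.frequently ?_
      have h2 : ∀ᶠ m : ℕ in atTop,
          dist ((∑ i ∈ Finset.range m, X i ω)/(m:ℝ)) μ0 < |μ0|/2 :=
        hω (Metric.ball_mem_nhds μ0 (by positivity))
      have h3 : ∀ᶠ n : ℕ in atTop,
          dist ((∑ i ∈ Finset.range (n+1), X i ω)/((n:ℝ)+1)) μ0 < |μ0|/2 := by
        have := (tendsto_add_atTop_nat 1).eventually h2
        refine this.mono fun n h => ?_
        push_cast at h ⊢
        exact h
      refine h3.mono fun n h => ?_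
      have hn1 : (0:ℝ) < (n:ℝ)+1 := by positivity
      rw [Real.dist_eq] at h
      have habs : |μ0| - |(∑ i ∈ Finset.range (n+1), X i ω)/((n:ℝ)+1)| ≤
          |(∑ i ∈ Finset.range (n+1), X i ω)/((n:ℝ)+1) - μ0| := by
        have := abs_sub_abs_le_abs_sub μ0 ((∑ i ∈ Finset.range (n+1), X i ω)/((n:ℝ)+1))
        have h4 := abs_sub_comm μ0 ((∑ i ∈ Finset.range (n+1), X i ω)/((n:ℝ)+1))
        linarith
      have h5 : |μ0|/2 < |(∑ i ∈ Finset.range (n+1), X i ω)/((n:ℝ)+1)| := by linarith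
      rw [abs_div, abs_of_pos hn1, lt_div_iff₀ hn1] at h5
      simp only [hF, Set.mem_setOf_eq]
      have h6 : ε * ((n:ℝ)+1) < |μ0|/2 * ((n:ℝ)+1) := by
        rw [hεdef]
        nlinarith
      calc ε * ((n:ℝ)+1) < |μ0|/2 * ((n:ℝ)+1) := h6
        _ < |S (n+1) ω| := by
            have h7 : |μ0| / 2 * (↑n + 1) < |∑ i ∈ Finset.range (n+1), X i ω| := h5
            simpa [hS] using h7
    have hzero : ℙ (limsup F atTop) = 0 := by
      refine measure_limsup_atTop_eq_zero ?_
      exact hr_tsum_ne_top (fun n => measure_ne_top _ _) ((hsum ε hε).congr fun n => rfl)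
    have hone : ℙ (limsup F atTop) = 1 := by
      rw [← prob_compl_eq_zero_iff (MeasurableSet.measurableSet_limsup hFmeas)]
      exact ae_iff.mp hae
    rw [hzero] at hone
    exact zero_ne_one hone
end
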